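/- arXiv:math/0311185 — 4 statements merged into one kernel-verified Lean document; each statement's English description precedes it below -/
import Mathlib

section
/- Homologous based matrices over an integral domain R are cobordant. -/
/-!  Based skew-symmetric matrices over an abelian group `H`, after Turaev.
A based matrix is a triple `(G, s, b)` where `G` is a finite set, `s ∈ G`,
and `b : G × G → H` is skew-symmetric.  We realize the finite set `G` as a
finite set of natural numbers; the values of `b` outside `G` are irrelevant
(isomorphism, homology, fillings etc. only refer to values on `G`). -/

/-- The data of a based matrix over `H`: a finite carrier `G ⊆ ℕ`, a base
point `s` and a pairing `b`. -/
structure PreBM (H : Type*) where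
  /-- the underlying finite set -/
  G : Finset ℕ
  /-- the base point `s` -/
  s : ℕ
  /-- the pairing -/
  b : ℕ → ℕ → H

variable {H : Type*} [AddCommGroup H]

/-- `(G, s, b)` is a based matrix: `s ∈ G` and `b` is skew-symmetric on `G`
(with vanishing diagonal). -/
def IsBM (T : PreBM H) : Prop :=
  T.s ∈ T.G ∧ (∀ g ∈ T.G, ∀ h ∈ T.G, T.b g h = -T.b h g) ∧
    ∀ g ∈ T.G, T.b g g = 0

/-- Isomorphism of based matrices: a bijection of the carriers preserving the
base point and the pairing. -/
def BMIso (T T' : PreBM H) : Prop :=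
  ∃ f : ℕ → ℕ, Set.BijOn f (T.G : Set ℕ) (T'.G : Set ℕ) ∧ f T.s = T'.s ∧
    ∀ g ∈ T.G, ∀ h ∈ T.G, T'.b (f g) (f h) = T.b g h

/-- `g` is an annihilating element of `T`. -/
def Annihilating (T : PreBM H) (g : ℕ) : Prop :=
  g ∈ T.G ∧ g ≠ T.s ∧ ∀ h ∈ T.G, T.b g h = 0

/-- `g` is a core element of `T`. -/
def CoreElt (T : PreBM H) (g : ℕ) : Prop :=
  g ∈ T.G ∧ g ≠ T.s ∧ ∀ h ∈ T.G, T.b g h = T.b T.s h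

/-- `g₁, g₂` is a complementary pair of elements of `T`. -/
def ComplPair (T : PreBM H) (g₁ g₂ : ℕ) : Prop :=
  g₁ ∈ T.G ∧ g₂ ∈ T.G ∧ g₁ ≠ T.s ∧ g₂ ≠ T.s ∧ g₁ ≠ g₂ ∧
    ∀ h ∈ T.G, T.b g₁ h + T.b g₂ h = T.b T.s h

/-- A based matrix is primitive if it has no annihilating elements, no core
elements and no complementary pairs. -/
def Primitive (T : PreBM H) : Prop :=
  (∀ g, ¬Annihilating T g) ∧ (∀ g, ¬CoreElt T g) ∧ ∀ g₁ g₂, ¬ComplPair T g₁ g₂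

/-- Elementary extension `M₁`: adjoin one annihilating element. -/
def IsExt1 (T T' : PreBM H) : Prop :=
  T'.s = T.s ∧ ∃ g, g ∉ T.G ∧ T'.G = insert g T.G ∧
    (∀ x ∈ T.G, ∀ y ∈ T.G, T'.b x y = T.b x y) ∧
    ∀ h ∈ T'.G, T'.b g h = 0

/-- Elementary extension `M₂`: adjoin one core element. -/
def IsExt2 (T T' : PreBM H) : Prop :=
  T'.s = T.s ∧ ∃ g, g ∉ T.G ∧ T'.G = insert g T.G ∧
    (∀ x ∈ T.G, ∀ y ∈ T.G, T'.b x y = T.b x y) ∧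
    ∀ h ∈ T'.G, T'.b g h = T'.b T'.s h

/-- Elementary extension `M₃`: adjoin a pair of complementary elements. -/
def IsExt3 (T T' : PreBM H) : Prop :=
  T'.s = T.s ∧ ∃ g₁ g₂, g₁ ∉ T.G ∧ g₂ ∉ T.G ∧ g₁ ≠ g₂ ∧
    T'.G = insert g₁ (insert g₂ T.G) ∧
    (∀ x ∈ T.G, ∀ y ∈ T.G, T'.b x y = T.b x y) ∧
    ∀ h ∈ T'.G, T'.b g₁ h + T'.b g₂ h = T'.b T'.s h

/-- One elementary extension between based matrices. -/
def StepExt (T T' : PreBM H) : Prop :=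
  IsBM T ∧ IsBM T' ∧ (IsExt1 T T' ∨ IsExt2 T T' ∨ IsExt3 T T')

/-- Two based matrices are homologous if they are related by a finite
sequence of elementary extensions, inverse extensions and isomorphisms. -/
def Homologous : PreBM H → PreBM H → Prop :=
  Relation.EqvGen fun T T' => StepExt T T' ∨ (IsBM T ∧ IsBM T' ∧ BMIso T T')
variable {R : Type*} [CommRing R] [IsDomain R]

/-- The union `G = ⋃_t G_t` of the carriers of a tuple of based matrices. -/
def allG (L : List (PreBM R)) : Finset ℕ := L.foldr (fun T s => T.G ∪ s) ∅

/-- The vector `s₁ + s₂ + ⋯ + s_r ∈ Λ = RG`. -/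
noncomputable def sVec (L : List (PreBM R)) : ℕ →₀ R :=
  (L.map fun T => Finsupp.single T.s (1 : R)).sum

/-- The submodule `Λ_s ⊆ Λ` generated by the base points `s₁, …, s_r`. -/
noncomputable def sSpan (L : List (PreBM R)) : Submodule R (ℕ →₀ R) :=
  Submodule.span R {v : ℕ →₀ R | ∃ T ∈ L, v = Finsupp.single T.s (1 : R)}

/-- The skew-symmetric form `b = ⊕_t b_t` on `Λ = RG`, evaluated on a pair of
vectors: `b(g,h) = b_t(g,h)` for `g, h ∈ G_t` and `b(G_t, G_{t'}) = 0` for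
`t ≠ t'` (the carriers being disjoint, at most one summand below is
non-zero). -/
noncomputable def blockB (L : List (PreBM R)) (v w : ℕ →₀ R) : R :=
  ∑ g ∈ v.support, ∑ h ∈ w.support,
    v g * w h * (L.map fun T => if g ∈ T.G ∧ h ∈ T.G then T.b g h else 0).sum

/-- A vector of `Λ` is short if it lies in `Λ_s`, in `g + Λ_s` for some
`g ∈ G − {s₁, …, s_r}`, or in `g + h + Λ_s` for distinct
`g, h ∈ G − {s₁, …, s_r}`. -/
def ShortVec (L : List (PreBM R)) (x : ℕ →₀ R) : Prop :=
  x ∈ sSpan L ∨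
  (∃ g ∈ allG L, (∀ T ∈ L, g ≠ T.s) ∧ x - Finsupp.single g 1 ∈ sSpan L) ∨
  (∃ g ∈ allG L, ∃ h ∈ allG L, g ≠ h ∧ (∀ T ∈ L, g ≠ T.s ∧ h ≠ T.s) ∧
    x - Finsupp.single g 1 - Finsupp.single h 1 ∈ sSpan L)

/-- A filling of the tuple `T₁, …, T_r`: a finite family of short vectors of
`Λ` whose sum is `∑_{g ∈ G} g` modulo `Λ_s`, one of which equals
`s₁ + ⋯ + s_r`. -/
def IsFilling (L : List (PreBM R)) {k : ℕ} (lam : Fin k → (ℕ →₀ R)) : Prop :=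
  (∀ i, ShortVec L (lam i)) ∧ (∃ i, lam i = sVec L) ∧
    (∑ i, lam i) - (∑ g ∈ allG L, Finsupp.single g (1 : R)) ∈ sSpan L

/-- The genus `σ(T₁, …, T_r)` of a tuple of based matrices: the minimum over
all fillings of half the rank of the matrix `(b(λ_i, λ_j))_{i,j}`. -/
noncomputable def tupleGenus (L : List (PreBM R)) : ℕ :=
  sInf {n : ℕ | ∃ (k : ℕ) (lam : Fin k → (ℕ →₀ R)), IsFilling L lam ∧
    n = (Matrix.of fun i j : Fin k => blockB L (lam i) (lam j)).rank / 2}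

/-- `-T = (G, s, -b)`. -/
def negBM (T : PreBM R) : PreBM R := ⟨T.G, T.s, fun g h => -T.b g h⟩

/-- The carriers of the members of the tuple are pairwise disjoint. -/
def DisjointCarriers (L : List (PreBM R)) : Prop :=
  L.Pairwise fun T T' => Disjoint T.G T'.G
/-- Two based matrices `T₁, T₂` over an integral domain are cobordant if
`σ(T₁, −T₂) = 0`.  (As in the paper, `T₁` and `T₂` are first replaced by
isomorphic based matrices with disjoint carriers.) -/
def Cobordant {R : Type*} [CommRing R] [IsDomain R] (T₁ T₂ : PreBM R) : Prop :=
  ∃ T₁' T₂' : PreBM R, IsBM T₁' ∧ IsBM T₂' ∧ BMIso T₁ T₁' ∧ BMIso T₂ T₂' ∧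
    Disjoint T₁'.G T₂'.G ∧ tupleGenus [T₁', negBM T₂'] = 0

/-! ### Auxiliary development for the proof -/

namespace TuraevAux

open Finsupp Finset

set_option linter.unusedSectionVars false

variable {R : Type*} [CommRing R] [IsDomain R]

/-- The coefficient function of the block form. -/
noncomputable def Fc (L : List (PreBM R)) (g h : ℕ) : R :=
  (L.map fun T => if g ∈ T.G ∧ h ∈ T.G then T.b g h else 0).sum

lemma blockB_def (L : List (PreBM R)) (v w : ℕ →₀ R) :
    blockB L v w = ∑ g ∈ v.support, ∑ h ∈ w.support, v g * w h * Fc L g h := rfl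

lemma blockB_eq_over (L : List (PreBM R)) {v w : ℕ →₀ R} {S S' : Finset ℕ}
    (hv : v.support ⊆ S) (hw : w.support ⊆ S') :
    blockB L v w = ∑ g ∈ S, ∑ h ∈ S', v g * w h * Fc L g h := by
  have inner : ∀ g : ℕ, ∑ h ∈ w.support, v g * w h * Fc L g h
      = ∑ h ∈ S', v g * w h * Fc L g h := fun g =>
    Finset.sum_subset hw (by
      intro h _ hh
      simp [Finsupp.notMem_support_iff.mp hh])
  rw [blockB_def]
  simp_rw [inner]
  refine Finset.sum_subset hv ?_
  intro g _ hg
  apply Finset.sum_eq_zero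
  intro h _
  simp [Finsupp.notMem_support_iff.mp hg]

lemma blockB_add_left (L : List (PreBM R)) (v₁ v₂ w : ℕ →₀ R) :
    blockB L (v₁ + v₂) w = blockB L v₁ w + blockB L v₂ w := by
  classical
  rw [blockB_eq_over L (S := v₁.support ∪ v₂.support) (S' := w.support)
      Finsupp.support_add subset_rfl,
    blockB_eq_over L (S := v₁.support ∪ v₂.support) (S' := w.support)
      Finset.subset_union_left subset_rfl,
    blockB_eq_over L (S := v₁.support ∪ v₂.support) (S' := w.support)
      Finset.subset_union_right subset_rfl, ← Finset.sum_add_distrib]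
  refine Finset.sum_congr rfl fun g _ => ?_
  rw [← Finset.sum_add_distrib]
  refine Finset.sum_congr rfl fun h _ => ?_
  simp only [Finsupp.add_apply]
  ring

lemma blockB_add_right (L : List (PreBM R)) (v w₁ w₂ : ℕ →₀ R) :
    blockB L v (w₁ + w₂) = blockB L v w₁ + blockB L v w₂ := by
  classical
  rw [blockB_eq_over L (S := v.support) (S' := w₁.support ∪ w₂.support)
      subset_rfl Finsupp.support_add,
    blockB_eq_over L (S := v.support) (S' := w₁.support ∪ w₂.support)
      subset_rfl Finset.subset_union_left,
    blockB_eq_over L (S := v.support) (S' := w₁.support ∪ w₂.support)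
      subset_rfl Finset.subset_union_right, ← Finset.sum_add_distrib]
  refine Finset.sum_congr rfl fun g _ => ?_
  rw [← Finset.sum_add_distrib]
  refine Finset.sum_congr rfl fun h _ => ?_
  simp only [Finsupp.add_apply]
  ring

lemma blockB_smul_left (L : List (PreBM R)) (r : R) (v w : ℕ →₀ R) :
    blockB L (r • v) w = r * blockB L v w := by
  rw [blockB_eq_over L (S := v.support) (S' := w.support)
      Finsupp.support_smul subset_rfl,
    blockB_def, Finset.mul_sum]
  refine Finset.sum_congr rfl fun g _ => ?_
  rw [Finset.mul_sum]
  refine Finset.sum_congr rfl fun h _ => ?_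
  simp only [Finsupp.smul_apply, smul_eq_mul]
  ring

lemma blockB_smul_right (L : List (PreBM R)) (r : R) (v w : ℕ →₀ R) :
    blockB L v (r • w) = r * blockB L v w := by
  rw [blockB_eq_over L (S := v.support) (S' := w.support)
      subset_rfl Finsupp.support_smul,
    blockB_def, Finset.mul_sum]
  refine Finset.sum_congr rfl fun g _ => ?_
  rw [Finset.mul_sum]
  refine Finset.sum_congr rfl fun h _ => ?_
  simp only [Finsupp.smul_apply, smul_eq_mul]
  ring

lemma blockB_neg_left (L : List (PreBM R)) (v w : ℕ →₀ R) :
    blockB L (-v) w = -blockB L v w := by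
  have : (-v) = (-1 : R) • v := by simp
  rw [this, blockB_smul_left]; ring

lemma blockB_neg_right (L : List (PreBM R)) (v w : ℕ →₀ R) :
    blockB L v (-w) = -blockB L v w := by
  have : (-w) = (-1 : R) • w := by simp
  rw [this, blockB_smul_right]; ring

lemma blockB_sub_left (L : List (PreBM R)) (v₁ v₂ w : ℕ →₀ R) :
    blockB L (v₁ - v₂) w = blockB L v₁ w - blockB L v₂ w := by
  rw [sub_eq_add_neg, blockB_add_left, blockB_neg_left]; ring

lemma blockB_sub_right (L : List (PreBM R)) (v w₁ w₂ : ℕ →₀ R) :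
    blockB L v (w₁ - w₂) = blockB L v w₁ - blockB L v w₂ := by
  rw [sub_eq_add_neg, blockB_add_right, blockB_neg_right]; ring

lemma blockB_single_single (L : List (PreBM R)) (g h : ℕ) :
    blockB L (Finsupp.single g (1 : R)) (Finsupp.single h (1 : R)) = Fc L g h := by
  rw [blockB_eq_over L (S := {g}) (S' := {h}) Finsupp.support_single_subset
      Finsupp.support_single_subset]
  simp

lemma Fc_diag (L : List (PreBM R)) (hL : ∀ T ∈ L, IsBM T) (g : ℕ) : Fc L g g = 0 := by
  induction L with
  | nil => simp [Fc]
  | cons T L ih =>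
    have hT := hL T (List.mem_cons_self)
    simp only [Fc, List.map_cons, List.sum_cons] at *
    rw [ih (fun T' hT' => hL T' (List.mem_cons_of_mem _ hT'))]
    by_cases hg : g ∈ T.G
    · simp [hg, hT.2.2 g hg]
    · simp [hg]

lemma Fc_skew (L : List (PreBM R)) (hL : ∀ T ∈ L, IsBM T) (g h : ℕ) :
    Fc L g h = -Fc L h g := by
  induction L with
  | nil => simp [Fc]
  | cons T L ih =>
    have hT := hL T (List.mem_cons_self)
    simp only [Fc, List.map_cons, List.sum_cons] at *
    rw [ih (fun T' hT' => hL T' (List.mem_cons_of_mem _ hT'))]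
    by_cases hg : g ∈ T.G <;> by_cases hh : h ∈ T.G
    · simp only [hg, hh, and_self, if_true, hT.2.1 g hg h hh]; ring
    · simp [hg, hh]
    · simp [hg, hh]
    · simp [hg, hh]

lemma blockB_self (L : List (PreBM R)) (hL : ∀ T ∈ L, IsBM T) (v : ℕ →₀ R) :
    blockB L v v = 0 := by
  classical
  rw [blockB_def, ← Finset.sum_product']
  refine Finset.sum_involution (fun p _ => p.swap) ?_ ?_ ?_ ?_
  · intro p _
    have := Fc_skew L hL p.1 p.2
    simp only [Prod.fst_swap, Prod.snd_swap]
    rw [this]; ring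
  · intro p hp hne
    intro hswap
    apply hne
    have h12 : p.2 = p.1 := congrArg Prod.fst hswap
    rw [h12, Fc_diag L hL]; ring
  · intro p hp
    simp only [Finset.mem_product] at hp ⊢
    exact ⟨hp.2, hp.1⟩
  · intro p _; simp

lemma blockB_skew (L : List (PreBM R)) (hL : ∀ T ∈ L, IsBM T) (v w : ℕ →₀ R) :
    blockB L v w = -blockB L w v := by
  have h := blockB_self L hL (v + w)
  rw [blockB_add_left, blockB_add_right, blockB_add_right,
    blockB_self L hL, blockB_self L hL] at h
  linear_combination h

/-- If the coefficient functions agree on the supports, the block forms agree. -/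
lemma blockB_congr {L L' : List (PreBM R)} {v w : ℕ →₀ R}
    (h : ∀ g ∈ v.support, ∀ h' ∈ w.support, Fc L g h' = Fc L' g h') :
    blockB L v w = blockB L' v w := by
  rw [blockB_def, blockB_def]
  refine Finset.sum_congr rfl fun g hg => Finset.sum_congr rfl fun h' hh' => ?_
  rw [h g hg h' hh']

end TuraevAux
namespace TuraevAux

open Finsupp Finset

set_option linter.unusedSectionVars false

variable {R : Type*} [CommRing R] [IsDomain R]

/-! ### Span lemmas -/

lemma mem_sSpan_apply {L : List (PreBM R)} {x : ℕ →₀ R} (hx : x ∈ sSpan L)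
    {g : ℕ} (hg : ∀ T ∈ L, g ≠ T.s) : x g = 0 := by
  induction hx using Submodule.span_induction with
  | mem v hv =>
    obtain ⟨T, hT, rfl⟩ := hv
    rw [Finsupp.single_apply, if_neg (fun he => (hg T hT) he.symm)]
  | zero => simp
  | add x y _ _ hx hy => simp [hx, hy]
  | smul r x _ hx => simp [hx]

lemma subset_allG {L : List (PreBM R)} {T : PreBM R} (hT : T ∈ L) : T.G ⊆ allG L := by
  induction L with
  | nil => simp at hT
  | cons T' L ih =>
    rcases List.mem_cons.mp hT with rfl | hT
    · intro x hx; simp only [allG, List.foldr_cons]; exact Finset.mem_union_left _ hx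
    · intro x hx; simp only [allG, List.foldr_cons]
      exact Finset.mem_union_right _ (ih hT hx)

lemma sSpan_support_subset {L : List (PreBM R)} (hL : ∀ T ∈ L, T.s ∈ T.G)
    {x : ℕ →₀ R} (hx : x ∈ sSpan L) : x.support ⊆ allG L := by
  intro g hg
  by_contra hgG
  refine Finsupp.mem_support_iff.mp hg (mem_sSpan_apply hx fun T hT he => ?_)
  exact hgG (subset_allG hT (he ▸ hL T hT))

lemma shortVec_support_subset {L : List (PreBM R)} (hL : ∀ T ∈ L, T.s ∈ T.G)
    {x : ℕ →₀ R} (h : ShortVec L x) : x.support ⊆ allG L := by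
  rcases h with h | ⟨g, hg, _, h⟩ | ⟨g, hg, h', hh', _, _, h⟩
  · exact sSpan_support_subset hL h
  · have hx : x = (x - Finsupp.single g 1) + Finsupp.single g 1 := by abel
    rw [hx]
    refine Finsupp.support_add.trans (Finset.union_subset (sSpan_support_subset hL h) ?_)
    exact Finsupp.support_single_subset.trans (by simpa using hg)
  · have hx : x = ((x - Finsupp.single g 1 - Finsupp.single h' 1) + Finsupp.single g 1)
        + Finsupp.single h' 1 := by abel
    rw [hx]
    refine Finsupp.support_add.trans (Finset.union_subset ?_ ?_)
    · refine Finsupp.support_add.trans (Finset.union_subset (sSpan_support_subset hL h) ?_)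
      exact Finsupp.support_single_subset.trans (by simpa using hg)
    · exact Finsupp.support_single_subset.trans (by simpa using hh')

/-! ### Pair-list lemmas -/

lemma allG_pair (A B : PreBM R) : allG [A, B] = A.G ∪ B.G := by
  simp [allG]

lemma sVec_pair (A B : PreBM R) :
    sVec [A, B] = Finsupp.single A.s (1 : R) + Finsupp.single B.s 1 := by
  simp [sVec]

lemma sSpan_pair_set (A B : PreBM R) :
    {v : ℕ →₀ R | ∃ T ∈ [A, B], v = Finsupp.single T.s (1 : R)}
      = {Finsupp.single A.s (1 : R), Finsupp.single B.s 1} := by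
  ext v
  simp only [Set.mem_setOf_eq, List.mem_cons, List.mem_singleton, Set.mem_insert_iff,
    Set.mem_singleton_iff, List.not_mem_nil, or_false]
  constructor
  · rintro ⟨T, (rfl | rfl), rfl⟩ <;> simp
  · rintro (rfl | rfl)
    · exact ⟨A, Or.inl rfl, rfl⟩
    · exact ⟨B, Or.inr rfl, rfl⟩

lemma sSpan_pair (A B : PreBM R) :
    sSpan [A, B] = Submodule.span R
      {Finsupp.single A.s (1 : R), Finsupp.single B.s 1} := by
  rw [sSpan, sSpan_pair_set]

lemma single_s_left_mem (A B : PreBM R) :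
    Finsupp.single A.s (1 : R) ∈ sSpan [A, B] :=
  Submodule.subset_span ⟨A, by simp, rfl⟩

lemma single_s_right_mem (A B : PreBM R) :
    Finsupp.single B.s (1 : R) ∈ sSpan [A, B] :=
  Submodule.subset_span ⟨B, by simp, rfl⟩

lemma sSpan_pair_congr {A B A' B' : PreBM R} (hA : A'.s = A.s) (hB : B'.s = B.s) :
    sSpan [A', B'] = sSpan [A, B] := by
  rw [sSpan_pair, sSpan_pair, hA, hB]

/-! ### negBM, isomorphisms -/

lemma negBM_G (T : PreBM R) : (negBM T).G = T.G := rfl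
lemma negBM_s (T : PreBM R) : (negBM T).s = T.s := rfl

lemma negBM_isBM {T : PreBM R} (h : IsBM T) : IsBM (negBM T) := by
  obtain ⟨hs, hsk, hd⟩ := h
  refine ⟨hs, fun g hg h' hh' => ?_, fun g hg => ?_⟩
  · show -T.b g h' = -(-T.b h' g)
    rw [hsk g hg h' hh']
  · show -T.b g g = 0
    rw [hd g hg]; ring

lemma bmIso_refl (T : PreBM R) : BMIso T T :=
  ⟨id, Set.bijOn_id _, rfl, fun _ _ _ _ => rfl⟩

lemma bmIso_trans {T T' T'' : PreBM R} (h : BMIso T T') (h' : BMIso T' T'') :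
    BMIso T T'' := by
  obtain ⟨f, hf, hfs, hfb⟩ := h
  obtain ⟨f', hf', hfs', hfb'⟩ := h'
  refine ⟨f' ∘ f, hf'.comp hf, by simp [hfs, hfs'], fun g hg h' hh' => ?_⟩
  show T''.b (f' (f g)) (f' (f h')) = T.b g h'
  rw [hfb' _ (hf.mapsTo hg) _ (hf.mapsTo hh'), hfb g hg h' hh']

lemma bmIso_symm {T T' : PreBM R} (hT : IsBM T) (h : BMIso T T') : BMIso T' T := by
  obtain ⟨f, hf, hfs, hfb⟩ := h
  have hinv := hf.invOn_invFunOn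
  set f' := Function.invFunOn f T.G with hf'def
  refine ⟨f', hf.symm ⟨hinv.2, hinv.1⟩, ?_, ?_⟩
  · rw [← hfs]
    exact hinv.1 (by exact_mod_cast hT.1)
  · intro g hg h' hh'
    have hg' : f' g ∈ (T.G : Set ℕ) := (hf.symm ⟨hinv.2, hinv.1⟩).mapsTo hg
    have hh'' : f' h' ∈ (T.G : Set ℕ) := (hf.symm ⟨hinv.2, hinv.1⟩).mapsTo hh'
    have := hfb (f' g) hg' (f' h') hh''
    rw [hinv.2 hg, hinv.2 hh'] at this
    rw [← this]

lemma bmIso_negBM {T T' : PreBM R} (h : BMIso T T') : BMIso (negBM T) (negBM T') := by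
  obtain ⟨f, hf, hfs, hfb⟩ := h
  exact ⟨f, hf, hfs, fun g hg h' hh' => by
    show -T'.b (f g) (f h') = -T.b g h'
    rw [hfb g hg h' hh']⟩

lemma isBM_of_iso {T T' : PreBM R} (h : BMIso T T') (hT : IsBM T) : IsBM T' := by
  obtain ⟨f, hf, hfs, hfb⟩ := h
  obtain ⟨hs, hsk, hd⟩ := hT
  refine ⟨?_, ?_, ?_⟩
  · rw [← hfs]; exact hf.mapsTo hs
  · intro g hg h' hh'
    obtain ⟨x, hx, rfl⟩ := hf.surjOn hg
    obtain ⟨y, hy, rfl⟩ := hf.surjOn hh'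
    rw [hfb x hx y hy, hfb y hy x hx, hsk x hx y hy]
  · intro g hg
    obtain ⟨x, hx, rfl⟩ := hf.surjOn hg
    rw [hfb x hx x hx, hd x hx]

end TuraevAux
namespace TuraevAux

open Finsupp Finset

set_option linter.unusedSectionVars false
set_option maxHeartbeats 1000000

variable {R : Type*} [CommRing R] [IsDomain R]

/-! ### Shifts and restrictions -/

def shiftBM (T : PreBM R) (n : ℕ) : PreBM R :=
  ⟨T.G.image (· + n), T.s + n, fun x y => T.b (x - n) (y - n)⟩

lemma mem_shiftBM {T : PreBM R} {n x : ℕ} :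
    x ∈ (shiftBM T n).G ↔ ∃ g ∈ T.G, g + n = x := by simp [shiftBM]

lemma shiftBM_isBM {T : PreBM R} {n : ℕ} (h : IsBM T) : IsBM (shiftBM T n) := by
  refine ⟨Finset.mem_image_of_mem _ h.1, ?_, ?_⟩
  · intro x hx y hy
    obtain ⟨g, hg, rfl⟩ := mem_shiftBM.mp hx
    obtain ⟨g', hg', rfl⟩ := mem_shiftBM.mp hy
    show T.b (g + n - n) (g' + n - n) = -T.b (g' + n - n) (g + n - n)
    simp only [Nat.add_sub_cancel]
    exact h.2.1 g hg g' hg'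
  · intro x hx
    obtain ⟨g, hg, rfl⟩ := mem_shiftBM.mp hx
    show T.b (g + n - n) (g + n - n) = 0
    simp only [Nat.add_sub_cancel]
    exact h.2.2 g hg

lemma shiftBM_iso (T : PreBM R) (n : ℕ) : BMIso T (shiftBM T n) := by
  refine ⟨(· + n), ?_, rfl, ?_⟩
  · have : ((shiftBM T n).G : Set ℕ) = (· + n) '' (T.G : Set ℕ) := by
      simp [shiftBM]
    rw [this]
    exact Set.InjOn.bijOn_image (fun a _ b _ h => by simpa using h)
  · intro g hg h' hh'
    show T.b (g + n - n) (h' + n - n) = T.b g h'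
    simp only [Nat.add_sub_cancel]

lemma shiftBM_disjoint {T : PreBM R} {n : ℕ} {S : Finset ℕ}
    (hS : ∀ x ∈ S, x < n) : Disjoint S (shiftBM T n).G := by
  rw [Finset.disjoint_left]
  intro x hx hx'
  obtain ⟨g, _, rfl⟩ := mem_shiftBM.mp hx'
  have := hS _ hx
  omega

def restrictBM (W : PreBM R) (S : Finset ℕ) : PreBM R := ⟨S, W.s, W.b⟩

lemma restrictBM_isBM {W : PreBM R} {S : Finset ℕ} (hW : IsBM W)
    (hS : S ⊆ W.G) (hs : W.s ∈ S) : IsBM (restrictBM W S) :=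
  ⟨hs, fun g hg h hh => hW.2.1 g (hS hg) h (hS hh), fun g hg => hW.2.2 g (hS hg)⟩

/-! ### Uniform extensions -/

def URel (W : PreBM R) (N : Finset ℕ) (c : R) : Prop :=
  ((N.card = 1 ∧ (c = 0 ∨ c = 1)) ∨ (N.card = 2 ∧ c = 1)) ∧
  W.s ∉ N ∧ N ⊆ W.G ∧ ∀ h ∈ W.G, (∑ g ∈ N, W.b g h) = c * W.b W.s h

def UExt (T W : PreBM R) : Prop :=
  W.s = T.s ∧ ∃ N c, URel W N c ∧ Disjoint N T.G ∧ W.G = T.G ∪ N ∧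
    ∀ x ∈ T.G, ∀ y ∈ T.G, W.b x y = T.b x y

lemma uExt_card_lt {T W : PreBM R} (h : UExt T W) : T.G.card < W.G.card := by
  obtain ⟨_, N, c, ⟨hleg, _, _, _⟩, hdisj, hG, _⟩ := h
  have hN : 0 < N.card := by rcases hleg with ⟨h1, _⟩ | ⟨h2, _⟩ <;> omega
  rw [hG, Finset.card_union_of_disjoint hdisj.symm]
  omega

lemma uExt_of_stepExt {T W : PreBM R} (h : StepExt T W) :
    IsBM T ∧ IsBM W ∧ UExt T W := by
  obtain ⟨hT, hW, hext⟩ := h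
  refine ⟨hT, hW, ?_⟩
  rcases hext with ⟨hs, g, hg, hG, hagree, hann⟩ | ⟨hs, g, hg, hG, hagree, hcore⟩ |
    ⟨hs, g₁, g₂, hg₁, hg₂, hne, hG, hagree, hpair⟩
  · refine ⟨hs, {g}, 0, ⟨Or.inl ⟨Finset.card_singleton g, Or.inl rfl⟩, ?_, ?_, ?_⟩,
      ?_, ?_, hagree⟩
    · simp only [Finset.mem_singleton]
      intro he; exact hg (he ▸ hs ▸ hT.1)
    · intro x hx; rw [Finset.mem_singleton.mp hx, hG]; exact Finset.mem_insert_self _ _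
    · intro h hh; rw [Finset.sum_singleton, hann h hh, zero_mul]
    · simp only [Finset.disjoint_singleton_left]; exact hg
    · rw [hG, Finset.insert_eq, Finset.union_comm]
  · refine ⟨hs, {g}, 1, ⟨Or.inl ⟨Finset.card_singleton g, Or.inr rfl⟩, ?_, ?_, ?_⟩,
      ?_, ?_, hagree⟩
    · simp only [Finset.mem_singleton]
      intro he; exact hg (he ▸ hs ▸ hT.1)
    · intro x hx; rw [Finset.mem_singleton.mp hx, hG]; exact Finset.mem_insert_self _ _
    · intro h hh; rw [Finset.sum_singleton, hcore h hh, one_mul]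
    · simp only [Finset.disjoint_singleton_left]; exact hg
    · rw [hG, Finset.insert_eq, Finset.union_comm]
  · refine ⟨hs, {g₁, g₂}, 1, ⟨Or.inr ⟨Finset.card_pair hne, rfl⟩, ?_, ?_, ?_⟩,
      ?_, ?_, hagree⟩
    · simp only [Finset.mem_insert, Finset.mem_singleton]
      rintro (he | he)
      · exact hg₁ (he ▸ hs ▸ hT.1)
      · exact hg₂ (he ▸ hs ▸ hT.1)
    · intro x hx
      rw [hG]
      rcases Finset.mem_insert.mp hx with rfl | hx
      · exact Finset.mem_insert_self _ _
      · rw [Finset.mem_singleton.mp hx]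
        exact Finset.mem_insert_of_mem (Finset.mem_insert_self _ _)
    · intro h hh; rw [Finset.sum_pair hne, hpair h hh, one_mul]
    · rw [Finset.disjoint_left]
      intro a ha
      rcases Finset.mem_insert.mp ha with rfl | ha
      · exact hg₁
      · rw [Finset.mem_singleton.mp ha]; exact hg₂
    · rw [hG]; ext x; simp only [Finset.mem_insert, Finset.mem_union,
        Finset.mem_singleton]; tauto

lemma stepExt_of_uExt {T W : PreBM R} (hT : IsBM T) (hW : IsBM W) (h : UExt T W) :
    StepExt T W := by
  obtain ⟨hs, N, c, ⟨hleg, hsN, hNG, hrel⟩, hdisj, hG, hagree⟩ := h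
  refine ⟨hT, hW, ?_⟩
  rcases hleg with ⟨h1, hc⟩ | ⟨h2, hc⟩
  · obtain ⟨g, rfl⟩ := Finset.card_eq_one.mp h1
    have hgT : g ∉ T.G := Finset.disjoint_singleton_left.mp hdisj
    have hins : W.G = insert g T.G := by
      rw [hG, Finset.insert_eq, Finset.union_comm]
    rcases hc with rfl | rfl
    · refine Or.inl ⟨hs, g, hgT, hins, hagree, ?_⟩
      intro h hh
      have := hrel h hh
      rw [Finset.sum_singleton, zero_mul] at this
      exact this
    · refine Or.inr (Or.inl ⟨hs, g, hgT, hins, hagree, ?_⟩)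
      intro h hh
      have := hrel h hh
      rw [Finset.sum_singleton, one_mul] at this
      exact this
  · obtain ⟨g₁, g₂, hne, rfl⟩ := Finset.card_eq_two.mp h2
    subst hc
    refine Or.inr (Or.inr ⟨hs, g₁, g₂, ?_, ?_, hne, ?_, hagree, ?_⟩)
    · exact fun hx => (Finset.disjoint_left.mp hdisj (Finset.mem_insert_self _ _)) hx
    · exact fun hx => (Finset.disjoint_left.mp hdisj
        (Finset.mem_insert_of_mem (Finset.mem_singleton_self _))) hx
    · rw [hG]; ext x; simp only [Finset.mem_insert, Finset.mem_union,
        Finset.mem_singleton]; tauto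
    · intro h hh
      have := hrel h hh
      rw [Finset.sum_pair hne, one_mul] at this
      exact this

end TuraevAux
namespace TuraevAux

open Finsupp Finset

set_option linter.unusedSectionVars false
set_option maxHeartbeats 1000000

variable {R : Type*} [CommRing R] [IsDomain R]

/-- Transport an extension along an isomorphism of the top. -/
lemma uExt_transport_top {C W' W : PreBM R} (hC : IsBM C) (hW : IsBM W)
    (hext : UExt C W') (hiso : BMIso W' W) :
    ∃ C'', IsBM C'' ∧ UExt C'' W ∧ BMIso C C'' := by
  classical
  obtain ⟨f, hf, hfs, hfb⟩ := hiso
  obtain ⟨hs, N, c, ⟨hleg, hsN, hNG, hrel⟩, hdisj, hG, hagree⟩ := hext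
  have hCsub : C.G ⊆ W'.G := by rw [hG]; exact Finset.subset_union_left
  have hmapsTo : ∀ x ∈ W'.G, f x ∈ W.G := fun x hx => by
    exact_mod_cast hf.mapsTo (by exact_mod_cast hx)
  have hinj : ∀ x ∈ W'.G, ∀ y ∈ W'.G, f x = f y → x = y := fun x hx y hy hxy =>
    hf.injOn (by exact_mod_cast hx) (by exact_mod_cast hy) hxy
  have hsurj : ∀ y ∈ W.G, ∃ x ∈ W'.G, f x = y := fun y hy => by
    obtain ⟨x, hx, rfl⟩ := hf.surjOn (by exact_mod_cast hy : (y : ℕ) ∈ (W.G : Set ℕ))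
    exact ⟨x, by exact_mod_cast hx, rfl⟩
  have hsC : W'.s ∈ C.G := hs ▸ hC.1
  refine ⟨restrictBM W (C.G.image f), ?_, ?_, ?_⟩
  · refine restrictBM_isBM hW ?_ ?_
    · intro x hx
      obtain ⟨g, hg, rfl⟩ := Finset.mem_image.mp hx
      exact hmapsTo g (hCsub hg)
    · rw [← hfs]
      exact Finset.mem_image_of_mem f hsC
  · refine ⟨rfl, N.image f, c, ⟨?_, ?_, ?_, ?_⟩, ?_, ?_, fun _ _ _ _ => rfl⟩
    · have : (N.image f).card = N.card := by
        apply Finset.card_image_of_injOn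
        intro x hx y hy hxy
        exact hinj x (hNG hx) y (hNG hy) hxy
      rcases hleg with ⟨h1, hc⟩ | ⟨h2, hc⟩
      · exact Or.inl ⟨this ▸ h1, hc⟩
      · exact Or.inr ⟨this ▸ h2, hc⟩
    · show W.s ∉ N.image f
      intro hmem
      obtain ⟨g, hg, hfg⟩ := Finset.mem_image.mp hmem
      have : g = W'.s := by
        apply hinj g (hNG hg) W'.s (hG ▸ Finset.mem_union_left _ hsC)
        rw [hfg, hfs]
      exact hsN (this ▸ hg)
    · intro x hx
      obtain ⟨g, hg, rfl⟩ := Finset.mem_image.mp hx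
      exact hmapsTo g (hNG hg)
    · intro h hh
      obtain ⟨h₀, hh₀, rfl⟩ := hsurj h hh
      rw [Finset.sum_image (fun x hx y hy hxy => hinj x (hNG hx) y (hNG hy) hxy)]
      show (∑ g ∈ N, W.b (f g) (f h₀)) = c * W.b W.s (f h₀)
      have : ∀ g ∈ N, W.b (f g) (f h₀) = W'.b g h₀ := fun g hg => hfb g (hNG hg) h₀ hh₀
      rw [Finset.sum_congr rfl this, hrel h₀ hh₀, ← hfs,
        hfb W'.s (hG ▸ Finset.mem_union_left _ hsC) h₀ hh₀]
    · rw [Finset.disjoint_left]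
      intro a ha ha'
      obtain ⟨g, hg, rfl⟩ := Finset.mem_image.mp ha
      obtain ⟨y, hy, hxy⟩ := Finset.mem_image.mp ha'
      have : y = g := hinj y (hCsub hy) g (hNG hg) hxy
      exact Finset.disjoint_left.mp hdisj hg (this ▸ hy)
    · show W.G = C.G.image f ∪ N.image f
      rw [← Finset.image_union, ← hG]
      ext y
      constructor
      · intro hy
        obtain ⟨x, hx, rfl⟩ := hsurj y hy
        exact Finset.mem_image_of_mem f hx
      · intro hy
        obtain ⟨x, hx, rfl⟩ := Finset.mem_image.mp hy
        exact hmapsTo x hx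
  · refine ⟨f, ?_, ?_, ?_⟩
    · have : ((restrictBM W (C.G.image f)).G : Set ℕ) = f '' (C.G : Set ℕ) := by
        simp [restrictBM]
      rw [this]
      exact Set.InjOn.bijOn_image (hf.injOn.mono (by exact_mod_cast hCsub))
    · show f C.s = W.s
      rw [← hs, hfs]
    · intro g hg h hh
      show W.b (f g) (f h) = C.b g h
      rw [hfb g (hCsub hg) h (hCsub hh)]
      exact hagree g hg h hh

/-- Transport an extension along an isomorphism of the base, making the new
elements fresh. -/
lemma uExt_transport_base {B B₂ B₀ : PreBM R} (hB : IsBM B) (hB₂ : IsBM B₂)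
    (hB₀ : IsBM B₀) (hext : UExt B B₂) (hiso : BMIso B B₀) (S : Finset ℕ) :
    ∃ B₂', IsBM B₂' ∧ UExt B₀ B₂' ∧ BMIso B₂ B₂' ∧
      ∀ x ∈ B₂'.G, x ∈ B₀.G ∨ x ∉ S := by
  classical
  obtain ⟨f, hf, hfs, hfb⟩ := hiso
  obtain ⟨hs, N, c, ⟨hleg, hsN, hNG, hrel⟩, hdisj, hG, hagree⟩ := hext
  set m := ((S ∪ B₀.G).sup id) + 1 with hm
  have hlt : ∀ x ∈ S ∪ B₀.G, x < m := by
    intro x hx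
    have : id x ≤ (S ∪ B₀.G).sup id := Finset.le_sup hx
    simpa [hm] using Nat.lt_succ_of_le this
  have hltS : ∀ x ∈ S, x < m := fun x hx => hlt x (Finset.mem_union_left _ hx)
  have hltB₀ : ∀ x ∈ B₀.G, x < m := fun x hx => hlt x (Finset.mem_union_right _ hx)
  set N' := N.image (· + m) with hN'
  have hN'big : ∀ x ∈ N', m ≤ x := by
    intro x hx
    obtain ⟨g, _, rfl⟩ := Finset.mem_image.mp hx
    omega
  have hN'B₀ : ∀ x ∈ N', x ∉ B₀.G := fun x hx hx' => by
    have := hltB₀ x hx'; have := hN'big x hx; omega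
  have hmapsTo : ∀ x ∈ B.G, f x ∈ B₀.G := fun x hx => by
    exact_mod_cast hf.mapsTo (by exact_mod_cast hx)
  set fi := Function.invFunOn f B.G with hfi
  have hinv := hf.invOn_invFunOn
  have hfi_mem : ∀ y ∈ B₀.G, fi y ∈ B.G := by
    intro y hy
    obtain ⟨x, hx, rfl⟩ := hf.surjOn (by exact_mod_cast hy : (y:ℕ) ∈ (B₀.G : Set ℕ))
    have : fi (f x) = x := hinv.1 hx
    rw [this]; exact_mod_cast hx
  have hfi_left : ∀ x ∈ B.G, fi (f x) = x := fun x hx => hinv.1 (by exact_mod_cast hx)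
  have hfi_right : ∀ y ∈ B₀.G, f (fi y) = y := fun y hy => hinv.2 (by exact_mod_cast hy)
  set F' : ℕ → ℕ := fun x => if x ∈ N' then x - m else fi x with hF'
  set bb : ℕ → ℕ → R := fun x y => B₂.b (F' x) (F' y) with hbb
  set B₂' : PreBM R := ⟨B₀.G ∪ N', B₀.s, bb⟩ with hB₂'
  set F : ℕ → ℕ := fun x => if x ∈ N then x + m else f x with hFdef
  have hBsub : B.G ⊆ B₂.G := by rw [hG]; exact Finset.subset_union_left
  have hNsub : N ⊆ B₂.G := hNG
  have hF'N' : ∀ g ∈ N, F' (g + m) = g := by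
    intro g hg
    have hmem : g + m ∈ N' := Finset.mem_image_of_mem _ hg
    simp only [hF', if_pos hmem]
    omega
  have hF'B₀ : ∀ x ∈ B₀.G, F' x = fi x := by
    intro x hx
    have hx' : x ∉ N' := fun h => hN'B₀ x h hx
    simp only [hF', if_neg hx']
  have hF'mem : ∀ x ∈ B₀.G ∪ N', F' x ∈ B₂.G := by
    intro x hx
    rcases Finset.mem_union.mp hx with hx | hx
    · rw [hF'B₀ x hx]; exact hBsub (hfi_mem x hx)
    · obtain ⟨g, hg, rfl⟩ := Finset.mem_image.mp hx
      rw [hF'N' g hg]; exact hNsub hg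
  have hcase : ∀ x ∈ B₂.G, (x ∈ N ∧ x ∉ B.G) ∨ (x ∉ N ∧ x ∈ B.G) := by
    intro x hx
    rcases Finset.mem_union.mp (hG ▸ hx) with hx' | hx'
    · exact Or.inr ⟨fun h => Finset.disjoint_left.mp hdisj h hx', hx'⟩
    · exact Or.inl ⟨hx', fun h => Finset.disjoint_left.mp hdisj hx' h⟩
  have hFF' : ∀ x ∈ B₂.G, F' (F x) = x := by
    intro x hx
    rcases hcase x hx with ⟨hxN, _⟩ | ⟨hxN, hxB⟩
    · simp only [hFdef, if_pos hxN]
      exact hF'N' x hxN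
    · simp only [hFdef, if_neg hxN]
      rw [hF'B₀ _ (hmapsTo x hxB)]
      exact hfi_left x hxB
  have hB₂'G : B₂'.G = B₀.G ∪ N' := rfl
  have hB₂'s : B₂'.s = B₀.s := rfl
  have hB₂'b : ∀ x y, B₂'.b x y = B₂.b (F' x) (F' y) := fun _ _ => rfl
  have hisBM : IsBM B₂' := by
    refine ⟨Finset.mem_union_left _ hB₀.1, ?_, ?_⟩
    · intro x hx y hy
      rw [hB₂'b, hB₂'b]
      exact hB₂.2.1 _ (hF'mem x hx) _ (hF'mem y hy)
    · intro x hx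
      rw [hB₂'b]
      exact hB₂.2.2 _ (hF'mem x hx)
  have hfiB₀s : F' B₀.s = B₂.s := by
    rw [hF'B₀ _ hB₀.1, ← hfs, hfi_left _ hB.1, hs]
  refine ⟨B₂', hisBM, ?_, ?_, ?_⟩
  · -- UExt B₀ B₂'
    refine ⟨rfl, N', c, ⟨?_, ?_, ?_, ?_⟩, ?_, rfl, ?_⟩
    · have hcard : N'.card = N.card :=
        Finset.card_image_of_injective _ (fun a b hab => by omega)
      rcases hleg with ⟨h1, hc⟩ | ⟨h2, hc⟩
      · exact Or.inl ⟨hcard ▸ h1, hc⟩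
      · exact Or.inr ⟨hcard ▸ h2, hc⟩
    · exact fun h => hN'B₀ _ h hB₀.1
    · exact Finset.subset_union_right
    · intro h hh
      rw [hN', Finset.sum_image (fun a _ b _ hab => by omega : ∀ a ∈ N, ∀ b ∈ N,
        a + m = b + m → a = b)]
      have : ∀ g ∈ N, B₂'.b (g + m) h = B₂.b g (F' h) := by
        intro g hg
        rw [hB₂'b, hF'N' g hg]
      rw [Finset.sum_congr rfl this, hB₂'b, hfiB₀s]
      exact hrel (F' h) (hF'mem h hh)
    · rw [Finset.disjoint_left]
      exact fun a ha ha' => hN'B₀ a ha ha'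
    · intro x hx y hy
      rw [hB₂'b, hF'B₀ x hx, hF'B₀ y hy,
        hagree _ (hfi_mem x hx) _ (hfi_mem y hy),
        ← hfb _ (hfi_mem x hx) _ (hfi_mem y hy), hfi_right x hx, hfi_right y hy]
  · -- BMIso B₂ B₂'
    refine ⟨F, ⟨?_, ?_, ?_⟩, ?_, ?_⟩
    · intro x hx
      have hx' : x ∈ B₂.G := by exact_mod_cast hx
      rcases hcase x hx' with ⟨hxN, _⟩ | ⟨hxN, hxB⟩
      · have : F x = x + m := by simp only [hFdef, if_pos hxN]
        rw [this]
        have : x + m ∈ N' := Finset.mem_image_of_mem _ hxN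
        exact_mod_cast Finset.mem_union_right _ this
      · have : F x = f x := by simp only [hFdef, if_neg hxN]
        rw [this]
        exact_mod_cast Finset.mem_union_left _ (hmapsTo x hxB)
    · intro x hx y hy hxy
      have hx' : x ∈ B₂.G := by exact_mod_cast hx
      have hy' : y ∈ B₂.G := by exact_mod_cast hy
      have := congrArg F' hxy
      rw [hFF' x hx', hFF' y hy'] at this
      exact this
    · intro y hy
      have hy' : y ∈ B₂'.G := by exact_mod_cast hy
      rcases Finset.mem_union.mp hy' with hyB | hyN
      · refine ⟨fi y, ?_, ?_⟩
        · have : fi y ∈ B.G := hfi_mem y hyB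
          exact_mod_cast hBsub this
        · have hfiN : fi y ∉ N :=
            fun h => Finset.disjoint_left.mp hdisj h (hfi_mem y hyB)
          simp only [hFdef, if_neg hfiN]
          exact hfi_right y hyB
      · obtain ⟨g, hg, rfl⟩ := Finset.mem_image.mp hyN
        refine ⟨g, ?_, ?_⟩
        · exact_mod_cast hNsub hg
        · simp only [hFdef, if_pos hg]
    · have hBsN : B₂.s ∉ N := by
        rw [hs]
        exact fun h => Finset.disjoint_left.mp hdisj h hB.1
      simp only [hFdef, if_neg hBsN]
      rw [hs, hfs, hB₂'s]
    · intro g hg h hh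
      rw [hB₂'b, hFF' g hg, hFF' h hh]
  · -- freshness
    intro x hx
    rcases Finset.mem_union.mp hx with hx | hx
    · exact Or.inl hx
    · refine Or.inr fun hxS => ?_
      have := hltS x hxS
      have := hN'big x hx
      omega

end TuraevAux
namespace TuraevAux

open Finsupp Finset

set_option linter.unusedSectionVars false
set_option maxHeartbeats 1000000

variable {R : Type*} [CommRing R] [IsDomain R]

/-! ### Zero fillings and cobordism with zero matrix -/

def ZFill (A B' : PreBM R) : Prop :=
  ∃ (k : ℕ) (lam : Fin k → (ℕ →₀ R)), IsFilling [A, B'] lam ∧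
    ∀ i j, blockB [A, B'] (lam i) (lam j) = 0

def Cob2 (A B : PreBM R) : Prop :=
  ∃ A' B' : PreBM R, IsBM A' ∧ IsBM B' ∧ BMIso A A' ∧ BMIso B B' ∧
    Disjoint A'.G B'.G ∧ ZFill A' (negBM B')

lemma cobordant_of_cob2 {A B : PreBM R} (h : Cob2 A B) : Cobordant A B := by
  obtain ⟨A', B', h1, h2, h3, h4, h5, k, lam, hfill, hzero⟩ := h
  refine ⟨A', B', h1, h2, h3, h4, h5, ?_⟩
  have hmat : (Matrix.of fun i j : Fin k => blockB [A', negBM B'] (lam i) (lam j))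
      = (0 : Matrix (Fin k) (Fin k) R) := by
    ext i j
    exact hzero i j
  refine Nat.sInf_eq_zero.mpr (Or.inl ⟨k, lam, hfill, ?_⟩)
  rw [hmat, Matrix.rank_zero]

/-! ### small blockB helpers -/

lemma blockB_sum_left (L : List (PreBM R)) {ι : Type*} (s : Finset ι)
    (f : ι → (ℕ →₀ R)) (w : ℕ →₀ R) :
    blockB L (∑ x ∈ s, f x) w = ∑ x ∈ s, blockB L (f x) w := by
  classical
  induction s using Finset.induction with
  | empty => simp [blockB_def]
  | @insert x s hx ih =>
    rw [Finset.sum_insert hx, Finset.sum_insert hx, blockB_add_left, ih]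

lemma blockB_single_left (L : List (PreBM R)) {w : ℕ →₀ R} {S : Finset ℕ}
    (hw : w.support ⊆ S) (g : ℕ) :
    blockB L (Finsupp.single g (1 : R)) w = ∑ h ∈ S, w h * Fc L g h := by
  rw [blockB_eq_over L (S := {g}) (S' := S) Finsupp.support_single_subset hw,
    Finset.sum_singleton]
  refine Finset.sum_congr rfl fun h _ => ?_
  simp

lemma Fc_pair (A B : PreBM R) (g h : ℕ) :
    Fc [A, B] g h = (if g ∈ A.G ∧ h ∈ A.G then A.b g h else 0)
      + (if g ∈ B.G ∧ h ∈ B.G then B.b g h else 0) := by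
  simp [Fc]

/-! ### The diagonal filling : `Cob2 T T` -/

lemma cob2_refl {T : PreBM R} (hT : IsBM T) : Cob2 T T := by
  classical
  set n := T.G.sup id + 1 with hn
  have hlt : ∀ g ∈ T.G, g < n := by
    intro g hg
    have : id g ≤ T.G.sup id := Finset.le_sup hg
    simp only [id] at this; omega
  set W := shiftBM T n with hW
  have hWG : W.G = T.G.image (· + n) := rfl
  have hWs : W.s = T.s + n := rfl
  have hdisj : Disjoint T.G W.G := shiftBM_disjoint hlt
  have hWbm : IsBM W := shiftBM_isBM hT
  have hnW : ∀ x ∈ W.G, n ≤ x := by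
    intro x hx
    obtain ⟨g, _, rfl⟩ := mem_shiftBM.mp hx
    omega
  have hTn : ∀ x ∈ T.G, x < n := hlt
  set L : List (PreBM R) := [T, negBM W] with hL
  set dvec : ℕ → (ℕ →₀ R) := fun g => Finsupp.single g 1 + Finsupp.single (g + n) 1
    with hdvec
  have hallG : allG L = T.G ∪ W.G := allG_pair T (negBM W)
  have hsvec : sVec L = dvec T.s := by
    rw [sVec_pair]; rfl
  -- shortness
  have hshort : ∀ g ∈ T.G, ShortVec L (dvec g) := by
    intro g hg
    by_cases hgs : g = T.s
    · subst hgs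
      left
      rw [← hsvec, sVec_pair]
      exact Submodule.add_mem _ (single_s_left_mem T (negBM W))
        (single_s_right_mem T (negBM W))
    · right; right
      refine ⟨g, ?_, g + n, ?_, ?_, ?_, ?_⟩
      · rw [hallG]; exact Finset.mem_union_left _ hg
      · rw [hallG]
        exact Finset.mem_union_right _ (mem_shiftBM.mpr ⟨g, hg, rfl⟩)
      · omega
      · intro T' hT'
        have hsT : T.s < n := hlt _ hT.1
        have hgn : g < n := hlt _ hg
        rcases List.mem_cons.mp hT' with rfl | hT'
        · exact ⟨hgs, by omega⟩
        · have : T' = negBM W := by simpa using hT'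
          subst this
          show g ≠ W.s ∧ g + n ≠ W.s
          rw [hWs]
          constructor <;> omega
      · have : dvec g - Finsupp.single g 1 - Finsupp.single (g + n) 1 = 0 := by
          rw [hdvec]; simp
        rw [this]
        exact Submodule.zero_mem _
  -- the family
  set e := T.G.equivFin with he
  set lam : Fin T.G.card → (ℕ →₀ R) := fun i => dvec ((e.symm i : ℕ)) with hlam
  have hfill : IsFilling L lam := by
    refine ⟨?_, ?_, ?_⟩
    · intro i
      exact hshort _ (e.symm i).2
    · refine ⟨e ⟨T.s, hT.1⟩, ?_⟩
      rw [hlam]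
      simp only [Equiv.symm_apply_apply]
      exact hsvec.symm
    · have hsum1 : ∑ i, lam i = ∑ g ∈ T.G, dvec g := by
        rw [hlam]
        rw [← Finset.sum_coe_sort T.G dvec]
        exact Equiv.sum_comp e.symm fun x => dvec (x : ℕ)
      have hsum2 : ∑ g ∈ T.G, dvec g
          = (∑ g ∈ T.G, Finsupp.single g (1 : R)) + ∑ x ∈ W.G, Finsupp.single x 1 := by
        rw [hdvec, Finset.sum_add_distrib]
        congr 1
        rw [hWG, Finset.sum_image (fun a _ b _ hab => by omega : ∀ a ∈ T.G, ∀ b ∈ T.G,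
          a + n = b + n → a = b)]
      rw [hsum1, hsum2, hallG, Finset.sum_union hdisj]
      have : ((∑ g ∈ T.G, Finsupp.single g (1:R)) + ∑ x ∈ W.G, Finsupp.single x 1)
          - ((∑ g ∈ T.G, Finsupp.single g (1:R)) + ∑ x ∈ W.G, Finsupp.single x 1) = 0 := by
        abel
      rw [this]
      exact Submodule.zero_mem _
  -- zero products
  have hzero : ∀ i j, blockB L (lam i) (lam j) = 0 := by
    have key : ∀ g ∈ T.G, ∀ h ∈ T.G, blockB L (dvec g) (dvec h) = 0 := by
      intro g hg h hh
      rw [hdvec, blockB_add_left, blockB_add_right, blockB_add_right,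
        blockB_single_single, blockB_single_single, blockB_single_single,
        blockB_single_single]
      have hgW : g + n ∈ W.G := mem_shiftBM.mpr ⟨g, hg, rfl⟩
      have hhW : h + n ∈ W.G := mem_shiftBM.mpr ⟨h, hh, rfl⟩
      have hgnT : g + n ∉ T.G := fun hc => by have := hTn _ hc; omega
      have hhnT : h + n ∉ T.G := fun hc => by have := hTn _ hc; omega
      have hgnotW : g ∉ W.G := fun hc => by have := hnW _ hc; have := hTn _ hg; omega
      have hhnotW : h ∉ W.G := fun hc => by have := hnW _ hc; have := hTn _ hh; omega
      have e1 : Fc L g h = T.b g h := by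
        rw [hL, Fc_pair, if_pos ⟨hg, hh⟩, if_neg (by
          show ¬(g ∈ (negBM W).G ∧ h ∈ (negBM W).G)
          rw [negBM_G]; tauto)]
        ring
      have e2 : Fc L g (h + n) = 0 := by
        rw [hL, Fc_pair, if_neg (by tauto), if_neg (by
          show ¬(g ∈ (negBM W).G ∧ h + n ∈ (negBM W).G)
          rw [negBM_G]; tauto)]
        ring
      have e3 : Fc L (g + n) h = 0 := by
        rw [hL, Fc_pair, if_neg (by tauto), if_neg (by
          show ¬(g + n ∈ (negBM W).G ∧ h ∈ (negBM W).G)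
          rw [negBM_G]; tauto)]
        ring
      have e4 : Fc L (g + n) (h + n) = -T.b g h := by
        rw [hL, Fc_pair, if_neg (by tauto), if_pos (by
          show g + n ∈ (negBM W).G ∧ h + n ∈ (negBM W).G
          rw [negBM_G]; exact ⟨hgW, hhW⟩)]
        show 0 + -W.b (g + n) (h + n) = -T.b g h
        have : W.b (g + n) (h + n) = T.b g h := by
          show T.b (g + n - n) (h + n - n) = T.b g h
          simp only [Nat.add_sub_cancel]
        rw [this]; ring
      rw [e1, e2, e3, e4]
      ring
    intro i j
    exact key _ (e.symm i).2 _ (e.symm j).2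
  exact ⟨T, W, hT, hWbm, bmIso_refl T, shiftBM_iso T n, hdisj, T.G.card, lam, hfill, hzero⟩

end TuraevAux
namespace TuraevAux

open Finsupp Finset

set_option linter.unusedSectionVars false
set_option maxHeartbeats 1000000

variable {R : Type*} [CommRing R] [IsDomain R]

lemma shortVec_transfer {L L' : List (PreBM R)} {x : ℕ →₀ R}
    (hG : allG L ⊆ allG L') (hspan : sSpan L = sSpan L')
    (hbase : ∀ T' ∈ L', ∃ T ∈ L, T'.s = T.s)
    (h : ShortVec L x) : ShortVec L' x := by
  rcases h with h | ⟨g, hg, hbs, h⟩ | ⟨g, hg, h', hh', hne, hbs, h⟩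
  · left; exact hspan ▸ h
  · right; left
    refine ⟨g, hG hg, ?_, hspan ▸ h⟩
    intro T' hT'; obtain ⟨T, hT, hss⟩ := hbase T' hT'; rw [hss]; exact hbs T hT
  · right; right
    refine ⟨g, hG hg, h', hG hh', hne, ?_, hspan ▸ h⟩
    intro T' hT'; obtain ⟨T, hT, hss⟩ := hbase T' hT'; rw [hss]; exact hbs T hT

lemma zfill_ext_right {A B B₂ : PreBM R} (hA : IsBM A) (hB : IsBM B) (hB₂ : IsBM B₂)
    (hdisj : Disjoint A.G B.G) (hdisj₂ : Disjoint A.G B₂.G)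
    (hext : UExt B B₂) (hz : ZFill A (negBM B)) : ZFill A (negBM B₂) := by
  classical
  obtain ⟨hs, N, c, ⟨hleg, hsN, hNG, hrel⟩, hdisjN, hG, hagree⟩ := hext
  obtain ⟨k, lam, ⟨hshort, ⟨i₀, hi₀⟩, hsum⟩, hzero⟩ := hz
  set L : List (PreBM R) := [A, negBM B] with hL
  set L' : List (PreBM R) := [A, negBM B₂] with hL'
  have hBsub : B.G ⊆ B₂.G := by rw [hG]; exact Finset.subset_union_left
  have hNB₂ : N ⊆ B₂.G := by rw [hG]; exact Finset.subset_union_right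
  have hB₂s : B₂.s = B.s := hs
  have hBs_inB₂ : B.s ∈ B₂.G := hB₂s ▸ hB₂.1
  have hspan : sSpan L = sSpan L' :=
    (sSpan_pair_congr rfl (show (negBM B₂).s = (negBM B).s from hB₂s)).symm
  have hallGL : allG L = A.G ∪ B.G := by rw [hL, allG_pair, negBM_G]
  have hallGL' : allG L' = A.G ∪ B₂.G := by rw [hL', allG_pair, negBM_G]
  have hallG : allG L' = allG L ∪ N := by
    rw [hallGL, hallGL', hG, Finset.union_assoc]
  have hGsub : allG L ⊆ allG L' := by rw [hallG]; exact Finset.subset_union_left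
  have hbase : ∀ T' ∈ L', ∃ T ∈ L, T'.s = T.s := by
    intro T' hT'
    rw [hL'] at hT'
    rcases List.mem_cons.mp hT' with hTA | hT'
    · exact ⟨A, by rw [hL]; exact List.mem_cons_self, by rw [hTA]⟩
    · have hTB : T' = negBM B₂ := by simpa using hT'
      refine ⟨negBM B, by rw [hL]; exact List.mem_cons_of_mem _ (List.mem_cons_self), ?_⟩
      rw [hTB]
      exact hB₂s
  have hss : ∀ T ∈ L, T.s ∈ T.G := by
    intro T hT
    rw [hL] at hT
    rcases List.mem_cons.mp hT with rfl | hT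
    · exact hA.1
    · have : T = negBM B := by simpa using hT
      subst this; exact hB.1
  have hsupp : ∀ i, (lam i).support ⊆ allG L := fun i =>
    shortVec_support_subset hss (hshort i)
  have hNnotA : ∀ g ∈ N, g ∉ A.G := fun g hg hc =>
    Finset.disjoint_left.mp hdisj₂ hc (hNB₂ hg)
  have hAnotB₂ : ∀ g ∈ A.G, g ∉ B₂.G := fun g hg => Finset.disjoint_left.mp hdisj₂ hg
  -- Fc agreement
  have hFc : ∀ g ∈ allG L, ∀ h ∈ allG L, Fc L g h = Fc L' g h := by
    intro g hg h hh
    rw [hL, hL', Fc_pair, Fc_pair]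
    congr 1
    by_cases hgB : g ∈ B.G <;> by_cases hhB : h ∈ B.G
    · rw [if_pos (⟨hgB, hhB⟩ : g ∈ (negBM B).G ∧ h ∈ (negBM B).G),
        if_pos (⟨hBsub hgB, hBsub hhB⟩ : g ∈ (negBM B₂).G ∧ h ∈ (negBM B₂).G)]
      show -B.b g h = -B₂.b g h
      rw [hagree g hgB h hhB]
    · have hhA : h ∈ A.G := by
        rcases Finset.mem_union.mp (hallGL ▸ hh) with h' | h'
        · exact h'
        · exact absurd h' hhB
      rw [if_neg (fun hc : g ∈ (negBM B).G ∧ h ∈ (negBM B).G => hhB hc.2),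
        if_neg (fun hc : g ∈ (negBM B₂).G ∧ h ∈ (negBM B₂).G => hAnotB₂ h hhA hc.2)]
    · have hgA : g ∈ A.G := by
        rcases Finset.mem_union.mp (hallGL ▸ hg) with h' | h'
        · exact h'
        · exact absurd h' hgB
      rw [if_neg (fun hc : g ∈ (negBM B).G ∧ h ∈ (negBM B).G => hgB hc.1),
        if_neg (fun hc : g ∈ (negBM B₂).G ∧ h ∈ (negBM B₂).G => hAnotB₂ g hgA hc.1)]
    · have hgA : g ∈ A.G := by
        rcases Finset.mem_union.mp (hallGL ▸ hg) with h' | h'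
        · exact h'
        · exact absurd h' hgB
      rw [if_neg (fun hc : g ∈ (negBM B).G ∧ h ∈ (negBM B).G => hgB hc.1),
        if_neg (fun hc : g ∈ (negBM B₂).G ∧ h ∈ (negBM B₂).G => hAnotB₂ g hgA hc.1)]
  have hblock : ∀ v w : ℕ →₀ R, v.support ⊆ allG L → w.support ⊆ allG L →
      blockB L' v w = blockB L v w := fun v w hv hw =>
    (blockB_congr (fun g hg h hh => hFc g (hv hg) h (hw hh))).symm
  -- the new vector
  set σ : ℕ →₀ R := Finsupp.single B.s 1 with hσ
  set ρ : ℕ →₀ R := (∑ g ∈ N, Finsupp.single g 1) - c • σ with hρ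
  have hσmem : σ ∈ sSpan L' := by
    have h0 := single_s_right_mem A (negBM B₂)
    rw [negBM_s, hB₂s] at h0
    rw [hL']
    exact h0
  -- key orthogonality relation
  have hkey : ∀ h ∈ allG L', (∑ g ∈ N, Fc L' g h) = c * Fc L' B.s h := by
    intro h hh
    by_cases hhB₂ : h ∈ B₂.G
    · have step : ∀ g ∈ N, Fc L' g h = -B₂.b g h := by
        intro g hg
        rw [hL', Fc_pair, if_neg (fun hc : g ∈ A.G ∧ h ∈ A.G => hNnotA g hg hc.1),
          if_pos (⟨hNB₂ hg, hhB₂⟩ : g ∈ (negBM B₂).G ∧ h ∈ (negBM B₂).G)]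
        show 0 + -B₂.b g h = -B₂.b g h
        ring
      have hFs : Fc L' B.s h = -B₂.b B₂.s h := by
        rw [hL', Fc_pair,
          if_neg (fun hc : B.s ∈ A.G ∧ h ∈ A.G => hAnotB₂ B.s hc.1 hBs_inB₂),
          if_pos (⟨hBs_inB₂, hhB₂⟩ : B.s ∈ (negBM B₂).G ∧ h ∈ (negBM B₂).G)]
        show 0 + -B₂.b B.s h = -B₂.b B₂.s h
        rw [hB₂s]; ring
      rw [Finset.sum_congr rfl step, hFs]
      have hsneg : ∑ g ∈ N, -B₂.b g h = -(∑ g ∈ N, B₂.b g h) := by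
        rw [← Finset.sum_neg_distrib]
      rw [hsneg, hrel h hhB₂]
      ring
    · have hstep : ∀ g ∈ N, Fc L' g h = 0 := by
        intro g hg
        rw [hL', Fc_pair, if_neg (fun hc : g ∈ A.G ∧ h ∈ A.G => hNnotA g hg hc.1),
          if_neg (fun hc : g ∈ (negBM B₂).G ∧ h ∈ (negBM B₂).G => hhB₂ hc.2)]
        ring
      have hFs : Fc L' B.s h = 0 := by
        rw [hL', Fc_pair,
          if_neg (fun hc : B.s ∈ A.G ∧ h ∈ A.G => hAnotB₂ B.s hc.1 hBs_inB₂),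
          if_neg (fun hc : B.s ∈ (negBM B₂).G ∧ h ∈ (negBM B₂).G => hhB₂ hc.2)]
        ring
      rw [Finset.sum_congr rfl hstep, hFs]
      simp
  -- rho rows vanish
  have hrow : ∀ v : ℕ →₀ R, v.support ⊆ allG L → blockB L' ρ v = 0 := by
    intro v hv
    have hv' : v.support ⊆ allG L' := hv.trans hGsub
    rw [hρ, blockB_sub_left, blockB_smul_left, blockB_sum_left]
    have h1 : ∀ g ∈ N, blockB L' (Finsupp.single g 1) v
        = ∑ h ∈ allG L', v h * Fc L' g h :=
      fun g _ => blockB_single_left L' hv' g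
    rw [Finset.sum_congr rfl h1, blockB_single_left L' hv' B.s, Finset.sum_comm,
      Finset.mul_sum, ← Finset.sum_sub_distrib]
    apply Finset.sum_eq_zero
    intro h hh
    rw [← Finset.mul_sum, hkey h hh]
    ring
  -- shortness of rho
  have hρbase : ∀ g ∈ N, ∀ T' ∈ L', g ≠ T'.s := by
    intro g hg T' hT'
    rw [hL'] at hT'
    rcases List.mem_cons.mp hT' with rfl | hT'
    · intro he
      exact hNnotA g hg (he ▸ hA.1)
    · have : T' = negBM B₂ := by simpa using hT'
      subst this
      show g ≠ B₂.s
      intro he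
      exact hsN (he ▸ hg)
  have hρshort : ShortVec L' ρ := by
    rcases hleg with ⟨h1, _⟩ | ⟨h2, _⟩
    · obtain ⟨g, rfl⟩ := Finset.card_eq_one.mp h1
      right; left
      refine ⟨g, ?_, hρbase g (Finset.mem_singleton_self g), ?_⟩
      · rw [hallG]
        exact Finset.mem_union_right _ (Finset.mem_singleton_self g)
      · have : ρ - Finsupp.single g 1 = -(c • σ) := by
          rw [hρ, Finset.sum_singleton]; abel
        rw [this]
        exact Submodule.neg_mem _ (Submodule.smul_mem _ _ hσmem)
    · obtain ⟨g₁, g₂, hne, rfl⟩ := Finset.card_eq_two.mp h2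
      right; right
      have hg₁ : g₁ ∈ ({g₁, g₂} : Finset ℕ) := Finset.mem_insert_self _ _
      have hg₂ : g₂ ∈ ({g₁, g₂} : Finset ℕ) :=
        Finset.mem_insert_of_mem (Finset.mem_singleton_self _)
      refine ⟨g₁, ?_, g₂, ?_, hne, ?_, ?_⟩
      · rw [hallG]; exact Finset.mem_union_right _ hg₁
      · rw [hallG]; exact Finset.mem_union_right _ hg₂
      · exact fun T' hT' => ⟨hρbase g₁ hg₁ T' hT', hρbase g₂ hg₂ T' hT'⟩
      · have : ρ - Finsupp.single g₁ 1 - Finsupp.single g₂ 1 = -(c • σ) := by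
          rw [hρ, Finset.sum_pair hne]; abel
        rw [this]
        exact Submodule.neg_mem _ (Submodule.smul_mem _ _ hσmem)
  -- assemble the new filling
  set lam' : Fin (k+1) → (ℕ →₀ R) := Fin.snoc lam ρ with hlam'
  suffices hZ : IsFilling L' lam' ∧
      ∀ i j : Fin (k+1), blockB L' (lam' i) (lam' j) = 0 by
    exact ⟨k + 1, lam', hZ.1, hZ.2⟩
  refine ⟨⟨?_, ?_, ?_⟩, ?_⟩
  · intro i
    refine Fin.lastCases ?_ (fun j => ?_) i
    · rw [hlam', Fin.snoc_last]
      exact hρshort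
    · rw [hlam', Fin.snoc_castSucc]
      exact shortVec_transfer hGsub hspan hbase (hshort j)
  · refine ⟨i₀.castSucc, ?_⟩
    rw [hlam', Fin.snoc_castSucc, hi₀, hL, hL', sVec_pair, sVec_pair, negBM_s, negBM_s, hB₂s]
  · rw [Fin.sum_univ_castSucc]
    simp only [hlam', Fin.snoc_castSucc, Fin.snoc_last]
    have hNdisj : Disjoint (allG L) N := by
      rw [Finset.disjoint_left]
      intro x hx hxN
      rcases Finset.mem_union.mp (hallGL ▸ hx) with h' | h'
      · exact hNnotA x hxN h'
      · exact Finset.disjoint_left.mp hdisjN hxN h'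
    rw [hallG, Finset.sum_union hNdisj]
    have expand : ((∑ i, lam i) + ρ)
        - ((∑ g ∈ allG L, Finsupp.single g (1:R)) + ∑ g ∈ N, Finsupp.single g 1)
        = ((∑ i, lam i) - ∑ g ∈ allG L, Finsupp.single g (1:R)) + (-(c • σ)) := by
      rw [hρ]; abel
    rw [expand]
    exact Submodule.add_mem _ (hspan ▸ hsum)
      (Submodule.neg_mem _ (Submodule.smul_mem _ _ hσmem))
  · intro i j
    have hLbm : ∀ T ∈ L', IsBM T := by
      intro T hT
      rw [hL'] at hT
      rcases List.mem_cons.mp hT with rfl | hT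
      · exact hA
      · have : T = negBM B₂ := by simpa using hT
        subst this; exact negBM_isBM hB₂
    refine Fin.lastCases ?_ (fun i' => ?_) i
    · refine Fin.lastCases ?_ (fun j' => ?_) j
      · rw [hlam', Fin.snoc_last]
        exact blockB_self L' hLbm ρ
      · rw [hlam', Fin.snoc_last, Fin.snoc_castSucc]
        exact hrow _ (hsupp j')
    · refine Fin.lastCases ?_ (fun j' => ?_) j
      · rw [hlam', Fin.snoc_castSucc, Fin.snoc_last, blockB_skew L' hLbm, hrow _ (hsupp i')]
        ring
      · rw [hlam', Fin.snoc_castSucc, Fin.snoc_castSucc, hblock _ _ (hsupp i') (hsupp j')]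
        exact hzero i' j'

end TuraevAux
namespace TuraevAux

open Finsupp Finset

set_option linter.unusedSectionVars false
set_option maxHeartbeats 1000000

variable {R : Type*} [CommRing R] [IsDomain R]

lemma negBM_b (T : PreBM R) (g h : ℕ) : (negBM T).b g h = -T.b g h := rfl

lemma zfill_swap {A B : PreBM R} (hA : IsBM A) (hB : IsBM B) (hz : ZFill A (negBM B)) :
    ZFill B (negBM A) := by
  classical
  obtain ⟨k, lam, ⟨hshort, ⟨i₀, hi₀⟩, hsum⟩, hzero⟩ := hz
  have hallG : allG [B, negBM A] = allG [A, negBM B] := by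
    rw [allG_pair, allG_pair, negBM_G, negBM_G, Finset.union_comm]
  have hspan : sSpan [A, negBM B] = sSpan [B, negBM A] := by
    rw [sSpan_pair, sSpan_pair, negBM_s, negBM_s, Set.pair_comm]
  have hsvec : sVec [B, negBM A] = sVec [A, negBM B] := by
    rw [sVec_pair, sVec_pair, negBM_s, negBM_s, add_comm]
  have hbase : ∀ T' ∈ [B, negBM A], ∃ T ∈ [A, negBM B], T'.s = T.s := by
    intro T' hT'
    rcases List.mem_cons.mp hT' with hTB | hT'
    · refine ⟨negBM B, List.mem_cons_of_mem _ (List.mem_cons_self), ?_⟩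
      rw [hTB, negBM_s]
    · have hTA : T' = negBM A := by simpa using hT'
      refine ⟨A, List.mem_cons_self, ?_⟩
      rw [hTA, negBM_s]
  have hFcneg : ∀ g h : ℕ, Fc [B, negBM A] g h = -Fc [A, negBM B] g h := by
    intro g h
    rw [Fc_pair, Fc_pair]
    simp only [negBM_G, negBM_b]
    by_cases h1 : g ∈ A.G ∧ h ∈ A.G <;> by_cases h2 : g ∈ B.G ∧ h ∈ B.G <;>
      simp only [h1, h2, and_self, ↓reduceIte] <;> ring
  have hbneg : ∀ v w : ℕ →₀ R, blockB [B, negBM A] v w = -blockB [A, negBM B] v w := by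
    intro v w
    rw [blockB_def, blockB_def, ← Finset.sum_neg_distrib]
    refine Finset.sum_congr rfl fun g _ => ?_
    rw [← Finset.sum_neg_distrib]
    refine Finset.sum_congr rfl fun h _ => ?_
    rw [hFcneg]; ring
  refine ⟨k, lam, ⟨?_, ?_, ?_⟩, ?_⟩
  · intro i
    exact shortVec_transfer (le_of_eq hallG.symm) hspan hbase (hshort i)
  · exact ⟨i₀, by rw [hi₀, hsvec]⟩
  · rw [hallG, ← hspan]
    exact hsum
  · intro i j
    rw [hbneg, hzero i j]
    ring

lemma cob2_symm {A B : PreBM R} (h : Cob2 A B) : Cob2 B A := by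
  obtain ⟨A', B', h1, h2, h3, h4, h5, hz⟩ := h
  exact ⟨B', A', h2, h1, h4, h3, h5.symm, zfill_swap h1 h2 hz⟩

def LeI : PreBM R → PreBM R → Prop :=
  Relation.ReflTransGen fun T T' => StepExt T T' ∨ (IsBM T ∧ IsBM T' ∧ BMIso T T')

lemma cob2_of_le_right {A B C : PreBM R} (h : LeI B C) (hc : Cob2 A B) : Cob2 A C := by
  induction h with
  | refl => exact hc
  | tail hBC hstep ih =>
    rcases hstep with hse | ⟨hX, hY, hiso⟩
    · obtain ⟨hX, hY, hext⟩ := uExt_of_stepExt hse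
      obtain ⟨A₀, B₀, hA₀, hB₀, hisoA, hisoB, hdisj, hz⟩ := ih
      obtain ⟨B₂', hB₂', hext', hiso', hfresh⟩ :=
        uExt_transport_base hX hY hB₀ hext hisoB A₀.G
      have hdisj₂ : Disjoint A₀.G B₂'.G := by
        rw [Finset.disjoint_left]
        intro x hx hx'
        rcases hfresh x hx' with h' | h'
        · exact Finset.disjoint_left.mp hdisj hx h'
        · exact h' hx
      exact ⟨A₀, B₂', hA₀, hB₂', hisoA, hiso', hdisj₂,
        zfill_ext_right hA₀ hB₀ hB₂' hdisj hdisj₂ hext' hz⟩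
    · obtain ⟨A₀, B₀, hA₀, hB₀, hisoA, hisoB, hdisj, hz⟩ := ih
      exact ⟨A₀, B₀, hA₀, hB₀, hisoA, bmIso_trans (bmIso_symm hX hiso) hisoB, hdisj, hz⟩

lemma cob2_of_le_left {A B C : PreBM R} (h : LeI A C) (hc : Cob2 A B) : Cob2 C B :=
  cob2_symm (cob2_of_le_right h (cob2_symm hc))

end TuraevAux
namespace TuraevAux

open Finsupp Finset

set_option linter.unusedSectionVars false
set_option maxHeartbeats 1000000

variable {R : Type*} [CommRing R] [IsDomain R]

lemma bmIso_card {X U : PreBM R} (h : BMIso X U) : X.G.card = U.G.card := by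
  obtain ⟨f, hf, _, _⟩ := h
  have himg : U.G = X.G.image f := by
    ext y
    constructor
    · intro hy
      obtain ⟨x, hx, rfl⟩ := hf.surjOn (by exact_mod_cast hy : (y:ℕ) ∈ (U.G : Set ℕ))
      exact Finset.mem_image_of_mem f (by exact_mod_cast hx)
    · intro hy
      obtain ⟨x, hx, rfl⟩ := Finset.mem_image.mp hy
      exact_mod_cast hf.mapsTo (by exact_mod_cast hx)
  rw [himg, Finset.card_image_of_injOn
    (fun a ha b hb hab => hf.injOn (by exact_mod_cast ha) (by exact_mod_cast hb) hab)]

lemma bmIso_restrict_base {C W : PreBM R} (hext : UExt C W) :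
    BMIso (restrictBM W C.G) C := by
  obtain ⟨hs, N, c, _, _, _, hagree⟩ := hext
  exact ⟨id, Set.bijOn_id _, hs, fun g hg h hh => (hagree g hg h hh).symm⟩

lemma uExt_restrict {W : PreBM R} {N : Finset ℕ} {c : R} (h : URel W N c) :
    UExt (restrictBM W (W.G \ N)) W := by
  refine ⟨rfl, N, c, h, Finset.sdiff_disjoint.symm, ?_, fun _ _ _ _ => rfl⟩
  show W.G = W.G \ N ∪ N
  rw [Finset.sdiff_union_of_subset h.2.2.1]

def EChain : PreBM R → PreBM R → Prop :=
  Relation.ReflTransGen fun T W => IsBM T ∧ IsBM W ∧ UExt T W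

lemma leI_of_iso {X Y : PreBM R} (hX : IsBM X) (hY : IsBM Y) (h : BMIso X Y) :
    LeI X Y :=
  Relation.ReflTransGen.single (Or.inr ⟨hX, hY, h⟩)

lemma leI_of_uext {X Y : PreBM R} (hX : IsBM X) (hY : IsBM Y) (h : UExt X Y) :
    LeI X Y :=
  Relation.ReflTransGen.single (Or.inl (stepExt_of_uExt hX hY h))

lemma leI_of_eChain {X Y : PreBM R} (h : EChain X Y) : LeI X Y :=
  by
  induction h with
  | refl => exact Relation.ReflTransGen.refl
  | tail _ hab ih => exact Relation.ReflTransGen.tail ih (Or.inl (stepExt_of_uExt hab.1 hab.2.1 hab.2.2))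

lemma leI_normalize {V U : PreBM R} (hV : IsBM V) (h : LeI V U) :
    IsBM U → ∃ X, IsBM X ∧ EChain V X ∧ BMIso X U := by
  induction h with
  | refl => exact fun _ => ⟨V, hV, Relation.ReflTransGen.refl, bmIso_refl V⟩
  | tail hp hstep ih =>
    intro hU
    rcases hstep with hse | ⟨hC, hU', hiso⟩
    · obtain ⟨hC, hU'', hext⟩ := uExt_of_stepExt hse
      obtain ⟨X, hX, hchain, hisoXC⟩ := ih hC
      obtain ⟨U', hU', hext', hiso', _⟩ :=
        uExt_transport_base hC hU'' hX hext (bmIso_symm hX hisoXC) ∅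
      exact ⟨U', hU', hchain.tail ⟨hX, hU', hext'⟩, bmIso_symm hU'' hiso'⟩
    · obtain ⟨X, hX, hchain, hisoXC⟩ := ih hC
      exact ⟨X, hX, hchain, bmIso_trans hisoXC hiso⟩

end TuraevAux
namespace TuraevAux

open Finsupp Finset

set_option linter.unusedSectionVars false
set_option maxHeartbeats 1000000

variable {R : Type*} [CommRing R] [IsDomain R]

lemma pair_other {u v a : ℕ} (hne : u ≠ v) (ha : a ∈ ({u, v} : Finset ℕ)) :
    ∃ x, x ≠ a ∧ ({u, v} : Finset ℕ) = {a, x} := by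
  rcases Finset.mem_insert.mp ha with rfl | ha
  · exact ⟨v, Ne.symm hne, rfl⟩
  · have : a = v := Finset.mem_singleton.mp ha
    subst this
    exact ⟨u, hne, Finset.pair_comm u a⟩

lemma uRel_restrict {W : PreBM R} {S : Finset ℕ} (hS : S ⊆ W.G) {N : Finset ℕ} {c : R}
    (hu : URel W N c) (hN : N ⊆ S) : URel (restrictBM W S) N c := by
  obtain ⟨hleg, hsN, _, hrel⟩ := hu
  exact ⟨hleg, hsN, hN, fun h hh => hrel h (hS hh)⟩

lemma restrict_isBM_sdiff {W : PreBM R} (hW : IsBM W) {N : Finset ℕ} (hs : W.s ∉ N) :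
    IsBM (restrictBM W (W.G \ N)) :=
  restrictBM_isBM hW Finset.sdiff_subset (Finset.mem_sdiff.mpr ⟨hW.1, hs⟩)

lemma bmIso_swap_restrict {W : PreBM R} (hW : IsBM W) {a x y : ℕ}
    (hxW : x ∈ W.G) (hyW : y ∈ W.G) (hxy : x ≠ y) (hxa : x ≠ a) (hya : y ≠ a)
    (hsy : W.s ≠ y)
    (hrel : ∀ u ∈ W.G, W.b x u = W.b y u) :
    BMIso (restrictBM W (W.G \ {a, x})) (restrictBM W (W.G \ {a, y})) := by
  classical
  set f : ℕ → ℕ := fun z => if z = y then x else z with hf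
  have hmem₁ : ∀ z, z ∈ W.G \ ({a, x} : Finset ℕ) ↔ z ∈ W.G ∧ z ≠ a ∧ z ≠ x := by
    intro z
    simp only [Finset.mem_sdiff, Finset.mem_insert, Finset.mem_singleton, not_or]
  have hmem₂ : ∀ z, z ∈ W.G \ ({a, y} : Finset ℕ) ↔ z ∈ W.G ∧ z ≠ a ∧ z ≠ y := by
    intro z
    simp only [Finset.mem_sdiff, Finset.mem_insert, Finset.mem_singleton, not_or]
  refine ⟨f, ⟨?_, ?_, ?_⟩, ?_, ?_⟩
  · intro z hz
    have hz' := (hmem₁ z).mp (by exact_mod_cast hz)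
    by_cases hzy : z = y
    · have : f z = x := by simp [hf, hzy]
      rw [this]
      exact_mod_cast (hmem₂ x).mpr ⟨hxW, hxa, hxy⟩
    · have : f z = z := by simp [hf, hzy]
      rw [this]
      exact_mod_cast (hmem₂ z).mpr ⟨hz'.1, hz'.2.1, hzy⟩
  · intro z hz w hw hzw
    have hz' := (hmem₁ z).mp (by exact_mod_cast hz)
    have hw' := (hmem₁ w).mp (by exact_mod_cast hw)
    by_cases hzy : z = y <;> by_cases hwy : w = y
    · rw [hzy, hwy]
    · simp only [hf, if_pos hzy, if_neg hwy] at hzw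
      exact absurd hzw.symm hw'.2.2
    · simp only [hf, if_neg hzy, if_pos hwy] at hzw
      exact absurd hzw hz'.2.2
    · simpa [hf, hzy, hwy] using hzw
  · intro w hw
    have hw' := (hmem₂ w).mp (by exact_mod_cast hw)
    by_cases hwx : w = x
    · refine ⟨y, ?_, ?_⟩
      · exact_mod_cast (hmem₁ y).mpr ⟨hyW, hya, Ne.symm hxy⟩
      · simp [hf, hwx]
    · refine ⟨w, ?_, ?_⟩
      · exact_mod_cast (hmem₁ w).mpr ⟨hw'.1, hw'.2.1, hwx⟩
      · simp [hf, hw'.2.2]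
  · show f W.s = W.s
    simp [hf, hsy]
  · intro g hg h hh
    have hg' := (hmem₁ g).mp hg
    have hh' := (hmem₁ h).mp hh
    show W.b (f g) (f h) = W.b g h
    by_cases hgy : g = y <;> by_cases hhy : h = y
    · simp only [hf, if_pos hgy, if_pos hhy]
      rw [hW.2.2 x hxW, hgy, hhy, hW.2.2 y hyW]
    · simp only [hf, if_pos hgy, if_neg hhy]
      rw [hgy, hrel h hh'.1]
    · simp only [hf, if_neg hgy, if_pos hhy]
      rw [hhy]
      have e1 : W.b g x = -W.b x g := hW.2.1 g hg'.1 x hxW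
      have e3 : W.b g y = -W.b y g := hW.2.1 g hg'.1 y hyW
      rw [e1, hrel g hg'.1, ← e3]
    · simp [hf, hgy, hhy]

lemma diamond_case12 {W : PreBM R} (hW : IsBM W) {a x : ℕ} {c₁ : R}
    (hu₁ : URel W {a} c₁) (hu₂ : URel W ({a, x} : Finset ℕ) 1) (hax : a ≠ x) :
    ∃ D, IsBM D ∧ LeI D (restrictBM W (W.G \ {a})) ∧
      LeI D (restrictBM W (W.G \ {a, x})) := by
  classical
  have hxW : x ∈ W.G := hu₂.2.2.1 (Finset.mem_insert_of_mem (Finset.mem_singleton_self x))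
  have hc₁' : c₁ = 0 ∨ c₁ = 1 := by
    rcases hu₁.1 with ⟨_, hc⟩ | ⟨hcard, _⟩
    · exact hc
    · rw [Finset.card_singleton] at hcard; omega
  have hrel₁ := hu₁.2.2.2
  have hrel₂ := hu₂.2.2.2
  have hrelx : ∀ u ∈ W.G, W.b x u = (1 - c₁) * W.b W.s u := by
    intro u hu
    have e1 := hrel₁ u hu
    have e2 := hrel₂ u hu
    rw [Finset.sum_singleton] at e1
    rw [Finset.sum_pair hax] at e2
    linear_combination e2 - e1
  have hsx : W.s ∉ ({x} : Finset ℕ) := by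
    intro hc
    refine hu₂.2.1 ?_
    rw [Finset.mem_singleton.mp hc]
    exact Finset.mem_insert_of_mem (Finset.mem_singleton_self x)
  have hux : URel W {x} (1 - c₁) := by
    refine ⟨Or.inl ⟨Finset.card_singleton x, ?_⟩, hsx, ?_, ?_⟩
    · rcases hc₁' with rfl | rfl
      · right; ring
      · left; ring
    · intro z hz; rw [Finset.mem_singleton.mp hz]; exact hxW
    · intro h hh; rw [Finset.sum_singleton]; exact hrelx h hh
  have hxsub : ({x} : Finset ℕ) ⊆ W.G \ {a} := by
    intro z hz
    rw [Finset.mem_singleton.mp hz]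
    exact Finset.mem_sdiff.mpr ⟨hxW, by simp [Ne.symm hax]⟩
  have hbm₁ : IsBM (restrictBM W (W.G \ {a})) := restrict_isBM_sdiff hW hu₁.2.1
  have hE : UExt (restrictBM W ((W.G \ {a}) \ {x})) (restrictBM W (W.G \ {a})) :=
    uExt_restrict (uRel_restrict Finset.sdiff_subset hux hxsub)
  have hset : (W.G \ {a}) \ {x} = W.G \ {a, x} := by
    ext z; simp [Finset.mem_sdiff]; tauto
  have hbmD : IsBM (restrictBM W (W.G \ ({a, x} : Finset ℕ))) :=
    restrict_isBM_sdiff hW hu₂.2.1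
  rw [hset] at hE
  exact ⟨restrictBM W (W.G \ ({a, x} : Finset ℕ)), hbmD,
    leI_of_uext hbmD hbm₁ hE, Relation.ReflTransGen.refl⟩

lemma diamond_case22 {W : PreBM R} (hW : IsBM W) {a x y : ℕ}
    (hu₁ : URel W ({a, x} : Finset ℕ) 1) (hu₂ : URel W ({a, y} : Finset ℕ) 1)
    (hax : a ≠ x) (hay : a ≠ y) (hxy : x ≠ y) :
    ∃ D, IsBM D ∧ LeI D (restrictBM W (W.G \ {a, x})) ∧
      LeI D (restrictBM W (W.G \ {a, y})) := by
  classical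
  have hxW : x ∈ W.G := hu₁.2.2.1 (Finset.mem_insert_of_mem (Finset.mem_singleton_self x))
  have hyW : y ∈ W.G := hu₂.2.2.1 (Finset.mem_insert_of_mem (Finset.mem_singleton_self y))
  have hrel : ∀ u ∈ W.G, W.b x u = W.b y u := by
    intro u hu
    have e1 := hu₁.2.2.2 u hu
    have e2 := hu₂.2.2.2 u hu
    rw [Finset.sum_pair hax] at e1
    rw [Finset.sum_pair hay] at e2
    linear_combination e1 - e2
  have hsy : W.s ≠ y := by
    intro hc
    refine hu₂.2.1 ?_
    rw [hc]
    exact Finset.mem_insert_of_mem (Finset.mem_singleton_self y)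
  have hbm₁ : IsBM (restrictBM W (W.G \ ({a, x} : Finset ℕ))) :=
    restrict_isBM_sdiff hW hu₁.2.1
  have hbm₂ : IsBM (restrictBM W (W.G \ ({a, y} : Finset ℕ))) :=
    restrict_isBM_sdiff hW hu₂.2.1
  exact ⟨restrictBM W (W.G \ ({a, x} : Finset ℕ)), hbm₁, Relation.ReflTransGen.refl,
    leI_of_iso hbm₁ hbm₂
      (bmIso_swap_restrict hW hxW hyW hxy (Ne.symm hax) (Ne.symm hay) hsy hrel)⟩

end TuraevAux
namespace TuraevAux

open Finsupp Finset

set_option linter.unusedSectionVars false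
set_option maxHeartbeats 1000000

variable {R : Type*} [CommRing R] [IsDomain R]

lemma diamond_disjoint {W : PreBM R} (hW : IsBM W) {N₁ N₂ : Finset ℕ} {c₁ c₂ : R}
    (hu₁ : URel W N₁ c₁) (hu₂ : URel W N₂ c₂) (hdis : Disjoint N₁ N₂) :
    ∃ D, IsBM D ∧ LeI D (restrictBM W (W.G \ N₁)) ∧
      LeI D (restrictBM W (W.G \ N₂)) := by
  classical
  have hbm₁ : IsBM (restrictBM W (W.G \ N₁)) := restrict_isBM_sdiff hW hu₁.2.1
  have hbm₂ : IsBM (restrictBM W (W.G \ N₂)) := restrict_isBM_sdiff hW hu₂.2.1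
  have hN₂sub : N₂ ⊆ W.G \ N₁ := fun z hz =>
    Finset.mem_sdiff.mpr ⟨hu₂.2.2.1 hz, fun h => Finset.disjoint_left.mp hdis h hz⟩
  have hN₁sub : N₁ ⊆ W.G \ N₂ := fun z hz =>
    Finset.mem_sdiff.mpr ⟨hu₁.2.2.1 hz, fun h => Finset.disjoint_left.mp hdis hz h⟩
  have hE₁ : UExt (restrictBM W ((W.G \ N₁) \ N₂)) (restrictBM W (W.G \ N₁)) :=
    uExt_restrict (uRel_restrict Finset.sdiff_subset hu₂ hN₂sub)
  have hE₂ : UExt (restrictBM W ((W.G \ N₂) \ N₁)) (restrictBM W (W.G \ N₂)) :=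
    uExt_restrict (uRel_restrict Finset.sdiff_subset hu₁ hN₁sub)
  have hcomm : (W.G \ N₁) \ N₂ = (W.G \ N₂) \ N₁ := by
    ext z; simp only [Finset.mem_sdiff]; tauto
  have hbmD : IsBM (restrictBM W ((W.G \ N₁) \ N₂)) := by
    refine restrictBM_isBM hW (Finset.sdiff_subset.trans Finset.sdiff_subset) ?_
    exact Finset.mem_sdiff.mpr ⟨Finset.mem_sdiff.mpr ⟨hW.1, hu₁.2.1⟩, hu₂.2.1⟩
  have hE₂' : UExt (restrictBM W ((W.G \ N₁) \ N₂)) (restrictBM W (W.G \ N₂)) := by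
    rw [hcomm]
    exact hE₂
  exact ⟨restrictBM W ((W.G \ N₁) \ N₂), hbmD,
    leI_of_uext hbmD hbm₁ hE₁, leI_of_uext hbmD hbm₂ hE₂'⟩

lemma local_diamond_restrict {W : PreBM R} (hW : IsBM W) {N₁ N₂ : Finset ℕ} {c₁ c₂ : R}
    (hu₁ : URel W N₁ c₁) (hu₂ : URel W N₂ c₂) :
    ∃ D, IsBM D ∧ LeI D (restrictBM W (W.G \ N₁)) ∧
      LeI D (restrictBM W (W.G \ N₂)) := by
  classical
  by_cases hNN : N₁ = N₂
  · subst hNN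
    exact ⟨restrictBM W (W.G \ N₁), restrict_isBM_sdiff hW hu₁.2.1,
      Relation.ReflTransGen.refl, Relation.ReflTransGen.refl⟩
  by_cases hdis : Disjoint N₁ N₂
  · exact diamond_disjoint hW hu₁ hu₂ hdis
  obtain ⟨a, haN₁, haN₂⟩ := Finset.not_disjoint_iff.mp hdis
  have hcard₁ : N₁.card = 1 ∨ N₁.card = 2 := by
    rcases hu₁.1 with ⟨h, _⟩ | ⟨h, _⟩
    · exact Or.inl h
    · exact Or.inr h
  have hcard₂ : N₂.card = 1 ∨ N₂.card = 2 := by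
    rcases hu₂.1 with ⟨h, _⟩ | ⟨h, _⟩
    · exact Or.inl h
    · exact Or.inr h
  have hc2of2 : ∀ {N : Finset ℕ} {c : R}, URel W N c → N.card = 2 → c = 1 := by
    intro N c hu hcard
    rcases hu.1 with ⟨h, _⟩ | ⟨_, hc⟩
    · omega
    · exact hc
  rcases hcard₁ with h1 | h1 <;> rcases hcard₂ with h2 | h2
  · -- (1,1) : same singleton, contradiction with hNN
    obtain ⟨b₁, hb₁⟩ := Finset.card_eq_one.mp h1
    obtain ⟨b₂, hb₂⟩ := Finset.card_eq_one.mp h2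
    exfalso
    apply hNN
    rw [hb₁] at haN₁
    rw [hb₂] at haN₂
    rw [hb₁, hb₂, ← Finset.mem_singleton.mp haN₁, ← Finset.mem_singleton.mp haN₂]
  · -- (1,2)
    obtain ⟨b, hb⟩ := Finset.card_eq_one.mp h1
    subst hb
    have hab : a = b := Finset.mem_singleton.mp haN₁
    subst hab
    obtain ⟨u, v, huv, hN₂⟩ := Finset.card_eq_two.mp h2
    subst hN₂
    obtain ⟨x, hxa, hpair⟩ := pair_other huv haN₂
    rw [hpair] at hu₂ ⊢
    have hc₂ : c₂ = 1 := hc2of2 hu₂ (by rw [Finset.card_pair (Ne.symm hxa)])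
    subst hc₂
    exact diamond_case12 hW hu₁ hu₂ (Ne.symm hxa)
  · -- (2,1)
    obtain ⟨b, hb⟩ := Finset.card_eq_one.mp h2
    subst hb
    have hab : a = b := Finset.mem_singleton.mp haN₂
    subst hab
    obtain ⟨u, v, huv, hN₁⟩ := Finset.card_eq_two.mp h1
    subst hN₁
    obtain ⟨x, hxa, hpair⟩ := pair_other huv haN₁
    rw [hpair] at hu₁ ⊢
    have hc₁ : c₁ = 1 := hc2of2 hu₁ (by rw [Finset.card_pair (Ne.symm hxa)])
    subst hc₁
    obtain ⟨D, hD, hL₁, hL₂⟩ := diamond_case12 hW hu₂ hu₁ (Ne.symm hxa)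
    exact ⟨D, hD, hL₂, hL₁⟩
  · -- (2,2)
    obtain ⟨u₁, v₁, huv₁, hN₁⟩ := Finset.card_eq_two.mp h1
    subst hN₁
    obtain ⟨u₂, v₂, huv₂, hN₂⟩ := Finset.card_eq_two.mp h2
    subst hN₂
    obtain ⟨x, hxa, hpair₁⟩ := pair_other huv₁ haN₁
    obtain ⟨y, hya, hpair₂⟩ := pair_other huv₂ haN₂
    rw [hpair₁] at hu₁ ⊢
    rw [hpair₂] at hu₂ ⊢
    have hc₁ : c₁ = 1 := hc2of2 hu₁ (by rw [Finset.card_pair (Ne.symm hxa)])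
    have hc₂ : c₂ = 1 := hc2of2 hu₂ (by rw [Finset.card_pair (Ne.symm hya)])
    subst hc₁; subst hc₂
    have hxy : x ≠ y := by
      intro he
      subst he
      exact hNN (hpair₁.trans hpair₂.symm)
    exact diamond_case22 hW hu₁ hu₂ (Ne.symm hxa) (Ne.symm hya) hxy

lemma local_diamond {C₁ C₂ W : PreBM R} (hC₁ : IsBM C₁) (hC₂ : IsBM C₂) (hW : IsBM W)
    (h₁ : UExt C₁ W) (h₂ : UExt C₂ W) :
    ∃ D, IsBM D ∧ LeI D C₁ ∧ LeI D C₂ := by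
  classical
  have h₁' := h₁
  have h₂' := h₂
  obtain ⟨hs₁, N₁, c₁, hu₁, hdj₁, hG₁, hag₁⟩ := h₁'
  obtain ⟨hs₂, N₂, c₂, hu₂, hdj₂, hG₂, hag₂⟩ := h₂'
  have hC₁G : C₁.G = W.G \ N₁ := by
    rw [hG₁]
    ext z
    simp only [Finset.mem_sdiff, Finset.mem_union]
    constructor
    · intro hz
      exact ⟨Or.inl hz, fun hN => Finset.disjoint_left.mp hdj₁ hN hz⟩
    · rintro ⟨hz | hz, hz'⟩
      · exact hz
      · exact absurd hz hz'
  have hC₂G : C₂.G = W.G \ N₂ := by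
    rw [hG₂]
    ext z
    simp only [Finset.mem_sdiff, Finset.mem_union]
    constructor
    · intro hz
      exact ⟨Or.inl hz, fun hN => Finset.disjoint_left.mp hdj₂ hN hz⟩
    · rintro ⟨hz | hz, hz'⟩
      · exact hz
      · exact absurd hz hz'
  have iso₁ : BMIso (restrictBM W (W.G \ N₁)) C₁ := by
    rw [← hC₁G]; exact bmIso_restrict_base h₁
  have iso₂ : BMIso (restrictBM W (W.G \ N₂)) C₂ := by
    rw [← hC₂G]; exact bmIso_restrict_base h₂
  have hbm₁ : IsBM (restrictBM W (W.G \ N₁)) := restrict_isBM_sdiff hW hu₁.2.1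
  have hbm₂ : IsBM (restrictBM W (W.G \ N₂)) := restrict_isBM_sdiff hW hu₂.2.1
  obtain ⟨D, hD, hL₁, hL₂⟩ := local_diamond_restrict hW hu₁ hu₂
  exact ⟨D, hD, hL₁.trans (leI_of_iso hbm₁ hC₁ iso₁),
    hL₂.trans (leI_of_iso hbm₂ hC₂ iso₂)⟩

end TuraevAux
namespace TuraevAux

open Finsupp Finset

set_option linter.unusedSectionVars false
set_option maxHeartbeats 1000000

variable {R : Type*} [CommRing R] [IsDomain R]

lemma amalg : ∀ (n : ℕ) {U U' V V' : PreBM R}, U.G.card = n → IsBM U → IsBM U' →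
    IsBM V → IsBM V' → BMIso U U' → LeI V U → LeI V' U' →
    ∃ Z, IsBM Z ∧ LeI Z V ∧ LeI Z V' := by
  intro n
  induction n using Nat.strong_induction_on with
  | _ n ih =>
    intro U U' V V' hcard hU hU' hV hV' hiso hLe hLe'
    obtain ⟨X, hX, hch, hisoXU⟩ := leI_normalize hV hLe hU
    obtain ⟨X', hX', hch', hisoX'U'⟩ := leI_normalize hV' hLe' hU'
    have hisoXX' : BMIso X X' :=
      bmIso_trans hisoXU (bmIso_trans hiso (bmIso_symm hX' hisoX'U'))
    rcases Relation.ReflTransGen.cases_tail hch with hXV | ⟨C₁, hchC₁, hstep₁⟩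
    · subst hXV
      refine ⟨V', hV', ?_, Relation.ReflTransGen.refl⟩
      exact (leI_of_eChain hch').trans
        (leI_of_iso hX' hX (bmIso_symm hX hisoXX'))
    rcases Relation.ReflTransGen.cases_tail hch' with hX'V' | ⟨C₂, hchC₂, hstep₂⟩
    · subst hX'V'
      refine ⟨V, hV, Relation.ReflTransGen.refl, ?_⟩
      exact (leI_of_eChain hch).trans (leI_of_iso hX hX' hisoXX')
    · obtain ⟨hC₁bm, hXbm', hext₁⟩ := hstep₁
      obtain ⟨hC₂bm, hX'bm', hext₂⟩ := hstep₂
      obtain ⟨C₂'', hC₂'', hext₂'', hisoC₂⟩ :=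
        uExt_transport_top hC₂bm hX hext₂ (bmIso_symm hX hisoXX')
      obtain ⟨D, hD, hLD₁, hLD₂⟩ := local_diamond hC₁bm hC₂'' hX hext₁ hext₂''
      have hcardX : X.G.card = n := by rw [← hcard]; exact bmIso_card hisoXU
      have hlt₁ : C₁.G.card < n := by
        have := uExt_card_lt hext₁; omega
      have hlt₂ : C₂''.G.card < n := by
        have := uExt_card_lt hext₂''; omega
      obtain ⟨Z₁, hZ₁, hZ₁V, hZ₁D⟩ := ih _ hlt₁ rfl hC₁bm hC₁bm hV hD (bmIso_refl C₁)
        (leI_of_eChain hchC₁) hLD₁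
      obtain ⟨Z, hZ, hZZ₁, hZV'⟩ := ih _ hlt₂ rfl hC₂'' hC₂'' hZ₁ hV' (bmIso_refl _)
        (hZ₁D.trans hLD₂)
        ((leI_of_eChain hchC₂).trans (leI_of_iso hC₂bm hC₂'' hisoC₂))
      exact ⟨Z, hZ, hZZ₁.trans hZ₁V, hZV'⟩

lemma common_ancestor {T U : PreBM R} (h : Homologous T U) :
    T = U ∨ (IsBM T ∧ IsBM U ∧ ∃ V, IsBM V ∧ LeI V T ∧ LeI V U) := by
  induction h with
  | rel X Y hr =>
    right
    have hXY : IsBM X ∧ IsBM Y := by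
      rcases hr with h | h
      · exact ⟨h.1, h.2.1⟩
      · exact ⟨h.1, h.2.1⟩
    exact ⟨hXY.1, hXY.2, X, hXY.1, Relation.ReflTransGen.refl,
      Relation.ReflTransGen.single hr⟩
  | refl X => exact Or.inl rfl
  | symm X Y _ ih =>
    rcases ih with rfl | ⟨h1, h2, V, hV, hL1, hL2⟩
    · exact Or.inl rfl
    · exact Or.inr ⟨h2, h1, V, hV, hL2, hL1⟩
  | trans X Y Z _ _ ih₁ ih₂ =>
    rcases ih₁ with rfl | ⟨h1, h2, V₁, hV₁, hL11, hL12⟩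
    · exact ih₂
    · rcases ih₂ with rfl | ⟨h2', h3, V₂, hV₂, hL21, hL22⟩
      · exact Or.inr ⟨h1, h2, V₁, hV₁, hL11, hL12⟩
      · right
        obtain ⟨Z₀, hZ₀, hZ₀₁, hZ₀₂⟩ :=
          amalg Y.G.card rfl h2 h2' hV₁ hV₂ (bmIso_refl Y) hL12 hL21
        exact ⟨h1, h3, Z₀, hZ₀, hZ₀₁.trans hL11, hZ₀₂.trans hL22⟩

end TuraevAux
/-- Homologous based matrices over an integral domain are
cobordant. -/
theorem homologous_imp_cobordant {R : Type*} [CommRing R] [IsDomain R]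
    (T₁ T₂ : PreBM R) (h₁ : IsBM T₁) (h₂ : IsBM T₂)
    (h : Homologous T₁ T₂) : Cobordant T₁ T₂ := by
  rcases TuraevAux.common_ancestor h with rfl | ⟨_, _, V, hV, hL₁, hL₂⟩
  · exact TuraevAux.cobordant_of_cob2 (TuraevAux.cob2_refl h₁)
  · exact TuraevAux.cobordant_of_cob2
      (TuraevAux.cob2_of_le_left hL₁ (TuraevAux.cob2_of_le_right hL₂
        (TuraevAux.cob2_refl hV)))
end

section
/- A based matrix over an integral domain R is cobordant to a trivial based matrix if and only if it is hyperbolic. -/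
variable {H : Type*} [AddCommGroup H]

variable {R : Type*} [CommRing R] [IsDomain R]

section Statement14Proof

variable {R : Type*} [CommRing R] [IsDomain R]

/-- The coefficient function of `blockB`. -/
noncomputable def Fb (L : List (PreBM R)) (g h : ℕ) : R :=
  (L.map fun T => if g ∈ T.G ∧ h ∈ T.G then T.b g h else 0).sum

lemma blockB_def (L : List (PreBM R)) (v w : ℕ →₀ R) :
    blockB L v w = ∑ g ∈ v.support, ∑ h ∈ w.support, v g * w h * Fb L g h := rfl

lemma Fb_single (T : PreBM R) (g h : ℕ) :
    Fb [T] g h = if g ∈ T.G ∧ h ∈ T.G then T.b g h else 0 := by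
  simp [Fb]

lemma blockB_eq_sum (L : List (PreBM R)) {v w : ℕ →₀ R} {S S' : Finset ℕ}
    (hv : v.support ⊆ S) (hw : w.support ⊆ S') :
    blockB L v w = ∑ g ∈ S, ∑ h ∈ S', v g * w h * Fb L g h := by
  rw [blockB_def]
  rw [show (∑ g ∈ v.support, ∑ h ∈ w.support, v g * w h * Fb L g h)
        = ∑ g ∈ S, ∑ h ∈ w.support, v g * w h * Fb L g h from
    Finset.sum_subset hv fun g _ hg => Finset.sum_eq_zero fun h _ => by
      rw [Finsupp.notMem_support_iff.mp hg]; ring]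
  exact Finset.sum_congr rfl fun g _ => Finset.sum_subset hw fun h _ hh => by
    rw [Finsupp.notMem_support_iff.mp hh]; ring

lemma blockB_congr {L L' : List (PreBM R)} {v w v' w' : ℕ →₀ R}
    (h : ∀ g h', v g * w h' * Fb L g h' = v' g * w' h' * Fb L' g h') :
    blockB L v w = blockB L' v' w' := by
  rw [blockB_eq_sum L (S := v.support ∪ v'.support) (S' := w.support ∪ w'.support)
      Finset.subset_union_left Finset.subset_union_left,
    blockB_eq_sum L' (S := v.support ∪ v'.support) (S' := w.support ∪ w'.support)
      Finset.subset_union_right Finset.subset_union_right]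
  exact Finset.sum_congr rfl fun g _ => Finset.sum_congr rfl fun h' _ => h g h'

lemma tupleGenus_eq_zero {L : List (PreBM R)} {k : ℕ} {lam : Fin k → (ℕ →₀ R)}
    (hf : IsFilling L lam)
    (hr : (Matrix.of fun i j : Fin k => blockB L (lam i) (lam j)).rank / 2 = 0) :
    tupleGenus L = 0 :=
  Nat.sInf_eq_zero.mpr (Or.inl ⟨k, lam, hf, hr.symm⟩)

lemma exists_zero_filling {L : List (PreBM R)} (h0 : tupleGenus L = 0)
    {k₀ : ℕ} {lam₀ : Fin k₀ → (ℕ →₀ R)} (hne : IsFilling L lam₀) :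
    ∃ (k : ℕ) (lam : Fin k → (ℕ →₀ R)), IsFilling L lam ∧
      (Matrix.of fun i j : Fin k => blockB L (lam i) (lam j)).rank / 2 = 0 := by
  unfold tupleGenus at h0
  rcases Nat.sInf_eq_zero.mp h0 with h | h
  · obtain ⟨k, lam, hf, hr⟩ := h
    exact ⟨k, lam, hf, hr.symm⟩
  · exfalso
    have hm : ((Matrix.of fun i j : Fin k₀ => blockB L (lam₀ i) (lam₀ j)).rank / 2) ∈
        {n : ℕ | ∃ (k : ℕ) (lam : Fin k → (ℕ →₀ R)), IsFilling L lam ∧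
          n = (Matrix.of fun i j : Fin k => blockB L (lam i) (lam j)).rank / 2} :=
      ⟨k₀, lam₀, hne, rfl⟩
    rw [h] at hm
    exact hm

lemma sVec_cons (T : PreBM R) (L : List (PreBM R)) :
    sVec (T :: L) = Finsupp.single T.s 1 + sVec L := by
  simp [sVec]

lemma allG_cons (T : PreBM R) (L : List (PreBM R)) :
    allG (T :: L) = T.G ∪ allG L := rfl

lemma allG_singleton (T : PreBM R) : allG [T] = T.G := by
  show T.G ∪ ∅ = T.G
  simp

lemma sVec_singleton (T : PreBM R) : sVec [T] = Finsupp.single T.s 1 := by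
  simp [sVec]

lemma single_s_mem_sSpan {L : List (PreBM R)} {T : PreBM R} (h : T ∈ L) :
    Finsupp.single T.s (1 : R) ∈ sSpan L :=
  Submodule.subset_span ⟨T, h, rfl⟩

lemma sVec_mem_sSpan (L : List (PreBM R)) : sVec L ∈ sSpan L := by
  apply list_sum_mem
  intro x hx
  obtain ⟨T, hT, rfl⟩ := List.mem_map.mp hx
  exact single_s_mem_sSpan hT

lemma sSpan_mono {L L' : List (PreBM R)} (h : ∀ T ∈ L, T ∈ L') : sSpan L ≤ sSpan L' :=
  Submodule.span_mono (by rintro v ⟨T, hT, rfl⟩; exact ⟨T, h T hT, rfl⟩)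

lemma mem_sSpan_support {L : List (PreBM R)} {x : ℕ →₀ R} (hx : x ∈ sSpan L) :
    ∀ a ∈ x.support, ∃ T ∈ L, a = T.s := by
  classical
  refine Submodule.span_induction ?_ ?_ ?_ ?_ hx
  · rintro v ⟨T, hT, rfl⟩ a ha
    exact ⟨T, hT, Finset.mem_singleton.mp (Finsupp.support_single_subset ha)⟩
  · intro a ha
    simp at ha
  · intro x y _ _ hx hy a ha
    rcases Finset.mem_union.mp (Finsupp.support_add ha) with h | h
    · exact hx a h
    · exact hy a h
  · intro c x _ hx a ha
    exact hx a (Finsupp.support_smul ha)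

lemma shortVec_support {T' : PreBM R} (hs : T'.s ∈ T'.G) {x : ℕ →₀ R}
    (hx : ShortVec [T'] x) : x.support ⊆ T'.G := by
  classical
  have hspan : ∀ z : ℕ →₀ R, z ∈ sSpan [T'] → z.support ⊆ T'.G := by
    intro z hz a ha
    obtain ⟨T'', hT'', rfl⟩ := mem_sSpan_support hz a ha
    rw [List.mem_singleton] at hT''
    subst hT''
    exact hs
  rcases hx with h | ⟨g, hg, -, h⟩ | ⟨g, hg, h', hh', -, -, h⟩
  · exact hspan x h
  · intro a ha
    have hx' : x = (x - Finsupp.single g 1) + Finsupp.single g 1 := by abel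
    rw [hx'] at ha
    rcases Finset.mem_union.mp (Finsupp.support_add ha) with h1 | h1
    · exact hspan _ h h1
    · have hag : a = g := Finset.mem_singleton.mp (Finsupp.support_single_subset h1)
      subst hag
      rwa [allG_singleton] at hg
  · intro a ha
    have hx' : x = ((x - Finsupp.single g 1 - Finsupp.single h' 1)
        + Finsupp.single g 1) + Finsupp.single h' 1 := by abel
    rw [hx'] at ha
    rcases Finset.mem_union.mp (Finsupp.support_add ha) with h1 | h1
    · rcases Finset.mem_union.mp (Finsupp.support_add h1) with h2 | h2
      · exact hspan _ h h2
      · have hag : a = g := Finset.mem_singleton.mp (Finsupp.support_single_subset h2)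
        subst hag
        rwa [allG_singleton] at hg
    · have hah : a = h' := Finset.mem_singleton.mp (Finsupp.support_single_subset h1)
      subst hah
      rwa [allG_singleton] at hh'

lemma exists_standard_filling (L : List (PreBM R)) (hs : ∀ T ∈ L, T.s ∈ T.G) :
    ∃ (k : ℕ) (lam : Fin k → (ℕ →₀ R)), IsFilling L lam := by
  classical
  set D : Finset ℕ := (allG L).filter (fun g => ∀ T ∈ L, g ≠ T.s) with hD
  refine ⟨D.card + 1,
    Fin.cons (sVec L) (fun i => Finsupp.single ((D.equivFin.symm i : {x // x ∈ D}) : ℕ) 1),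
    ?_, ⟨0, by rw [Fin.cons_zero]⟩, ?_⟩
  · intro i
    refine Fin.cases ?_ ?_ i
    · rw [Fin.cons_zero]
      exact Or.inl (sVec_mem_sSpan L)
    · intro j
      rw [Fin.cons_succ]
      have hgD : ((D.equivFin.symm j : {x // x ∈ D}) : ℕ) ∈
          (allG L).filter (fun g => ∀ T ∈ L, g ≠ T.s) := (D.equivFin.symm j).2
      rw [Finset.mem_filter] at hgD
      refine Or.inr (Or.inl ⟨_, hgD.1, hgD.2, ?_⟩)
      rw [sub_self]
      exact Submodule.zero_mem _
  · rw [Fin.sum_cons]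
    have hsum : (∑ i : Fin D.card,
        Finsupp.single ((D.equivFin.symm i : {x // x ∈ D}) : ℕ) (1:R))
        = ∑ g ∈ D, Finsupp.single g 1 := by
      rw [← Finset.sum_coe_sort D (fun g => Finsupp.single g (1:R))]
      exact (Fintype.sum_equiv D.equivFin _ _ (fun x => by simp)).symm
    rw [hsum]
    rw [← Finset.sum_filter_add_sum_filter_not (allG L) (fun g => ∀ T ∈ L, g ≠ T.s)
      (fun g => Finsupp.single g (1:R))]
    have heq : sVec L + (∑ g ∈ D, Finsupp.single g (1:R)) -
        ((∑ g ∈ (allG L).filter (fun g => ∀ T ∈ L, g ≠ T.s), Finsupp.single g 1)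
          + ∑ g ∈ (allG L).filter (fun g => ¬ ∀ T ∈ L, g ≠ T.s), Finsupp.single g 1)
        = sVec L - ∑ g ∈ (allG L).filter (fun g => ¬ ∀ T ∈ L, g ≠ T.s),
            Finsupp.single g 1 := by
      rw [hD]; abel
    rw [heq]
    refine sub_mem (sVec_mem_sSpan L) (Submodule.sum_mem _ ?_)
    intro g hg
    rw [Finset.mem_filter] at hg
    have hg2 := hg.2
    push_neg at hg2
    obtain ⟨T'', hT'', hgs⟩ := hg2
    rw [hgs]
    exact single_s_mem_sSpan hT''

lemma genus_pair_of_genus_single {T : PreBM R} (hT : IsBM T) {s₀ : ℕ} (hs₀ : s₀ ∉ T.G)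
    (h0 : tupleGenus [T] = 0) :
    tupleGenus [T, negBM ⟨{s₀}, s₀, fun _ _ => (0:R)⟩] = 0 := by
  classical
  set M : PreBM R := negBM ⟨{s₀}, s₀, fun _ _ => (0:R)⟩ with hM
  have hMG : M.G = {s₀} := rfl
  have hMs : M.s = s₀ := rfl
  have hMb : ∀ g h, M.b g h = 0 := fun g h => by simp [hM, negBM]
  obtain ⟨k₀, lam₀, hfill₀⟩ := exists_standard_filling [T]
    (by intro T' hT'; rw [List.mem_singleton] at hT'; subst hT'; exact hT.1)
  obtain ⟨k, lam, hfill, hrank⟩ := exists_zero_filling h0 hfill₀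
  obtain ⟨i₀, hi₀⟩ := hfill.2.1
  have hle : sSpan [T] ≤ sSpan [T, M] := sSpan_mono
    (by intro T'' h''; rw [List.mem_singleton] at h''; subst h''; exact List.mem_cons_self)
  have hFb : ∀ g h, Fb [T, M] g h = Fb [T] g h := by
    intro g h
    simp [Fb, hMb]
  have hallG : allG [T, M] = T.G ∪ {s₀} := by
    rw [allG_cons, allG_singleton, hMG]
  set lam' : Fin k → (ℕ →₀ R) := fun i => if i = i₀ then sVec [T, M] else lam i with hlam'
  have hsVecL' : sVec [T, M] = sVec [T] + Finsupp.single s₀ 1 := by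
    rw [sVec_cons, sVec_singleton, sVec_singleton, hMs]
  have hlam'eq : ∀ i, lam' i = lam i + (if i = i₀ then Finsupp.single s₀ 1 else 0) := by
    intro i
    by_cases h : i = i₀
    · subst h
      simp [hlam', hsVecL', hi₀]
    · simp [hlam', h]
  have happ : ∀ i g, g ≠ s₀ → lam' i g = lam i g := by
    intro i g hgne
    rw [hlam'eq, Finsupp.add_apply]
    by_cases h : i = i₀
    · rw [if_pos h, Finsupp.single_eq_of_ne' (Ne.symm hgne), add_zero]
    · rw [if_neg h]
      simp
  refine tupleGenus_eq_zero (L := [T, M]) (lam := lam') ⟨?_, ⟨i₀, by simp [hlam']⟩, ?_⟩ ?_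
  · intro i
    by_cases h : i = i₀
    · subst h
      simp only [hlam', if_pos rfl]
      exact Or.inl (sVec_mem_sSpan [T, M])
    · simp only [hlam', if_neg h]
      rcases hfill.1 i with hsp | ⟨g, hg, hgs, hmem⟩ | ⟨g, hg, h', hh', hne, hgs, hmem⟩
      · exact Or.inl (hle hsp)
      · rw [allG_singleton] at hg
        refine Or.inr (Or.inl ⟨g, ?_, ?_, hle hmem⟩)
        · rw [hallG]; exact Finset.mem_union_left _ hg
        · intro T'' hT''
          rcases List.mem_cons.mp hT'' with he | hT''
          · rw [he]; exact hgs _ (by simp)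
          · rw [List.mem_singleton] at hT''
            subst hT''
            rw [hMs]
            intro hcon
            exact hs₀ (hcon ▸ hg)
      · rw [allG_singleton] at hg hh'
        refine Or.inr (Or.inr ⟨g, ?_, h', ?_, hne, ?_, hle hmem⟩)
        · rw [hallG]; exact Finset.mem_union_left _ hg
        · rw [hallG]; exact Finset.mem_union_left _ hh'
        · intro T'' hT''
          rcases List.mem_cons.mp hT'' with he | hT''
          · rw [he]; exact hgs _ (by simp)
          · rw [List.mem_singleton] at hT''
            subst hT''
            rw [hMs]
            constructor
            · intro hcon; exact hs₀ (hcon ▸ hg)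
            · intro hcon; exact hs₀ (hcon ▸ hh')
  · have hsum : (∑ i, lam' i) = (∑ i, lam i) + Finsupp.single s₀ 1 := by
      simp only [hlam'eq]
      rw [Finset.sum_add_distrib]
      congr 1
      rw [Finset.sum_ite_eq' Finset.univ i₀ (fun _ => Finsupp.single s₀ 1)]
      simp
    have hsum2 : (∑ g ∈ allG [T, M], Finsupp.single g (1:R))
        = (∑ g ∈ allG [T], Finsupp.single g 1) + Finsupp.single s₀ 1 := by
      rw [hallG, allG_singleton,
        Finset.sum_union (Finset.disjoint_singleton_right.mpr hs₀), Finset.sum_singleton]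
    rw [hsum, hsum2]
    have heq : (∑ i, lam i) + Finsupp.single s₀ (1:R)
        - ((∑ g ∈ allG [T], Finsupp.single g 1) + Finsupp.single s₀ 1)
        = (∑ i, lam i) - ∑ g ∈ allG [T], Finsupp.single g 1 := by abel
    rw [heq]
    exact hle hfill.2.2
  · have hmat : (Matrix.of fun i j : Fin k => blockB [T, M] (lam' i) (lam' j))
        = (Matrix.of fun i j : Fin k => blockB [T] (lam i) (lam j)) := by
      apply Matrix.ext
      intro i j
      show blockB [T, M] (lam' i) (lam' j) = blockB [T] (lam i) (lam j)
      apply blockB_congr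
      intro g h
      rw [hFb]
      by_cases hg : g = s₀
      · have h1 : Fb [T] g h = 0 := by
          rw [Fb_single, if_neg]
          intro hc
          exact hs₀ (hg ▸ hc.1)
        rw [h1]; ring
      · by_cases hh : h = s₀
        · have h1 : Fb [T] g h = 0 := by
            rw [Fb_single, if_neg]
            intro hc
            exact hs₀ (hh ▸ hc.2)
          rw [h1]; ring
        · rw [happ i g hg, happ j h hh]
    rw [hmat]
    exact hrank

lemma genus_single_of_genus_pair {A B : PreBM R} (hA : IsBM A) (hB : IsBM B)
    (hG₂ : B.G = {B.s}) (hdisj : Disjoint A.G B.G)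
    (h0 : tupleGenus [A, negBM B] = 0) : tupleGenus [A] = 0 := by
  classical
  set s₂ := B.s with hs₂def
  set M : PreBM R := negBM B with hM
  have hMG : M.G = {s₂} := hG₂
  have hMs : M.s = s₂ := rfl
  have hs₂G : s₂ ∉ A.G := fun hc => (Finset.disjoint_left.mp hdisj hc)
    (by rw [hG₂]; exact Finset.mem_singleton_self _)
  have hbss : B.b s₂ s₂ = 0 := hB.2.2 s₂ hB.1
  obtain ⟨k₀, lam₀, hfill₀⟩ := exists_standard_filling [A, M] (by
    intro T'' hT''
    rcases List.mem_cons.mp hT'' with he | hT''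
    · rw [he]; exact hA.1
    · rw [List.mem_singleton] at hT''
      subst hT''
      show M.s ∈ M.G
      rw [hMs, hMG]
      exact Finset.mem_singleton_self _)
  obtain ⟨k, lam, hfill, hrank⟩ := exists_zero_filling h0 hfill₀
  set E : (ℕ →₀ R) →ₗ[R] (ℕ →₀ R) :=
    LinearMap.id - (Finsupp.lsingle s₂).comp (Finsupp.lapply s₂) with hE
  have hEapp : ∀ (v : ℕ →₀ R) a, E v a = if a = s₂ then 0 else v a := by
    intro v a
    rw [hE]
    simp only [LinearMap.sub_apply, LinearMap.id_apply, LinearMap.comp_apply,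
      Finsupp.lsingle_apply, Finsupp.lapply_apply, Finsupp.sub_apply,
      Finsupp.single_apply]
    by_cases h : a = s₂
    · subst h; simp
    · rw [if_neg (fun hc : s₂ = a => h hc.symm), if_neg h, sub_zero]
  have hEsingle : ∀ (g : ℕ) (c : R),
      E (Finsupp.single g c) = if g = s₂ then 0 else Finsupp.single g c := by
    intro g c
    ext a
    rw [hEapp]
    by_cases hg : g = s₂ <;> by_cases ha : a = s₂ <;>
      simp [hg, ha, Finsupp.single_apply] <;>
      first
        | (intro h; exact absurd h.symm ha)
        | (intro h; exact absurd h hg)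
        | skip

  have hspanE : ∀ x ∈ sSpan [A, M], E x ∈ sSpan [A] := by
    intro x hx
    have hle : sSpan [A, M] ≤ Submodule.comap E (sSpan [A]) := by
      rw [sSpan, Submodule.span_le]
      rintro v ⟨T'', hT'', rfl⟩
      simp only [SetLike.mem_coe, Submodule.mem_comap]
      rcases List.mem_cons.mp hT'' with he | hT''
      · rw [he, hEsingle, if_neg (fun hc : A.s = s₂ => hs₂G (hc ▸ hA.1))]
        exact single_s_mem_sSpan (by simp)
      · rw [List.mem_singleton] at hT''
        subst hT''
        rw [hMs, hEsingle, if_pos rfl]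
        exact Submodule.zero_mem _
    exact hle hx
  have hallG' : allG [A, M] = A.G ∪ {s₂} := by
    rw [allG_cons, allG_singleton, hMG]
  set lam₁ : Fin k → (ℕ →₀ R) := fun i => E (lam i) with hlam₁
  have hshort : ∀ i, ShortVec [A] (lam₁ i) := by
    intro i
    rcases hfill.1 i with hsp | ⟨g, hg, hgs, hmem⟩ | ⟨g, hg, h', hh', hne, hgs, hmem⟩
    · exact Or.inl (hspanE _ hsp)
    · have hgG : g ∈ A.G := by
        rw [hallG'] at hg
        rcases Finset.mem_union.mp hg with h | h
        · exact h
        · exact absurd (show g = M.s by rw [hMs]; exact Finset.mem_singleton.mp h)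
            (hgs M (by simp))
      refine Or.inr (Or.inl ⟨g, by rw [allG_singleton]; exact hgG, ?_, ?_⟩)
      · intro T'' hT''
        rw [List.mem_singleton] at hT''
        rw [hT'']
        exact hgs _ (by simp)
      · have heq : lam₁ i - Finsupp.single g 1 = E (lam i - Finsupp.single g 1) := by
          rw [map_sub, hEsingle, if_neg (fun hc : g = s₂ => hs₂G (hc ▸ hgG))]
        rw [heq]
        exact hspanE _ hmem
    · have hgG : g ∈ A.G := by
        rw [hallG'] at hg
        rcases Finset.mem_union.mp hg with h | h
        · exact h
        · exact absurd (show g = M.s by rw [hMs]; exact Finset.mem_singleton.mp h)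
            (hgs M (by simp)).1
      have hhG : h' ∈ A.G := by
        rw [hallG'] at hh'
        rcases Finset.mem_union.mp hh' with h | h
        · exact h
        · exact absurd (show h' = M.s by rw [hMs]; exact Finset.mem_singleton.mp h)
            (hgs M (by simp)).2
      refine Or.inr (Or.inr ⟨g, by rw [allG_singleton]; exact hgG, h',
        by rw [allG_singleton]; exact hhG, hne, ?_, ?_⟩)
      · intro T'' hT''
        rw [List.mem_singleton] at hT''
        rw [hT'']
        exact ⟨(hgs _ (by simp)).1, (hgs _ (by simp)).2⟩
      · have heq : lam₁ i - Finsupp.single g 1 - Finsupp.single h' 1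
            = E (lam i - Finsupp.single g 1 - Finsupp.single h' 1) := by
          rw [map_sub, map_sub, hEsingle, hEsingle,
            if_neg (fun hc : g = s₂ => hs₂G (hc ▸ hgG)),
            if_neg (fun hc : h' = s₂ => hs₂G (hc ▸ hhG))]
        rw [heq]
        exact hspanE _ hmem
  have hspecial : ∃ i, lam₁ i = sVec [A] := by
    obtain ⟨i₀, hi₀⟩ := hfill.2.1
    refine ⟨i₀, ?_⟩
    show E (lam i₀) = sVec [A]
    rw [hi₀, sVec_cons, sVec_singleton, map_add, hEsingle, hEsingle,
      if_neg (fun hc : A.s = s₂ => hs₂G (hc ▸ hA.1)), hMs, if_pos rfl,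
      sVec_singleton, add_zero]
  have hsum : (∑ i, lam₁ i) - (∑ g ∈ allG [A], Finsupp.single g (1:R)) ∈ sSpan [A] := by
    have h1 : (∑ i, lam₁ i) = E (∑ i, lam i) := (map_sum E _ _).symm
    have h2 : E (∑ g ∈ allG [A, M], Finsupp.single g (1:R))
        = ∑ g ∈ allG [A], Finsupp.single g 1 := by
      rw [map_sum, hallG',
        Finset.sum_union (Finset.disjoint_singleton_right.mpr hs₂G),
        Finset.sum_singleton, hEsingle, if_pos rfl, add_zero, allG_singleton]
      refine Finset.sum_congr rfl ?_
      intro g hg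
      rw [hEsingle, if_neg (fun hc : g = s₂ => hs₂G (hc ▸ hg))]
    rw [h1, ← h2, ← map_sub]
    exact hspanE _ hfill.2.2
  have hFb2 : ∀ g h, Fb [A, M] g h = Fb [A] g h := by
    intro g h
    simp only [Fb, List.map_cons, List.map_nil, List.sum_cons, List.sum_nil, add_zero]
    have hz : (if g ∈ M.G ∧ h ∈ M.G then M.b g h else 0) = 0 := by
      split_ifs with hc
      · obtain ⟨hg, hh⟩ := hc
        rw [hMG, Finset.mem_singleton] at hg hh
        subst hg; subst hh
        show (negBM B).b s₂ s₂ = 0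
        simp [negBM, hbss]
      · rfl
    rw [hz, add_zero]
  have hFb1s : ∀ h', Fb [A] s₂ h' = 0 := fun h' => by rw [Fb_single]; simp [hs₂G]
  have hFb1s' : ∀ g, Fb [A] g s₂ = 0 := fun g => by rw [Fb_single]; simp [hs₂G]
  have hmat : (Matrix.of fun i j : Fin k => blockB [A] (lam₁ i) (lam₁ j))
      = (Matrix.of fun i j : Fin k => blockB [A, M] (lam i) (lam j)) := by
    apply Matrix.ext
    intro i j
    show blockB [A] (lam₁ i) (lam₁ j) = blockB [A, M] (lam i) (lam j)
    apply blockB_congr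
    intro g h
    rw [hFb2]
    by_cases hg : g = s₂
    · subst hg
      rw [hFb1s]
      ring
    · by_cases hh : h = s₂
      · subst hh
        rw [hFb1s']
        ring
      · have e1 : lam₁ i g = lam i g := by rw [hlam₁]; rw [hEapp, if_neg hg]
        have e2 : lam₁ j h = lam j h := by rw [hlam₁]; rw [hEapp, if_neg hh]
        rw [e1, e2]
  refine tupleGenus_eq_zero ⟨hshort, hspecial, hsum⟩ ?_
  rw [hmat]
  exact hrank

lemma genus_of_iso {T W : PreBM R} (hT : IsBM T) (hW : IsBM W)
    (hiso : BMIso T W) (h0 : tupleGenus [W] = 0) : tupleGenus [T] = 0 := by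
  classical
  obtain ⟨f, hbij, hfs, hfb⟩ := hiso
  obtain ⟨k₀, lam₀, hfill₀⟩ := exists_standard_filling [W]
    (by intro T'' h''; rw [List.mem_singleton] at h''; subst h''; exact hW.1)
  obtain ⟨k, lam, hfill, hrank⟩ := exists_zero_filling h0 hfill₀
  set pb : ℕ → ℕ := Function.invFunOn f ↑T.G with hpb
  have hex : ∀ y ∈ W.G, ∃ a ∈ (T.G : Set ℕ), f a = y := by
    intro y hy
    obtain ⟨a, ha, hfa⟩ := hbij.surjOn (Finset.mem_coe.mpr hy)
    exact ⟨a, ha, hfa⟩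
  have hpbG : ∀ y ∈ W.G, pb y ∈ T.G := fun y hy =>
    Finset.mem_coe.mp (Function.invFunOn_mem (hex y hy))
  have hfpb : ∀ y ∈ W.G, f (pb y) = y := fun y hy => Function.invFunOn_eq (hex y hy)
  have hfmem : ∀ a ∈ T.G, f a ∈ W.G := fun a ha =>
    Finset.mem_coe.mp (hbij.mapsTo (Finset.mem_coe.mpr ha))
  have hpbf : ∀ a ∈ T.G, pb (f a) = a := by
    intro a ha
    have h1 : f (pb (f a)) = f a := hfpb _ (hfmem a ha)
    exact hbij.injOn (Finset.mem_coe.mpr (hpbG _ (hfmem a ha))) (Finset.mem_coe.mpr ha) h1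
  have hpbs : pb W.s = T.s := by
    have h1 := hpbf T.s hT.1
    rwa [hfs] at h1
  have hpbne : ∀ g ∈ W.G, g ≠ W.s → pb g ≠ T.s := by
    intro g hg hne hc
    apply hne
    have h1 := hfpb g hg
    rw [hc, hfs] at h1
    exact h1.symm
  have hpbinj : ∀ g ∈ W.G, ∀ h ∈ W.G, pb g = pb h → g = h := by
    intro g hg h hh hc
    rw [← hfpb g hg, ← hfpb h hh, hc]
  set Φ : (ℕ →₀ R) →ₗ[R] (ℕ →₀ R) := Finsupp.lmapDomain R R pb with hΦ
  have hΦsingle : ∀ (g : ℕ) (c : R), Φ (Finsupp.single g c) = Finsupp.single (pb g) c := by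
    intro g c
    rw [hΦ, Finsupp.lmapDomain_apply, Finsupp.mapDomain_single]
  have hinjOn : Set.InjOn pb ↑W.G := fun g hg h hh hc =>
    hpbinj g (Finset.mem_coe.mp hg) h (Finset.mem_coe.mp hh) hc
  have hΦapp : ∀ (v : ℕ →₀ R), v.support ⊆ W.G → ∀ a ∈ W.G, Φ v (pb a) = v a := by
    intro v hv a ha
    rw [hΦ, Finsupp.lmapDomain_apply]
    exact Finsupp.mapDomain_apply' ↑W.G v (Finset.coe_subset.mpr hv) hinjOn
      (Finset.mem_coe.mpr ha)
  have hΦsupp : ∀ (v : ℕ →₀ R), v.support ⊆ W.G → (Φ v).support ⊆ T.G := by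
    intro v hv
    rw [hΦ, Finsupp.lmapDomain_apply]
    intro a ha
    obtain ⟨b, hb, rfl⟩ := Finset.mem_image.mp (Finsupp.mapDomain_support ha)
    exact hpbG b (hv hb)
  have hspanΦ : ∀ x ∈ sSpan [W], Φ x ∈ sSpan [T] := by
    intro x hx
    have hle : sSpan [W] ≤ Submodule.comap Φ (sSpan [T]) := by
      rw [sSpan, Submodule.span_le]
      rintro v ⟨T'', hT'', rfl⟩
      rw [List.mem_singleton] at hT''
      subst hT''
      simp only [SetLike.mem_coe, Submodule.mem_comap]
      rw [hΦsingle, hpbs]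
      exact single_s_mem_sSpan (by simp)
    exact hle hx
  set lam' : Fin k → (ℕ →₀ R) := fun i => Φ (lam i) with hlam'
  have hsupp : ∀ i, (lam i).support ⊆ W.G := fun i => shortVec_support hW.1 (hfill.1 i)
  have hshort : ∀ i, ShortVec [T] (lam' i) := by
    intro i
    rcases hfill.1 i with hsp | ⟨g, hg, hgs, hmem⟩ | ⟨g, hg, h', hh', hne, hgs, hmem⟩
    · exact Or.inl (hspanΦ _ hsp)
    · rw [allG_singleton] at hg
      refine Or.inr (Or.inl ⟨pb g, by rw [allG_singleton]; exact hpbG g hg, ?_, ?_⟩)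
      · intro T'' hT''
        rw [List.mem_singleton] at hT''
        subst hT''
        exact hpbne g hg (hgs _ (by simp))
      · have heq : Φ (lam i) - Finsupp.single (pb g) 1 = Φ (lam i - Finsupp.single g 1) := by
          rw [map_sub, hΦsingle]
        show Φ (lam i) - Finsupp.single (pb g) 1 ∈ sSpan [T]
        rw [heq]
        exact hspanΦ _ hmem
    · rw [allG_singleton] at hg hh'
      refine Or.inr (Or.inr ⟨pb g, by rw [allG_singleton]; exact hpbG g hg, pb h',
        by rw [allG_singleton]; exact hpbG h' hh',
        fun hc => hne (hpbinj g hg h' hh' hc), ?_, ?_⟩)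
      · intro T'' hT''
        rw [List.mem_singleton] at hT''
        subst hT''
        exact ⟨hpbne g hg (hgs _ (by simp)).1, hpbne h' hh' (hgs _ (by simp)).2⟩
      · have heq : Φ (lam i) - Finsupp.single (pb g) 1 - Finsupp.single (pb h') 1
            = Φ (lam i - Finsupp.single g 1 - Finsupp.single h' 1) := by
          rw [map_sub, map_sub, hΦsingle, hΦsingle]
        show Φ (lam i) - Finsupp.single (pb g) 1 - Finsupp.single (pb h') 1 ∈ sSpan [T]
        rw [heq]
        exact hspanΦ _ hmem
  have hspecial : ∃ i, lam' i = sVec [T] := by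
    obtain ⟨i₀, hi₀⟩ := hfill.2.1
    refine ⟨i₀, ?_⟩
    show Φ (lam i₀) = sVec [T]
    rw [hi₀, sVec_singleton, hΦsingle, hpbs, sVec_singleton]
  have hGsum : Φ (∑ g ∈ W.G, Finsupp.single g (1:R)) = ∑ g ∈ T.G, Finsupp.single g 1 := by
    rw [map_sum]
    have h1 : ∀ g ∈ W.G, Φ (Finsupp.single g (1:R)) = Finsupp.single (pb g) 1 :=
      fun g _ => hΦsingle g 1
    rw [Finset.sum_congr rfl h1]
    exact Finset.sum_nbij' (i := pb) (j := f) hpbG hfmem hfpb hpbf (fun a _ => rfl)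
  have hsum : (∑ i, lam' i) - (∑ g ∈ allG [T], Finsupp.single g (1:R)) ∈ sSpan [T] := by
    have h1 : (∑ i, lam' i) = Φ (∑ i, lam i) := (map_sum Φ _ _).symm
    have h2 := hfill.2.2
    rw [allG_singleton] at h2
    rw [h1, allG_singleton, ← hGsum, ← map_sub]
    exact hspanΦ _ h2
  have hmat : ∀ i j, blockB [T] (lam' i) (lam' j) = blockB [W] (lam i) (lam j) := by
    intro i j
    rw [blockB_eq_sum [T] (S := T.G) (S' := T.G) (hΦsupp _ (hsupp i)) (hΦsupp _ (hsupp j)),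
      blockB_eq_sum [W] (S := W.G) (S' := W.G) (hsupp i) (hsupp j)]
    refine Finset.sum_nbij' (i := f) (j := pb) hfmem hpbG hpbf hfpb ?_
    intro x hx
    refine Finset.sum_nbij' (i := f) (j := pb) hfmem hpbG hpbf hfpb ?_
    intro y hy
    have e1 : Φ (lam i) x = lam i (f x) := by
      calc Φ (lam i) x = Φ (lam i) (pb (f x)) := by rw [hpbf x hx]
        _ = lam i (f x) := hΦapp _ (hsupp i) _ (hfmem x hx)
    have e2 : Φ (lam j) y = lam j (f y) := by
      calc Φ (lam j) y = Φ (lam j) (pb (f y)) := by rw [hpbf y hy]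
        _ = lam j (f y) := hΦapp _ (hsupp j) _ (hfmem y hy)
    have e3 : Fb [T] x y = Fb [W] (f x) (f y) := by
      rw [Fb_single, Fb_single, if_pos ⟨hx, hy⟩, if_pos ⟨hfmem x hx, hfmem y hy⟩]
      exact (hfb x hx y hy).symm
    rw [e1, e2, e3]
  refine tupleGenus_eq_zero ⟨hshort, hspecial, hsum⟩ ?_
  have hmat' : (Matrix.of fun i j : Fin k => blockB [T] (lam' i) (lam' j))
      = (Matrix.of fun i j : Fin k => blockB [W] (lam i) (lam j)) := by
    apply Matrix.ext
    intro i j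
    exact hmat i j
  rw [hmat']
  exact hrank

end Statement14Proof

/-- A based matrix over an integral domain is cobordant to
a trivial based matrix (one whose carrier consists of the base point alone)
if and only if it is hyperbolic, i.e. `σ(T) = 0`. -/
theorem cobordant_trivial_iff_hyperbolic {R : Type*} [CommRing R] [IsDomain R]
    (T : PreBM R) (hT : IsBM T) :
    (∃ T₀ : PreBM R, IsBM T₀ ∧ T₀.G = {T₀.s} ∧ Cobordant T T₀) ↔
      tupleGenus [T] = 0 := by
  constructor
  · rintro ⟨T₀, hT₀, hG₀, T₁', T₂', h₁, h₂, hi₁, hi₂, hdisj, hgen⟩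
    have hG₂ : T₂'.G = {T₂'.s} := by
      obtain ⟨f, hbij, hfs, -⟩ := hi₂
      apply Finset.coe_injective
      rw [Finset.coe_singleton, ← hbij.image_eq, hG₀, Finset.coe_singleton,
        Set.image_singleton, hfs]
    exact genus_of_iso hT h₁ hi₁ (genus_single_of_genus_pair h₁ h₂ hG₂ hdisj hgen)
  · intro h0
    obtain ⟨s₀, hs₀⟩ := Infinite.exists_notMem_finset T.G
    have hT₀ : IsBM (⟨{s₀}, s₀, fun _ _ => (0:R)⟩ : PreBM R) :=
      ⟨Finset.mem_singleton_self _, fun _ _ _ _ => (neg_zero).symm, fun _ _ => rfl⟩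
    refine ⟨⟨{s₀}, s₀, fun _ _ => 0⟩, hT₀, rfl,
      T, ⟨{s₀}, s₀, fun _ _ => 0⟩, hT, hT₀,
      ⟨id, Set.bijOn_id _, rfl, fun _ _ _ _ => rfl⟩,
      ⟨id, Set.bijOn_id _, rfl, fun _ _ _ _ => rfl⟩,
      Finset.disjoint_singleton_right.mpr hs₀,
      genus_pair_of_genus_single hT hs₀ h0⟩
end

section
/- There exists a ℚ-valued function η on the set of isomorphism classes of finite oriented trees such that: (i) if T is a tree with one vertex and no edges, then η(T)=1; (ii) if an oriented tree T′ (respectively U) is obtained from an oriented tree T by reversing the orientation of an edge e (respectively by contracting e to a point), then η(T)+η(T′)+η(U)=0; (iii) if an oriented tree T′ (respectively T″) is obtained from an oriented tree T by replacing two distinct edges ab, ac with common origin a by the edges ab, bc (respectively ac, cb), and U is obtained from T by identifying b with c and ab with ac, then η(T)=η(T′)+η(T″)+η(U). -/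
/-!  Finite oriented trees, modelled as a finite vertex set `V ⊆ ℕ` together
with a finite set `E` of oriented edges `(a, b)` (directed from `a` to `b`). -/

/-- The raw data of a finite oriented graph. -/
structure OTree where
  /-- the vertex set -/
  V : Finset ℕ
  /-- the set of oriented edges: `(a,b)` is an edge from `a` to `b` -/
  E : Finset (ℕ × ℕ)

/-- Adjacency (forgetting orientations). -/
def OTree.adj (T : OTree) (a b : ℕ) : Prop := (a, b) ∈ T.E ∨ (b, a) ∈ T.E

/-- `T` is a finite oriented tree: the edges join distinct vertices of `V`
(with at most one edge between two vertices), the underlying graph is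
connected, and `#E = #V - 1` (so the underlying graph is a tree). -/
def IsOTree (T : OTree) : Prop :=
  T.V.Nonempty ∧
  (∀ e ∈ T.E, e.1 ∈ T.V ∧ e.2 ∈ T.V ∧ e.1 ≠ e.2 ∧ (e.2, e.1) ∉ T.E) ∧
  (∀ a ∈ T.V, ∀ b ∈ T.V, Relation.ReflTransGen T.adj a b) ∧
  T.E.card + 1 = T.V.card

/-- Isomorphism of oriented trees. -/
def OIso (T T' : OTree) : Prop :=
  ∃ f : ℕ → ℕ, Set.BijOn f (T.V : Set ℕ) (T'.V : Set ℕ) ∧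
    ∀ a ∈ T.V, ∀ b ∈ T.V, ((a, b) ∈ T.E ↔ (f a, f b) ∈ T'.E)

/-- Reverse the orientation of the edge `(a, b)`. -/
def revE (T : OTree) (a b : ℕ) : OTree :=
  ⟨T.V, insert (b, a) (T.E.erase (a, b))⟩

/-- Contract the edge `(a, b)` to a point (the vertex `b` is identified with
`a`). -/
def contrE (T : OTree) (a b : ℕ) : OTree :=
  ⟨T.V.erase b, (T.E.erase (a, b)).image fun e =>
    (if e.1 = b then a else e.1, if e.2 = b then a else e.2)⟩

/-- Given two distinct edges `ab`, `ac` with common origin `a`, replace them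
by `ab`, `bc` (i.e. replace the edge `(a, c)` by `(b, c)`). -/
def slideE (T : OTree) (a b c : ℕ) : OTree :=
  ⟨T.V, insert (b, c) (T.E.erase (a, c))⟩

/-- Given two distinct edges `ab`, `ac` with common origin `a`, identify `b`
with `c` and the edge `ab` with the edge `ac`. -/
def identE (T : OTree) (a b c : ℕ) : OTree :=
  ⟨T.V.erase c, (T.E.erase (a, c)).image fun e =>
    (if e.1 = c then b else e.1, if e.2 = c then b else e.2)⟩

noncomputable section
namespace Eta
open Finset

noncomputable local instance : DecidableEq (ℕ → ℕ) := fun _ _ => Classical.propDecidable _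

/-- all maps `V → [1,m]`, extended by `0` off `V`. -/
def Maps (T : OTree) (m : ℕ) : Finset (ℕ → ℕ) :=
  (T.V.pi fun _ => Finset.Icc 1 m).image fun p x => if h : x ∈ T.V then p x h else 0

lemma mem_Maps {T : OTree} {m : ℕ} {f : ℕ → ℕ} :
    f ∈ Maps T m ↔ (∀ x, x ∉ T.V → f x = 0) ∧ (∀ x ∈ T.V, 1 ≤ f x ∧ f x ≤ m) := by
  constructor
  · rw [Maps, mem_image]
    rintro ⟨p, hp, rfl⟩
    rw [mem_pi] at hp
    refine ⟨fun x hx => by simp [hx], fun x hx => ?_⟩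
    have := hp x hx
    rw [mem_Icc] at this
    simpa [hx] using this
  · rintro ⟨h0, h1⟩
    rw [Maps, mem_image]
    refine ⟨fun x _ => f x, ?_, ?_⟩
    · rw [mem_pi]; intro x hx; rw [mem_Icc]; exact h1 x hx
    · funext x
      by_cases hx : x ∈ T.V <;> simp [hx, h0 x]

def OkMaps (T : OTree) (m : ℕ) : Finset (ℕ → ℕ) :=
  (Maps T m).filter fun f => ∀ e ∈ T.E, f e.1 < f e.2

lemma mem_OkMaps {T : OTree} {m : ℕ} {f : ℕ → ℕ} :
    f ∈ OkMaps T m ↔ (∀ x, x ∉ T.V → f x = 0) ∧ (∀ x ∈ T.V, 1 ≤ f x ∧ f x ≤ m) ∧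
      (∀ e ∈ T.E, f e.1 < f e.2) := by
  rw [OkMaps, mem_filter, mem_Maps]; tauto

def Surj (T : OTree) (n : ℕ) : Finset (ℕ → ℕ) :=
  @Finset.filter _ (fun f : ℕ → ℕ => ∀ k ∈ Finset.Icc 1 n, ∃ x ∈ T.V, f x = k)
    (fun _ => Classical.propDecidable _) (OkMaps T n)

lemma mem_Surj {T : OTree} {n : ℕ} {f : ℕ → ℕ} :
    f ∈ Surj T n ↔ (∀ x, x ∉ T.V → f x = 0) ∧ (∀ x ∈ T.V, 1 ≤ f x ∧ f x ≤ n) ∧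
      (∀ e ∈ T.E, f e.1 < f e.2) ∧ (∀ k, 1 ≤ k → k ≤ n → ∃ x ∈ T.V, f x = k) := by
  simp only [Surj, Finset.mem_filter, mem_OkMaps, mem_Icc, and_imp]; tauto

def c (T : OTree) (n : ℕ) : ℕ := (Surj T n).card

def M (T : OTree) (m : ℕ) : ℕ := (OkMaps T m).card

lemma c_eq_zero {T : OTree} {n : ℕ} (hn : T.V.card < n) : c T n = 0 := by
  rw [c, card_eq_zero]
  rw [eq_empty_iff_forall_notMem]
  intro f hf
  rw [mem_Surj] at hf
  have hsub : Finset.Icc 1 n ⊆ T.V.image f := by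
    intro k hk
    rw [mem_Icc] at hk
    obtain ⟨x, hx, hfx⟩ := hf.2.2.2 k hk.1 hk.2
    exact mem_image.2 ⟨x, hx, hfx⟩
  have := card_le_card hsub
  rw [Nat.card_Icc] at this
  have h2 := card_image_le (s := T.V) (f := f)
  omega

lemma c_zero {T : OTree} (hV : T.V.Nonempty) : c T 0 = 0 := by
  rw [c, card_eq_zero, eq_empty_iff_forall_notMem]
  intro f hf
  rw [mem_Surj] at hf
  obtain ⟨x, hx⟩ := hV
  have := hf.2.1 x hx
  omega

lemma M_zero {T : OTree} (hV : T.V.Nonempty) : M T 0 = 0 := by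
  rw [M, card_eq_zero, eq_empty_iff_forall_notMem]
  intro f hf
  rw [mem_OkMaps] at hf
  obtain ⟨x, hx⟩ := hV
  have := hf.2.1 x hx
  omega


/-! ### rank / unrank -/

def rank (S : Finset ℕ) (k : ℕ) : ℕ := (S.filter (· ≤ k)).card

def unrank (S : Finset ℕ) (k : ℕ) : ℕ :=
  if h : k - 1 < S.card then (S.orderEmbOfFin rfl ⟨k - 1, h⟩ : ℕ) else 0

lemma S_eq_image (S : Finset ℕ) : S = Finset.image (S.orderEmbOfFin rfl) Finset.univ := by
  ext k
  simp only [mem_image, mem_univ, true_and]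
  constructor
  · intro hk
    have : k ∈ Set.range (S.orderEmbOfFin rfl) := by
      rw [range_orderEmbOfFin]; exact hk
    obtain ⟨j, hj⟩ := this
    exact ⟨j, hj⟩
  · rintro ⟨j, rfl⟩
    exact orderEmbOfFin_mem _ _ _

lemma rank_orderEmb (S : Finset ℕ) (i : Fin S.card) :
    rank S (S.orderEmbOfFin rfl i) = i + 1 := by
  set σ := S.orderEmbOfFin rfl with hσ
  rw [rank]
  have hfil : S.filter (· ≤ σ i) = Finset.image σ (Finset.Iic i) := by
    ext k
    simp only [mem_filter, mem_image, Finset.mem_Iic]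
    constructor
    · rintro ⟨hkS, hle⟩
      have : k ∈ Set.range σ := by rw [hσ, range_orderEmbOfFin]; exact hkS
      obtain ⟨j, rfl⟩ := this
      exact ⟨j, σ.le_iff_le.mp hle, rfl⟩
    · rintro ⟨j, hj, rfl⟩
      exact ⟨by rw [hσ]; exact orderEmbOfFin_mem _ _ _, σ.le_iff_le.mpr hj⟩
  rw [hfil, card_image_of_injective _ σ.injective, Fin.card_Iic]

lemma rank_mem {S : Finset ℕ} {k : ℕ} (hk : k ∈ S) :
    1 ≤ rank S k ∧ rank S k ≤ S.card := by
  constructor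
  · rw [rank]
    exact card_pos.2 ⟨k, by simp [hk]⟩
  · exact card_le_card (filter_subset _ _)

lemma rank_lt {S : Finset ℕ} {k k' : ℕ} (hk : k ∈ S) (hk' : k' ∈ S) (h : k < k') :
    rank S k < rank S k' := by
  apply card_lt_card
  rw [ssubset_iff_of_subset]
  · exact ⟨k', by simp [hk', h.le], by simp [h]⟩
  · intro x hx
    rw [mem_filter] at hx ⊢
    exact ⟨hx.1, hx.2.trans h.le⟩

lemma unrank_mem {S : Finset ℕ} {k : ℕ} (h1 : 1 ≤ k) (h2 : k ≤ S.card) : unrank S k ∈ S := by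
  rw [unrank, dif_pos (by omega)]
  exact orderEmbOfFin_mem _ _ _

lemma rank_unrank {S : Finset ℕ} {k : ℕ} (h1 : 1 ≤ k) (h2 : k ≤ S.card) :
    rank S (unrank S k) = k := by
  rw [unrank, dif_pos (by omega), rank_orderEmb]
  show k - 1 + 1 = k
  omega

lemma unrank_rank {S : Finset ℕ} {k : ℕ} (hk : k ∈ S) : unrank S (rank S k) = k := by
  have : k ∈ Set.range (S.orderEmbOfFin rfl) := by rw [range_orderEmbOfFin]; exact hk
  obtain ⟨i, rfl⟩ := this
  rw [rank_orderEmb, unrank, dif_pos (by omega)]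
  have : (⟨(i : ℕ) + 1 - 1, by omega⟩ : Fin S.card) = i := by
    ext
    simp
  rw [this]

lemma unrank_lt {S : Finset ℕ} {k k' : ℕ} (h1 : 1 ≤ k) (h2 : k' ≤ S.card) (h : k < k') :
    unrank S k < unrank S k' := by
  rw [unrank, unrank, dif_pos (by omega), dif_pos (by omega)]
  exact (S.orderEmbOfFin rfl).strictMono (by simp; omega)

/-! ### the fiber lemma -/

lemma fiber_card (T : OTree) (hE : ∀ e ∈ T.E, e.1 ∈ T.V ∧ e.2 ∈ T.V) (m : ℕ)
    (S : Finset ℕ) (hS : S ⊆ Finset.Icc 1 m) :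
    ((OkMaps T m).filter fun f => T.V.image f = S).card = c T S.card := by
  rw [c]
  apply card_nbij' (i := fun f x => if x ∈ T.V then rank S (f x) else 0)
    (j := fun g x => if x ∈ T.V then unrank S (g x) else 0)
  · -- forward membership
    intro f hf
    rw [mem_coe, mem_filter, mem_OkMaps] at hf
    obtain ⟨⟨hsupp, hrange, hedge⟩, himg⟩ := hf
    have hfS : ∀ x ∈ T.V, f x ∈ S := fun x hx => himg ▸ mem_image_of_mem f hx
    rw [mem_coe, mem_Surj]; beta_reduce
    refine ⟨fun x hx => by simp [hx], fun x hx => ?_, fun e he => ?_, fun k hk1 hk2 => ?_⟩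
    · simp only [if_pos hx]
      exact rank_mem (hfS x hx)
    · obtain ⟨h1, h2⟩ := hE e he
      simp only [if_pos h1, if_pos h2]
      exact rank_lt (hfS _ h1) (hfS _ h2) (hedge e he)
    · have hm : unrank S k ∈ Finset.image f T.V := by
        rw [himg]; exact unrank_mem hk1 hk2
      rw [mem_image] at hm
      obtain ⟨x, hx, hfx⟩ := hm
      exact ⟨x, hx, by rw [if_pos hx, hfx, rank_unrank hk1 hk2]⟩
  · -- backward membership
    intro g hg
    rw [mem_coe, mem_Surj] at hg
    obtain ⟨hsupp, hrange, hedge, hsurj⟩ := hg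
    rw [mem_coe, mem_filter, mem_OkMaps]; beta_reduce
    have hgS : ∀ x ∈ T.V, unrank S (g x) ∈ S := fun x hx =>
      unrank_mem (hrange x hx).1 (hrange x hx).2
    refine ⟨⟨fun x hx => by simp [hx], fun x hx => ?_, fun e he => ?_⟩, ?_⟩
    · rw [if_pos hx]
      have := hS (hgS x hx)
      rw [mem_Icc] at this
      exact this
    · obtain ⟨h1, h2⟩ := hE e he
      rw [if_pos h1, if_pos h2]
      exact unrank_lt (hrange _ h1).1 (hrange _ h2).2 (hedge e he)
    · ext k
      rw [mem_image]
      constructor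
      · rintro ⟨x, hx, rfl⟩
        rw [if_pos hx]
        exact hgS x hx
      · intro hk
        have hr := rank_mem hk
        obtain ⟨x, hx, hgx⟩ := hsurj _ hr.1 hr.2
        exact ⟨x, hx, by rw [if_pos hx, hgx, unrank_rank hk]⟩
  · -- left inverse
    intro f hf
    rw [mem_coe, mem_filter, mem_OkMaps] at hf
    obtain ⟨⟨hsupp, hrange, hedge⟩, himg⟩ := hf
    funext x
    by_cases hx : x ∈ T.V
    · simp only [if_pos hx]
      exact unrank_rank (himg ▸ mem_image_of_mem f hx)
    · simp only [if_neg hx]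
      exact (hsupp x hx).symm
  · -- right inverse
    intro g hg
    rw [mem_coe, mem_Surj] at hg
    obtain ⟨hsupp, hrange, hedge, hsurj⟩ := hg
    funext x
    by_cases hx : x ∈ T.V
    · simp only [if_pos hx]
      exact rank_unrank (hrange x hx).1 (hrange x hx).2
    · simp only [if_neg hx]
      exact (hsupp x hx).symm


/-! ### the binomial decomposition -/

lemma M_eq_sum (T : OTree) (hE : ∀ e ∈ T.E, e.1 ∈ T.V ∧ e.2 ∈ T.V) (m : ℕ) :
    M T m = ∑ n ∈ range (m + 1), c T n * m.choose n := by
  rw [M, card_eq_sum_card_fiberwise (f := fun f => T.V.image f)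
      (t := (Finset.Icc 1 m).powerset) (fun f hf => by
        rw [mem_coe, mem_powerset]; beta_reduce
        intro k hk
        rw [mem_image] at hk
        obtain ⟨x, hx, rfl⟩ := hk
        rw [mem_coe, mem_OkMaps] at hf
        rw [mem_Icc]
        exact hf.2.1 x hx)]
  rw [Finset.sum_congr rfl (fun S hS => fiber_card T hE m S (mem_powerset.1 hS))]
  rw [powerset_card_disjiUnion]; refine (sum_disjiUnion ..).trans ?_
  rw [Nat.card_Icc]
  simp only [Nat.add_sub_cancel]
  apply Finset.sum_congr rfl
  intro n _
  rw [Finset.sum_congr rfl (fun S hS => by rw [(mem_powersetCard.1 hS).2]),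
      sum_const, card_powersetCard, Nat.card_Icc, Nat.add_sub_cancel, smul_eq_mul, mul_comm]

/-! ### polynomials -/

open Polynomial in
def Q (n : ℕ) : Polynomial ℚ := (n.factorial : ℚ)⁻¹ • descPochhammer ℚ n

open Polynomial in
lemma Q_eval_nat (n m : ℕ) : (Q n).eval (m : ℚ) = m.choose n := by
  rw [Q, eval_smul, smul_eq_mul, descPochhammer_eval_eq_descFactorial,
    Nat.descFactorial_eq_factorial_mul_choose]
  have : (n.factorial : ℚ) ≠ 0 := Nat.cast_ne_zero.2 n.factorial_ne_zero
  push_cast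
  field_simp

open Polynomial in
lemma Q_eval_zero {n : ℕ} (hn : n ≠ 0) : (Q n).eval 0 = 0 := by
  rw [Q, eval_smul, smul_eq_mul, descPochhammer_ne_zero_eval_zero ℚ hn, mul_zero]

open Polynomial in
lemma DP_deriv (k : ℕ) :
    (derivative (descPochhammer ℚ (k + 1))).eval 0 = (-1) ^ k * (k.factorial : ℚ) := by
  induction k with
  | zero => simp [descPochhammer_one]
  | succ k ih =>
    rw [descPochhammer_succ_right, derivative_mul, eval_add, eval_mul, eval_mul, ih]
    have h0 : (descPochhammer ℚ (k + 1)).eval 0 = 0 :=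
      descPochhammer_ne_zero_eval_zero ℚ (by omega)
    rw [h0]
    simp only [derivative_sub, derivative_X, derivative_natCast, eval_sub, eval_X, eval_natCast,
      sub_zero, zero_mul, add_zero, zero_mul, sub_zero]
    rw [Nat.factorial_succ]
    push_cast
    ring

open Polynomial in
lemma Q_deriv (k : ℕ) :
    (derivative (Q (k + 1))).eval 0 = (-1) ^ (k + 1 + 1) / (k + 1) := by
  rw [Q, derivative_smul, eval_smul, smul_eq_mul, DP_deriv]
  rw [Nat.factorial_succ]
  have h1 : ((k + 1 : ℕ) : ℚ) ≠ 0 := Nat.cast_ne_zero.2 (by omega)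
  have h2 : (k.factorial : ℚ) ≠ 0 := Nat.cast_ne_zero.2 k.factorial_ne_zero
  have : (-1 : ℚ) ^ (k + 1 + 1) = (-1) ^ k := by
    rw [pow_succ, pow_succ]
    ring
  rw [this]
  push_cast
  field_simp

open Polynomial in
def P (T : OTree) (N : ℕ) : Polynomial ℚ := ∑ n ∈ range (N + 1), (c T n : ℚ) • Q n

open Polynomial in
lemma P_eval_nat (T : OTree) (hE : ∀ e ∈ T.E, e.1 ∈ T.V ∧ e.2 ∈ T.V) {N : ℕ}
    (hN : T.V.card ≤ N) (m : ℕ) : (P T N).eval (m : ℚ) = M T m := by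
  have key : ∀ K, m + 1 ≤ K → N + 1 ≤ K →
      (∑ n ∈ range K, (c T n : ℚ) * m.choose n) = (M T m : ℚ) ∧
      (∑ n ∈ range K, (c T n : ℚ) * m.choose n) = (P T N).eval (m : ℚ) := by
    intro K hK1 hK2
    constructor
    · rw [M_eq_sum T hE m]
      push_cast
      rw [← Finset.sum_subset (Finset.range_subset_range.2 hK1)]
      intro n _ hn
      rw [mem_range, not_lt] at hn
      rw [Nat.choose_eq_zero_of_lt (by omega)]
      push_cast
      ring
    · rw [P, eval_finset_sum]
      rw [← Finset.sum_subset (Finset.range_subset_range.2 hK2)]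
      · apply Finset.sum_congr rfl
        intro n _
        rw [eval_smul, smul_eq_mul, Q_eval_nat]
      · intro n _ hn
        rw [mem_range, not_lt] at hn
        rw [c_eq_zero (by omega)]
        push_cast
        ring
  obtain ⟨h1, h2⟩ := key (max (m + 1) (N + 1)) (le_max_left _ _) (le_max_right _ _)
  rw [← h1, h2]

open Polynomial in
lemma P_eval_zero (T : OTree) (hV : T.V.Nonempty) (N : ℕ) : (P T N).eval 0 = 0 := by
  rw [P, eval_finset_sum]
  apply Finset.sum_eq_zero
  intro n _
  rw [eval_smul, smul_eq_mul]
  rcases Nat.eq_zero_or_pos n with h | h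
  · subst h
    rw [c_zero hV]
    push_cast
    ring
  · rw [Q_eval_zero (by omega), mul_zero]

/-! ### eta -/

def eta (T : OTree) : ℚ :=
  ∑ n ∈ Finset.Icc 1 T.V.card, (-1) ^ (n + 1) * (c T n : ℚ) / n

lemma eta_eq_sum (T : OTree) {N : ℕ} (hN : T.V.card ≤ N) :
    eta T = ∑ n ∈ Finset.Icc 1 N, (-1) ^ (n + 1) * (c T n : ℚ) / n := by
  rw [eta]
  apply Finset.sum_subset (Finset.Icc_subset_Icc_right hN)
  intro n hn hn'
  rw [mem_Icc] at hn hn'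
  rw [c_eq_zero (by omega)]
  push_cast
  ring

open Polynomial in
lemma eta_eq_deriv (T : OTree) {N : ℕ} (hN : T.V.card ≤ N) :
    eta T = (derivative (P T N)).eval 0 := by
  rw [eta_eq_sum T hN, P, derivative_sum, eval_finset_sum]
  have hins : range (N + 1) = insert 0 (Finset.Icc 1 N) := by
    ext n
    simp only [mem_range, mem_insert, mem_Icc]
    omega
  rw [hins, Finset.sum_insert (by simp)]
  have h0 : (derivative ((c T 0 : ℚ) • Q 0)).eval 0 = 0 := by
    rw [derivative_smul, Q]
    simp [descPochhammer_zero]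
  rw [h0, zero_add]
  apply Finset.sum_congr rfl
  intro n hn
  rw [mem_Icc] at hn
  obtain ⟨k, rfl⟩ : ∃ k, n = k + 1 := ⟨n - 1, by omega⟩
  rw [derivative_smul, eval_smul, smul_eq_mul, Q_deriv]
  push_cast
  ring

/-! ### splitting -/

lemma M_split (T T1 T2 : OTree) (m : ℕ)
    (hV : T.V = T1.V ∪ T2.V) (hd : Disjoint T1.V T2.V)
    (hsplit : ∀ e ∈ T.E, (e.1 ∈ T1.V ∧ e.2 ∈ T1.V ∧ e ∈ T1.E) ∨
      (e.1 ∈ T2.V ∧ e.2 ∈ T2.V ∧ e ∈ T2.E))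
    (hsub1 : T1.E ⊆ T.E) (hsub2 : T2.E ⊆ T.E)
    (hE1 : ∀ e ∈ T1.E, e.1 ∈ T1.V ∧ e.2 ∈ T1.V)
    (hE2 : ∀ e ∈ T2.E, e.1 ∈ T2.V ∧ e.2 ∈ T2.V) :
    M T m = M T1 m * M T2 m := by
  have hd' : ∀ x, x ∈ T1.V → x ∉ T2.V := fun x hx => Finset.disjoint_left.1 hd hx
  rw [M, M, M, ← card_product]
  apply card_nbij'
    (i := fun f => (fun x => if x ∈ T1.V then f x else 0, fun x => if x ∈ T2.V then f x else 0))
    (j := fun g x => g.1 x + g.2 x)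
  · intro f hf
    rw [mem_coe, mem_OkMaps] at hf
    obtain ⟨hsupp, hrange, hedge⟩ := hf
    rw [mem_coe, mem_product]
    dsimp only
    constructor
    · rw [mem_OkMaps]
      refine ⟨fun x hx => by simp [hx], fun x hx => ?_, fun e he => ?_⟩
      · rw [if_pos hx]
        exact hrange x (hV ▸ mem_union_left _ hx)
      · obtain ⟨h1, h2⟩ := hE1 e he
        rw [if_pos h1, if_pos h2]
        exact hedge e (hsub1 he)
    · rw [mem_OkMaps]
      refine ⟨fun x hx => by simp [hx], fun x hx => ?_, fun e he => ?_⟩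
      · rw [if_pos hx]
        exact hrange x (hV ▸ mem_union_right _ hx)
      · obtain ⟨h1, h2⟩ := hE2 e he
        rw [if_pos h1, if_pos h2]
        exact hedge e (hsub2 he)
  · rintro ⟨g1, g2⟩ hg
    rw [mem_coe, mem_product] at hg
    obtain ⟨hg1, hg2⟩ := hg
    rw [mem_OkMaps] at hg1 hg2
    dsimp only at hg1 hg2 ⊢
    rw [mem_coe, mem_OkMaps]
    refine ⟨fun x hx => ?_, fun x hx => ?_, fun e he => ?_⟩
    · have hx1 : x ∉ T1.V := fun h => hx (hV ▸ mem_union_left _ h)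
      have hx2 : x ∉ T2.V := fun h => hx (hV ▸ mem_union_right _ h)
      simp [hg1.1 x hx1, hg2.1 x hx2]
    · rw [hV, mem_union] at hx
      rcases hx with hx | hx
      · rw [hg2.1 x (hd' x hx), add_zero]
        exact hg1.2.1 x hx
      · have hx1 : x ∉ T1.V := fun h => hd' x h hx
        rw [hg1.1 x hx1, zero_add]
        exact hg2.2.1 x hx
    · rcases hsplit e he with ⟨h1, h2, he'⟩ | ⟨h1, h2, he'⟩
      · rw [hg2.1 _ (hd' _ h1), hg2.1 _ (hd' _ h2), add_zero, add_zero]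
        exact hg1.2.2 e he'
      · rw [hg1.1 _ (fun h => hd' _ h h1), hg1.1 _ (fun h => hd' _ h h2),
          zero_add, zero_add]
        exact hg2.2.2 e he'
  · intro f hf
    rw [mem_coe, mem_OkMaps] at hf
    funext x
    by_cases hx1 : x ∈ T1.V
    · simp only [if_pos hx1, if_neg (hd' x hx1), add_zero]
    · by_cases hx2 : x ∈ T2.V
      · simp only [if_neg hx1, if_pos hx2, zero_add]
      · have : x ∉ T.V := by
          rw [hV, mem_union]
          tauto
        simp only [if_neg hx1, if_neg hx2, add_zero]
        exact (hf.1 x this).symm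
  · rintro ⟨g1, g2⟩ hg
    rw [mem_coe, mem_product] at hg
    obtain ⟨hg1, hg2⟩ := hg
    rw [mem_OkMaps] at hg1 hg2
    dsimp only at hg1 hg2 ⊢
    ext x : 2
    · by_cases hx : x ∈ T1.V
      · simp only [if_pos hx, hg2.1 x (hd' x hx), add_zero]
      · simp only [if_neg hx, (hg1.1 x hx).symm]
    · by_cases hx : x ∈ T2.V
      · simp only [if_pos hx, hg1.1 x (fun h => hd' x h hx), zero_add]
      · simp only [if_neg hx, (hg2.1 x hx).symm]

open Polynomial in
lemma eta_split (T : OTree) (hE : ∀ e ∈ T.E, e.1 ∈ T.V ∧ e.2 ∈ T.V)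
    (V1 V2 : Finset ℕ) (hV : T.V = V1 ∪ V2) (hd : Disjoint V1 V2)
    (h1 : V1.Nonempty) (h2 : V2.Nonempty)
    (hsplit : ∀ e ∈ T.E, (e.1 ∈ V1 ∧ e.2 ∈ V1) ∨ (e.1 ∈ V2 ∧ e.2 ∈ V2)) :
    eta T = 0 := by
  set T1 : OTree := ⟨V1, T.E.filter fun e => e.1 ∈ V1⟩ with hT1
  set T2 : OTree := ⟨V2, T.E.filter fun e => e.1 ∈ V2⟩ with hT2
  have hd' : ∀ x, x ∈ V1 → x ∉ V2 := fun x hx => Finset.disjoint_left.1 hd hx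
  have hE1 : ∀ e ∈ T1.E, e.1 ∈ T1.V ∧ e.2 ∈ T1.V := by
    intro e he
    rw [hT1] at he
    simp only [mem_filter] at he
    rcases hsplit e he.1 with h | h
    · exact h
    · exact absurd he.2 (fun hh => hd' _ hh h.1)
  have hE2 : ∀ e ∈ T2.E, e.1 ∈ T2.V ∧ e.2 ∈ T2.V := by
    intro e he
    rw [hT2] at he
    simp only [mem_filter] at he
    rcases hsplit e he.1 with h | h
    · exact absurd h.1 (fun hh => hd' _ hh he.2)
    · exact h
  have hsplit' : ∀ e ∈ T.E, (e.1 ∈ T1.V ∧ e.2 ∈ T1.V ∧ e ∈ T1.E) ∨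
      (e.1 ∈ T2.V ∧ e.2 ∈ T2.V ∧ e ∈ T2.E) := by
    intro e he
    rcases hsplit e he with h | h
    · exact Or.inl ⟨h.1, h.2, by simp only [hT1, mem_filter]; exact ⟨he, h.1⟩⟩
    · exact Or.inr ⟨h.1, h.2, by simp only [hT2, mem_filter]; exact ⟨he, h.1⟩⟩
  set N := T.V.card with hNdef
  have hN1 : T1.V.card ≤ N := card_le_card (hV ▸ subset_union_left)
  have hN2 : T2.V.card ≤ N := card_le_card (hV ▸ subset_union_right)
  have hpoly : P T N = P T1 N * P T2 N := by
    have hroot : ∀ m : ℕ, (P T N - P T1 N * P T2 N).IsRoot (m : ℚ) := by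
      intro m
      rw [IsRoot, eval_sub, eval_mul, P_eval_nat T hE le_rfl m,
        P_eval_nat T1 hE1 hN1 m, P_eval_nat T2 hE2 hN2 m,
        M_split T T1 T2 m hV hd hsplit' (filter_subset _ _) (filter_subset _ _) hE1 hE2]
      push_cast
      ring
    have := Polynomial.eq_zero_of_infinite_isRoot (P T N - P T1 N * P T2 N)
      (Set.Infinite.mono (fun x hx => by
          obtain ⟨m, rfl⟩ := hx
          exact hroot m)
        (Set.infinite_range_of_injective (f := fun m : ℕ => (m : ℚ)) Nat.cast_injective))
    exact sub_eq_zero.1 this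
  rw [eta_eq_deriv T (le_of_eq hNdef.symm), hpoly, derivative_mul, eval_add, eval_mul, eval_mul,
    P_eval_zero T1 h1 N, P_eval_zero T2 h2 N, mul_zero, zero_mul, add_zero]


/-! ### trichotomy -/

lemma filter_tri (s : Finset (ℕ → ℕ)) (u v : ℕ) :
    s.card = (s.filter fun f => f u < f v).card + (s.filter fun f => f v < f u).card +
      (s.filter fun f => f u = f v).card := by
  have h1 := card_filter_add_card_filter_not (s := s) (fun f => f u < f v)
  have h2 := card_filter_add_card_filter_not
    (s := s.filter fun f => ¬ f u < f v) (fun f => f v < f u)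
  rw [filter_filter, filter_filter] at h2
  have e1 : (s.filter fun f => ¬ f u < f v ∧ f v < f u) = s.filter fun f => f v < f u := by
    apply filter_congr
    intro f _
    constructor
    · exact fun h => h.2
    · intro h
      exact ⟨Nat.lt_asymm h, h⟩
  have e2 : (s.filter fun f => ¬ f u < f v ∧ ¬ f v < f u) = s.filter fun f => f u = f v := by
    apply filter_congr
    intro f _
    constructor
    · intro h
      exact Nat.le_antisymm (Nat.le_of_not_lt h.2) (Nat.le_of_not_lt h.1)
    · intro h
      exact ⟨by rw [h]; exact lt_irrefl _, by rw [h]; exact lt_irrefl _⟩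
  rw [e1, e2] at h2
  linarith

/-! ### the contraction bijection -/

lemma contr_card (S : OTree) (p q : ℕ) (hp : p ∈ S.V) (hq : q ∈ S.V) (hpq : p ≠ q) (n : ℕ) :
    ((Surj S n).filter fun f => f p = f q).card =
      (Surj ⟨S.V.erase q, S.E.image fun e =>
        (if e.1 = q then p else e.1, if e.2 = q then p else e.2)⟩ n).card := by
  apply card_nbij' (i := fun f x => if x = q then 0 else f x)
    (j := fun g x => if x = q then g p else g x)
  · intro f hf
    rw [mem_coe, mem_filter, mem_Surj] at hf
    obtain ⟨⟨hsupp, hrange, hedge, hsurj⟩, hfpq⟩ := hf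
    rw [mem_coe, mem_Surj]
    dsimp only
    refine ⟨fun x hx => ?_, fun x hx => ?_, fun e' he' => ?_, fun k hk1 hk2 => ?_⟩
    · by_cases hxq : x = q
      · rw [if_pos hxq]
      · rw [if_neg hxq]
        exact hsupp x fun h => hx (mem_erase.2 ⟨hxq, h⟩)
    · rw [mem_erase] at hx
      rw [if_neg hx.1]
      exact hrange x hx.2
    · rw [mem_image] at he'
      obtain ⟨e, he, rfl⟩ := he'
      dsimp only
      have v1 : (if (if e.1 = q then p else e.1) = q then 0 else f (if e.1 = q then p else e.1))
          = f e.1 := by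
        by_cases h : e.1 = q
        · rw [if_pos h, if_neg hpq, h, hfpq]
        · rw [if_neg h, if_neg h]
      have v2 : (if (if e.2 = q then p else e.2) = q then 0 else f (if e.2 = q then p else e.2))
          = f e.2 := by
        by_cases h : e.2 = q
        · rw [if_pos h, if_neg hpq, h, hfpq]
        · rw [if_neg h, if_neg h]
      rw [v1, v2]
      exact hedge e he
    · obtain ⟨x, hx, hfx⟩ := hsurj k hk1 hk2
      by_cases hxq : x = q
      · refine ⟨p, mem_erase.2 ⟨hpq, hp⟩, ?_⟩
        rw [if_neg hpq, hfpq, ← hxq, hfx]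
      · exact ⟨x, mem_erase.2 ⟨hxq, hx⟩, by rw [if_neg hxq]; exact hfx⟩
  · intro g hg
    rw [mem_coe, mem_Surj] at hg
    dsimp only at hg
    obtain ⟨hsupp, hrange, hedge, hsurj⟩ := hg
    rw [mem_coe, mem_filter, mem_Surj]
    have hgq : g q = 0 := hsupp q (fun h => (mem_erase.1 h).1 rfl); beta_reduce
    refine ⟨⟨fun x hx => ?_, fun x hx => ?_, fun e he => ?_, fun k hk1 hk2 => ?_⟩, ?_⟩
    · have hxq : x ≠ q := fun h => hx (h ▸ hq)
      rw [if_neg hxq]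
      exact hsupp x fun h => hx (mem_erase.1 h).2
    · by_cases hxq : x = q
      · rw [if_pos hxq]
        exact hrange p (mem_erase.2 ⟨hpq, hp⟩)
      · rw [if_neg hxq]
        exact hrange x (mem_erase.2 ⟨hxq, hx⟩)
    · have hmem : (if e.1 = q then p else e.1, if e.2 = q then p else e.2) ∈
          S.E.image fun e => (if e.1 = q then p else e.1, if e.2 = q then p else e.2) :=
        mem_image_of_mem _ he
      have := hedge _ hmem
      dsimp only at this
      have v1 : (if e.1 = q then g p else g e.1) = g (if e.1 = q then p else e.1) := by
        by_cases h : e.1 = q <;> simp [h]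
      have v2 : (if e.2 = q then g p else g e.2) = g (if e.2 = q then p else e.2) := by
        by_cases h : e.2 = q <;> simp [h]
      rw [v1, v2]
      exact this
    · obtain ⟨x, hx, hgx⟩ := hsurj k hk1 hk2
      rw [mem_erase] at hx
      exact ⟨x, hx.2, by rw [if_neg hx.1]; exact hgx⟩
    · rw [if_neg hpq, if_pos rfl]
  · intro f hf
    rw [mem_coe, mem_filter, mem_Surj] at hf
    funext x
    dsimp only
    by_cases hxq : x = q
    · rw [if_pos hxq, if_neg hpq, hf.2, hxq]
    · rw [if_neg hxq, if_neg hxq]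
  · intro g hg
    rw [mem_coe, mem_Surj] at hg
    have hgq : g q = 0 := hg.1 q (fun h => (mem_erase.1 h).1 rfl)
    funext x
    dsimp only
    by_cases hxq : x = q
    · rw [if_pos hxq, hxq, hgq]
    · rw [if_neg hxq, if_neg hxq]

/-! ### connectivity forces many edges -/

def walkN (R : ℕ → ℕ → Prop) (a : ℕ) : ℕ → ℕ → Prop
  | 0 => fun x => x = a
  | n + 1 => fun x => ∃ y, walkN R a n y ∧ R y x

lemma reflTransGen_walkN {R : ℕ → ℕ → Prop} {a x : ℕ} (h : Relation.ReflTransGen R a x) :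
    ∃ n, walkN R a n x := by
  induction h with
  | refl => exact ⟨0, rfl⟩
  | tail _ hstep ih =>
    obtain ⟨n, hn⟩ := ih
    exact ⟨n + 1, _, hn, hstep⟩

lemma conn_card (S : OTree) (a : ℕ) (ha : a ∈ S.V)
    (hconn : ∀ x ∈ S.V, Relation.ReflTransGen S.adj a x) :
    S.V.card ≤ S.E.card + 1 := by
  classical
  have hex : ∀ x ∈ S.V, ∃ n, walkN S.adj a n x := fun x hx => reflTransGen_walkN (hconn x hx)
  set d : ℕ → ℕ := fun x => if h : ∃ n, walkN S.adj a n x then Nat.find h else 0 with hd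
  have key : ∀ x ∈ S.V.erase a, ∃ e, e ∈ S.E ∧ ∃ y, (e = (y, x) ∨ e = (x, y)) ∧ d y < d x := by
    intro x hx
    rw [mem_erase] at hx
    obtain ⟨hxa, hxV⟩ := hx
    have h := hex x hxV
    have hfind := Nat.find_spec h
    have hdx : d x = Nat.find h := by rw [hd]; exact dif_pos h
    obtain ⟨m, hm⟩ : ∃ m, Nat.find h = m + 1 := by
      cases hn : Nat.find h with
      | zero =>
        exfalso
        rw [hn] at hfind
        simp only [walkN] at hfind
        exact hxa hfind
      | succ m => exact ⟨m, rfl⟩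
    rw [hm] at hfind
    simp only [walkN] at hfind
    obtain ⟨y, hwy, hRyx⟩ := hfind
    have hdy : d y ≤ m := by
      have hy : ∃ n, walkN S.adj a n y := ⟨m, hwy⟩
      have : d y = Nat.find hy := by rw [hd]; exact dif_pos hy
      rw [this]
      exact Nat.find_min' hy hwy
    have hdxy : d y < d x := by rw [hdx, hm]; omega
    rcases hRyx with hE | hE
    · exact ⟨(y, x), hE, y, Or.inl rfl, hdxy⟩
    · exact ⟨(x, y), hE, y, Or.inr rfl, hdxy⟩
  set F : ℕ → ℕ × ℕ := fun x =>
    if h : ∃ e, e ∈ S.E ∧ ∃ y, (e = (y, x) ∨ e = (x, y)) ∧ d y < d x then h.choose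
    else (0, 0) with hF
  have hFspec : ∀ x ∈ S.V.erase a,
      F x ∈ S.E ∧ ∃ y, (F x = (y, x) ∨ F x = (x, y)) ∧ d y < d x := by
    intro x hx
    have h := key x hx
    have : F x = h.choose := by rw [hF]; exact dif_pos h
    rw [this]
    exact h.choose_spec
  have hinj : Set.InjOn F (S.V.erase a : Finset ℕ) := by
    intro x hx x' hx' heq
    rw [mem_coe] at hx hx'
    by_contra hne
    obtain ⟨_, y, hy, hdy⟩ := hFspec x hx
    obtain ⟨_, y', hy', hdy'⟩ := hFspec x' hx'
    rw [heq] at hy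
    rcases hy with h1 | h1 <;> rcases hy' with h2 | h2 <;>
      rw [h2] at h1 <;>
      obtain ⟨ha1, ha2⟩ := Prod.mk.injEq .. ▸ h1
    · exact hne ha2.symm
    · subst ha1; subst ha2; omega
    · subst ha1; subst ha2; omega
    · exact hne ha1.symm
  have hcard := Finset.card_le_card_of_injOn F (fun x hx => (hFspec x hx).1) hinj
  rw [card_erase_of_mem ha] at hcard
  have : 0 < S.V.card := card_pos.2 ⟨a, ha⟩
  omega


/-! ### edge-set rewriting -/

lemma Surj_edge_filter (T : OTree) {p q : ℕ} (hpq : (p, q) ∈ T.E) (n : ℕ) :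
    Surj T n = (Surj ⟨T.V, T.E.erase (p, q)⟩ n).filter fun f => f p < f q := by
  ext f
  rw [mem_filter, mem_Surj, mem_Surj]
  dsimp only
  constructor
  · rintro ⟨hsupp, hrange, hedge, hsurj⟩
    exact ⟨⟨hsupp, hrange, fun e he => hedge e (erase_subset _ _ he), hsurj⟩,
      hedge _ hpq⟩
  · rintro ⟨⟨hsupp, hrange, hedge, hsurj⟩, hlt⟩
    refine ⟨hsupp, hrange, fun e he => ?_, hsurj⟩
    by_cases h : e = (p, q)
    · subst h; exact hlt
    · exact hedge e (mem_erase.2 ⟨h, he⟩)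

lemma Surj_rev_filter (T : OTree) (p q : ℕ) (n : ℕ) :
    Surj (revE T p q) n = (Surj ⟨T.V, T.E.erase (p, q)⟩ n).filter fun f => f q < f p := by
  ext f
  rw [mem_filter, mem_Surj, mem_Surj]
  simp only [revE]
  constructor
  · rintro ⟨hsupp, hrange, hedge, hsurj⟩
    exact ⟨⟨hsupp, hrange, fun e he => hedge e (mem_insert_of_mem he), hsurj⟩,
      hedge _ (mem_insert_self _ _)⟩
  · rintro ⟨⟨hsupp, hrange, hedge, hsurj⟩, hlt⟩
    refine ⟨hsupp, hrange, fun e he => ?_, hsurj⟩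
    rcases mem_insert.1 he with h | h
    · subst h; exact hlt
    · exact hedge e h

/-! ### relation (ii) on counts -/

lemma c_rel2 (T : OTree) (p q : ℕ) (hE : ∀ e ∈ T.E, e.1 ∈ T.V ∧ e.2 ∈ T.V ∧ e.1 ≠ e.2 ∧ (e.2, e.1) ∉ T.E)
    (hpq : (p, q) ∈ T.E) (n : ℕ) :
    c (⟨T.V, T.E.erase (p, q)⟩ : OTree) n = c T n + c (revE T p q) n + c (contrE T p q) n := by
  obtain ⟨hp, hq, hne, -⟩ := hE _ hpq
  have h3 : ((Surj (⟨T.V, T.E.erase (p, q)⟩ : OTree) n).filter fun f => f p = f q).card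
      = c (contrE T p q) n :=
    contr_card ⟨T.V, T.E.erase (p, q)⟩ p q hp hq hne n
  rw [c, filter_tri (Surj (⟨T.V, T.E.erase (p, q)⟩ : OTree) n) p q]
  rw [← Surj_edge_filter T hpq n, ← Surj_rev_filter T p q n, h3]
  rfl

/-! ### relation (iii) on counts -/

lemma c_rel3 (T : OTree) (p q r : ℕ)
    (hE : ∀ e ∈ T.E, e.1 ∈ T.V ∧ e.2 ∈ T.V ∧ e.1 ≠ e.2 ∧ (e.2, e.1) ∉ T.E)
    (hpq : (p, q) ∈ T.E) (hpr : (p, r) ∈ T.E) (hqr : q ≠ r) (n : ℕ) :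
    c T n = c (slideE T p q r) n + c (slideE T p r q) n + c (identE T p q r) n := by
  have hq : q ∈ T.V := (hE _ hpq).2.1
  have hr : r ∈ T.V := (hE _ hpr).2.1
  have hA : (Surj T n).filter (fun f => f q < f r) = Surj (slideE T p q r) n := by
    ext f
    rw [mem_filter, mem_Surj, mem_Surj]
    simp only [slideE]
    constructor
    · rintro ⟨⟨hsupp, hrange, hedge, hsurj⟩, hlt⟩
      refine ⟨hsupp, hrange, fun e he => ?_, hsurj⟩
      rcases mem_insert.1 he with h | h
      · subst h; exact hlt
      · exact hedge e (erase_subset _ _ h)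
    · rintro ⟨hsupp, hrange, hedge, hsurj⟩
      have hqr' : f q < f r := hedge _ (mem_insert_self _ _)
      have hpq' : f p < f q := hedge _ (mem_insert_of_mem (mem_erase.2
        ⟨fun h => hqr (congrArg Prod.snd h), hpq⟩))
      refine ⟨⟨hsupp, hrange, fun e he => ?_, hsurj⟩, hqr'⟩
      by_cases h : e = (p, r)
      · subst h; exact hpq'.trans hqr'
      · exact hedge e (mem_insert_of_mem (mem_erase.2 ⟨h, he⟩))
  have hB : (Surj T n).filter (fun f => f r < f q) = Surj (slideE T p r q) n := by
    ext f
    rw [mem_filter, mem_Surj, mem_Surj]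
    simp only [slideE]
    constructor
    · rintro ⟨⟨hsupp, hrange, hedge, hsurj⟩, hlt⟩
      refine ⟨hsupp, hrange, fun e he => ?_, hsurj⟩
      rcases mem_insert.1 he with h | h
      · subst h; exact hlt
      · exact hedge e (erase_subset _ _ h)
    · rintro ⟨hsupp, hrange, hedge, hsurj⟩
      have hrq' : f r < f q := hedge _ (mem_insert_self _ _)
      have hpr' : f p < f r := hedge _ (mem_insert_of_mem (mem_erase.2
        ⟨fun h => hqr (congrArg Prod.snd h).symm, hpr⟩))
      refine ⟨⟨hsupp, hrange, fun e he => ?_, hsurj⟩, hrq'⟩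
      by_cases h : e = (p, q)
      · subst h; exact hpr'.trans hrq'
      · exact hedge e (mem_insert_of_mem (mem_erase.2 ⟨h, he⟩))
  have hC : (Surj T n).filter (fun f => f q = f r)
      = (Surj (⟨T.V, T.E.erase (p, r)⟩ : OTree) n).filter fun f => f q = f r := by
    ext f
    rw [mem_filter, mem_filter, mem_Surj, mem_Surj]
    dsimp only
    constructor
    · rintro ⟨⟨hsupp, hrange, hedge, hsurj⟩, heq⟩
      exact ⟨⟨hsupp, hrange, fun e he => hedge e (erase_subset _ _ he), hsurj⟩, heq⟩
    · rintro ⟨⟨hsupp, hrange, hedge, hsurj⟩, heq⟩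
      have hpq' : f p < f q := hedge _ (mem_erase.2
        ⟨fun h => hqr (congrArg Prod.snd h), hpq⟩)
      refine ⟨⟨hsupp, hrange, fun e he => ?_, hsurj⟩, heq⟩
      by_cases h : e = (p, r)
      · subst h
        dsimp only
        omega
      · exact hedge e (mem_erase.2 ⟨h, he⟩)
  have hD : ((Surj (⟨T.V, T.E.erase (p, r)⟩ : OTree) n).filter fun f => f q = f r).card
      = c (identE T p q r) n :=
    contr_card ⟨T.V, T.E.erase (p, r)⟩ q r hq hr hqr n
  rw [c, filter_tri (Surj T n) q r, hA, hB, hC, hD]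
  rfl

/-! ### isomorphism invariance -/

lemma c_iso (T T' : OTree) (hT : IsOTree T) (hT' : IsOTree T') (h : OIso T T') (n : ℕ) :
    c T n = c T' n := by
  obtain ⟨φ, hbij, hedge⟩ := h
  have hinv := hbij.invOn_invFunOn
  set ψ := Function.invFunOn φ (T.V : Set ℕ) with hψ
  have hψφ : ∀ x ∈ T.V, ψ (φ x) = x := fun x hx => hinv.1 hx
  have hφψ : ∀ y ∈ T'.V, φ (ψ y) = y := fun y hy => hinv.2 hy
  have hψmem : ∀ y ∈ T'.V, ψ y ∈ T.V := fun y hy => hbij.surjOn.mapsTo_invFunOn hy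
  have hφmem : ∀ x ∈ T.V, φ x ∈ T'.V := fun x hx => hbij.mapsTo hx
  have hET := hT.2.1
  have hET' := hT'.2.1
  apply card_nbij' (i := fun f y => if y ∈ T'.V then f (ψ y) else 0)
    (j := fun g x => if x ∈ T.V then g (φ x) else 0)
  · intro f hf
    rw [mem_coe, mem_Surj] at hf ⊢
    obtain ⟨hsupp, hrange, hedgef, hsurj⟩ := hf; beta_reduce
    refine ⟨fun y hy => by simp [hy], fun y hy => ?_, fun e' he' => ?_, fun k hk1 hk2 => ?_⟩
    · rw [if_pos hy]
      exact hrange _ (hψmem y hy)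
    · have h1 : e'.1 ∈ T'.V := (hET' e' he').1
      have h2 : e'.2 ∈ T'.V := (hET' e' he').2.1
      rw [if_pos h1, if_pos h2]
      have hmem : (ψ e'.1, ψ e'.2) ∈ T.E := by
        rw [hedge _ (hψmem _ h1) _ (hψmem _ h2), hφψ _ h1, hφψ _ h2]
        exact he'
      exact hedgef _ hmem
    · obtain ⟨x, hx, hfx⟩ := hsurj k hk1 hk2
      refine ⟨φ x, hφmem x hx, ?_⟩
      rw [if_pos (hφmem x hx), hψφ x hx, hfx]
  · intro g hg
    rw [mem_coe, mem_Surj] at hg ⊢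
    obtain ⟨hsupp, hrange, hedgeg, hsurj⟩ := hg; beta_reduce
    refine ⟨fun x hx => by simp [hx], fun x hx => ?_, fun e he => ?_, fun k hk1 hk2 => ?_⟩
    · rw [if_pos hx]
      exact hrange _ (hφmem x hx)
    · have h1 : e.1 ∈ T.V := (hET e he).1
      have h2 : e.2 ∈ T.V := (hET e he).2.1
      rw [if_pos h1, if_pos h2]
      exact hedgeg _ ((hedge _ h1 _ h2).1 he)
    · obtain ⟨y, hy, hgy⟩ := hsurj k hk1 hk2
      refine ⟨ψ y, hψmem y hy, ?_⟩
      rw [if_pos (hψmem y hy), hφψ y hy, hgy]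
  · intro f hf
    rw [mem_coe, mem_Surj] at hf
    funext x
    dsimp only
    by_cases hx : x ∈ T.V
    · rw [if_pos hx, if_pos (hφmem x hx), hψφ x hx]
    · rw [if_neg hx]
      exact (hf.1 x hx).symm
  · intro g hg
    rw [mem_coe, mem_Surj] at hg
    funext y
    dsimp only
    by_cases hy : y ∈ T'.V
    · rw [if_pos hy, if_pos (hψmem y hy), hφψ y hy]
    · rw [if_neg hy]
      exact (hg.1 y hy).symm

lemma eta_iso (T T' : OTree) (hT : IsOTree T) (hT' : IsOTree T') (h : OIso T T') :
    eta T = eta T' := by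
  have hcard : T.V.card = T'.V.card := by
    obtain ⟨φ, hbij, -⟩ := h
    have himg : T.V.image φ = T'.V :=
      Finset.coe_injective (by rw [coe_image]; exact hbij.image_eq)
    rw [← himg, Finset.card_image_of_injOn hbij.injOn]
  rw [eta, eta, hcard]
  exact Finset.sum_congr rfl fun n _ => by rw [c_iso T T' hT hT' h n]

/-! ### the one-point tree -/

lemma eta_single (T : OTree) (hcard : T.V.card = 1) (hEe : T.E = ∅) : eta T = 1 := by
  obtain ⟨v, hv⟩ := card_eq_one.1 hcard
  have hc1 : c T 1 = 1 := by
    rw [c]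
    apply card_eq_one.2
    refine ⟨fun x => if x = v then 1 else 0, ?_⟩
    rw [eq_singleton_iff_unique_mem]
    constructor
    · rw [mem_Surj]
      refine ⟨fun x hx => ?_, fun x hx => ?_, fun e he => ?_, fun k hk1 hk2 => ?_⟩
      · rw [if_neg]
        intro hxv
        exact hx (by rw [hxv, hv]; exact mem_singleton_self v)
      · rw [hv, mem_singleton] at hx
        rw [if_pos hx]
        omega
      · rw [hEe] at he
        exact absurd he (notMem_empty e)
      · refine ⟨v, by rw [hv]; exact mem_singleton_self v, ?_⟩
        rw [if_pos rfl]
        omega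
    · intro g hg
      rw [mem_Surj] at hg
      funext x
      by_cases hx : x = v
      · subst hx
        have := hg.2.1 x (by rw [hv]; exact mem_singleton_self x)
        rw [if_pos rfl]
        omega
      · rw [if_neg hx]
        exact hg.1 x (by rw [hv, mem_singleton]; exact hx)
  rw [eta, hcard]
  rw [show Finset.Icc 1 1 = {1} from Finset.Icc_self 1, Finset.sum_singleton, hc1]
  norm_num

/-! ### relation (ii) -/

lemma eta_rel2 (T : OTree) (p q : ℕ) (hT : IsOTree T) (hpq : (p, q) ∈ T.E) :
    eta T + eta (revE T p q) + eta (contrE T p q) = 0 := by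
  classical
  obtain ⟨hVne, hEprop, hconn, hcard⟩ := hT
  have hp : p ∈ T.V := (hEprop _ hpq).1
  have hq : q ∈ T.V := (hEprop _ hpq).2.1
  have hne : p ≠ q := (hEprop _ hpq).2.2.1
  set W : OTree := ⟨T.V, T.E.erase (p, q)⟩ with hW
  have hEW : ∀ e ∈ W.E, e.1 ∈ W.V ∧ e.2 ∈ W.V := fun e he =>
    ⟨(hEprop e (erase_subset _ _ he)).1, (hEprop e (erase_subset _ _ he)).2.1⟩
  set N := T.V.card with hN
  have hc2 : (contrE T p q).V.card ≤ N := card_le_card (erase_subset _ _)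
  have hsum : eta T + eta (revE T p q) + eta (contrE T p q) = eta W := by
    rw [eta_eq_sum T (le_refl N), eta_eq_sum (revE T p q) (le_refl N),
      eta_eq_sum (contrE T p q) hc2, eta_eq_sum W (le_refl N),
      ← Finset.sum_add_distrib, ← Finset.sum_add_distrib]
    apply Finset.sum_congr rfl
    intro n _
    rw [c_rel2 T p q hEprop hpq n]
    push_cast
    ring
  rw [hsum]
  -- now show eta W = 0 by splitting
  have hreach : ¬ Relation.ReflTransGen W.adj p q := by
    intro hr
    have patch : ∀ {x y : ℕ}, Relation.ReflTransGen T.adj x y →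
        Relation.ReflTransGen W.adj p x → Relation.ReflTransGen W.adj p y := by
      intro x y hxy
      induction hxy with
      | refl => exact fun h => h
      | tail _ hstep ih =>
        intro hpx
        rename_i b' c' _
        rcases hstep with hE | hE
        · by_cases hbc : (b', c') = (p, q)
          · have : c' = q := congrArg Prod.snd hbc
            rw [this]
            exact hr
          · exact (ih hpx).tail (Or.inl (mem_erase.2 ⟨hbc, hE⟩))
        · by_cases hbc : (c', b') = (p, q)
          · have : c' = p := congrArg Prod.fst hbc
            rw [this]
          · exact (ih hpx).tail (Or.inr (mem_erase.2 ⟨hbc, hE⟩))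
    have hWconn : ∀ x ∈ W.V, Relation.ReflTransGen W.adj p x := fun x hx =>
      patch (hconn p hp x hx) Relation.ReflTransGen.refl
    have hle := conn_card W p hp hWconn
    have hWE : W.E.card = T.E.card - 1 := card_erase_of_mem hpq
    have hpos : 0 < T.E.card := card_pos.2 ⟨(p, q), hpq⟩
    have : W.V.card = T.V.card := rfl
    omega
  set V1 := T.V.filter (fun x => Relation.ReflTransGen W.adj p x) with hV1
  set V2 := T.V.filter (fun x => ¬ Relation.ReflTransGen W.adj p x) with hV2
  apply eta_split W hEW V1 V2
  · exact (filter_union_filter_not_eq _ _).symm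
  · exact disjoint_filter_filter_not _ _ _
  · exact ⟨p, mem_filter.2 ⟨hp, Relation.ReflTransGen.refl⟩⟩
  · exact ⟨q, mem_filter.2 ⟨hq, hreach⟩⟩
  · intro e he
    have h1 : e.1 ∈ T.V := (hEW e he).1
    have h2 : e.2 ∈ T.V := (hEW e he).2
    by_cases hre : Relation.ReflTransGen W.adj p e.1
    · exact Or.inl ⟨mem_filter.2 ⟨h1, hre⟩, mem_filter.2 ⟨h2, hre.tail (Or.inl he)⟩⟩
    · refine Or.inr ⟨mem_filter.2 ⟨h1, hre⟩, mem_filter.2 ⟨h2, fun hre2 => ?_⟩⟩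
      exact hre (hre2.tail (Or.inr he))

/-! ### relation (iii) -/

lemma eta_rel3 (T : OTree) (p q r : ℕ) (hT : IsOTree T) (hpq : (p, q) ∈ T.E)
    (hpr : (p, r) ∈ T.E) (hqr : q ≠ r) :
    eta T = eta (slideE T p q r) + eta (slideE T p r q) + eta (identE T p q r) := by
  obtain ⟨hVne, hEprop, hconn, hcard⟩ := hT
  set N := T.V.card with hN
  have hident : (identE T p q r).V.card ≤ N := card_le_card (erase_subset _ _)
  rw [eta_eq_sum T (le_refl N), eta_eq_sum (slideE T p q r) (le_refl N),
    eta_eq_sum (slideE T p r q) (le_refl N), eta_eq_sum (identE T p q r) hident,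
    ← Finset.sum_add_distrib, ← Finset.sum_add_distrib]
  apply Finset.sum_congr rfl
  intro n _
  rw [c_rel3 T p q r hEprop hpq hpr hqr n]
  push_cast
  ring

end Eta
end


/-- There is a `ℚ`-valued function `η` on (isomorphism
classes of) finite oriented trees such that:
(i) `η = 1` on the tree with one vertex and no edges;
(ii) if `T'` (resp. `U`) is obtained from `T` by reversing (resp. contracting)
an edge `e`, then `η(T) + η(T') + η(U) = 0`;
(iii) if `T'` (resp. `T''`) is obtained from `T` by replacing two distinct
edges `ab`, `ac` with common origin by `ab, bc` (resp. `ac, cb`), and `U` is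
obtained from `T` by identifying `b` with `c` and `ab` with `ac`, then
`η(T) = η(T') + η(T'') + η(U)`. -/
theorem exists_eta_trees : ∃ η : OTree → ℚ,
    (∀ T T' : OTree, IsOTree T → IsOTree T' → OIso T T' → η T = η T') ∧
    (∀ T : OTree, IsOTree T → T.V.card = 1 → T.E = ∅ → η T = 1) ∧
    (∀ (T : OTree) (a b : ℕ), IsOTree T → (a, b) ∈ T.E →
      η T + η (revE T a b) + η (contrE T a b) = 0) ∧
    (∀ (T : OTree) (a b c : ℕ), IsOTree T → (a, b) ∈ T.E → (a, c) ∈ T.E →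
      b ≠ c → η T = η (slideE T a b c) + η (slideE T a c b) + η (identE T a b c)) := by
  refine ⟨Eta.eta, ?_, ?_, ?_, ?_⟩
  · exact fun T T' hT hT' h => Eta.eta_iso T T' hT hT' h
  · exact fun T _ h1 h2 => Eta.eta_single T h1 h2
  · exact fun T a b hT hab => Eta.eta_rel2 T a b hT hab
  · exact fun T a b c hT hab hac hbc => Eta.eta_rel3 T a b c hT hab hac hbc
end

section
/- For all integers k₁ ≥ 1 and k₂ ≥ 1, ∑_{n≥1} ((−1)^{n+1}/n)·c_n(k₁,k₂) = 0, where c_n(k₁,k₂) denotes the number of pairs (S₁,S₂) of subsets of {1,…,n} with S₁∪S₂={1,…,n}, #S₁=k₁ and #S₂=k₂ (the sum is finite since c_n(k₁,k₂)=0 whenever n>k₁+k₂). -/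
/-- `c_n(k₁, k₂)`: the number of pairs `(S₁, S₂)` of subsets of `{1, …, n}`
with `S₁ ∪ S₂ = {1, …, n}`, `#S₁ = k₁` and `#S₂ = k₂`. -/
def cPairs (n k₁ k₂ : ℕ) : ℕ :=
  (Finset.univ.filter fun p : Finset (Fin n) × Finset (Fin n) =>
    p.1 ∪ p.2 = Finset.univ ∧ p.1.card = k₁ ∧ p.2.card = k₂).card

open Finset PowerSeries

/-- Counting formula for `cPairs`. -/
lemma cPairs_eq (n k₁ k₂ : ℕ) (h : n ≤ k₁ + k₂) :
    cPairs n k₁ k₂ = n.choose k₁ * k₁.choose (k₁ + k₂ - n) := by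
  classical
  set j := k₁ + k₂ - n with hj
  have hcard : ∀ S : Finset (Fin n), S.card ≤ n := fun S => by
    simpa using Finset.card_le_card (Finset.subset_univ S)
  have key : cPairs n k₁ k₂ =
      ((Finset.univ.powersetCard k₁ : Finset (Finset (Fin n))).sigma
        (fun S => S.powersetCard j)).card := by
    apply Finset.card_bij' (fun p _ => (⟨p.1, p.1 ∩ p.2⟩ : Σ _ : Finset (Fin n), Finset (Fin n)))
      (fun q _ => (q.1, q.1ᶜ ∪ q.2))
    · intro p hp
      simp only [Finset.mem_filter] at hp
      obtain ⟨-, hU, h1, h2⟩ := hp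
      have hsum : (p.1 ∪ p.2).card + (p.1 ∩ p.2).card = p.1.card + p.2.card :=
        Finset.card_union_add_card_inter _ _
      rw [hU, h1, h2] at hsum
      simp only [Finset.card_univ, Fintype.card_fin] at hsum
      simp only [Finset.mem_sigma, Finset.mem_powersetCard]
      exact ⟨⟨Finset.subset_univ _, h1⟩, Finset.inter_subset_left, by omega⟩
    · intro q hq
      simp only [Finset.mem_sigma, Finset.mem_powersetCard] at hq
      obtain ⟨⟨-, h1⟩, hsub, h2⟩ := hq
      have hk₁n : k₁ ≤ n := h1 ▸ hcard q.1
      simp only [Finset.mem_filter, Finset.mem_univ, true_and]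
      refine ⟨?_, h1, ?_⟩
      · rw [← Finset.union_assoc, Finset.union_compl]
        simp
      · have hdisj : Disjoint q.1ᶜ q.2 :=
          (disjoint_compl_left : Disjoint q.1ᶜ q.1).mono_right hsub
        rw [Finset.card_union_of_disjoint hdisj, Finset.card_compl, h1, h2,
          Fintype.card_fin]
        omega
    · intro p hp
      simp only [Finset.mem_filter] at hp
      obtain ⟨-, hU, -, -⟩ := hp
      have hmem : ∀ x : Fin n, x ∈ p.1 ∨ x ∈ p.2 := fun x => by
        have : x ∈ p.1 ∪ p.2 := hU ▸ Finset.mem_univ x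
        simpa [Finset.mem_union] using this
      refine Prod.ext rfl ?_
      ext x
      simp only [Finset.mem_union, Finset.mem_compl, Finset.mem_inter]
      have := hmem x
      tauto
    · intro q hq
      simp only [Finset.mem_sigma, Finset.mem_powersetCard] at hq
      obtain ⟨-, hsub, -⟩ := hq
      have : q.1 ∩ (q.1ᶜ ∪ q.2) = q.2 := by
        ext x
        simp only [Finset.mem_inter, Finset.mem_union, Finset.mem_compl]
        have := @hsub x
        tauto
      exact Sigma.ext rfl (by simp [this])
  rw [key, Finset.card_sigma]
  have : ∀ S ∈ (Finset.univ.powersetCard k₁ : Finset (Finset (Fin n))),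
      (S.powersetCard j).card = k₁.choose j := by
    intro S hS
    rw [Finset.card_powersetCard]
    congr 1
    exact (Finset.mem_powersetCard.1 hS).2
  rw [Finset.sum_congr rfl this, Finset.sum_const, Finset.card_powersetCard,
    Finset.card_univ, Fintype.card_fin, smul_eq_mul]

/-- Coefficient of `(1 - X)^a` as a power series over `ℚ`. -/
lemma coeff_one_sub_pow (a j : ℕ) :
    PowerSeries.coeff (R := ℚ) j ((1 - PowerSeries.X) ^ a) = (-1) ^ j * a.choose j := by
  induction a generalizing j with
  | zero =>
    cases j with
    | zero => simp
    | succ j => simp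
  | succ a ih =>
    rw [pow_succ, mul_sub, mul_one, map_sub]
    cases j with
    | zero =>
      rw [PowerSeries.coeff_zero_mul_X, ih]
      simp
    | succ j =>
      rw [PowerSeries.coeff_succ_mul_X, ih, ih, Nat.choose_succ_succ]
      push_cast
      ring

/-- The key alternating-sum identity:
`∑_{j} (-1)^j C(a,j) C(a+b-1-j, a-1) = 0` for `a, b ≥ 1`. -/
lemma key_identity (a b : ℕ) (ha : 1 ≤ a) (hb : 1 ≤ b) :
    ∑ i ∈ Finset.range (a + b),
      (-1 : ℚ) ^ i * a.choose i * (a + b - 1 - i).choose (a - 1) = 0 := by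
  have hmain : (PowerSeries.coeff b)
      ((PowerSeries.mk fun n => ((a - 1 + n).choose (a - 1) : ℚ)) * (1 - PowerSeries.X) ^ a) = 0 := by
    have := PowerSeries.mk_add_choose_mul_one_sub_pow_eq_one ℚ (a - 1)
    rw [Nat.sub_add_cancel ha] at this
    rw [this, PowerSeries.coeff_one, if_neg (by omega)]
  rw [PowerSeries.coeff_mul, Finset.Nat.sum_antidiagonal_eq_sum_range_succ_mk] at hmain
  simp only [PowerSeries.coeff_mk, coeff_one_sub_pow] at hmain
  -- hmain : ∑ i in range (b+1), C(a-1+i, a-1) * ((-1)^(b-i) * C(a, b-i)) = 0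
  have hrefl := Finset.sum_range_reflect
    (fun i => ((a - 1 + i).choose (a - 1) : ℚ) * ((-1) ^ (b - i) * (a.choose (b - i) : ℚ))) (b + 1)
  rw [hmain] at hrefl
  -- hrefl : ∑ i in range (b+1), C(a-1+(b-i), a-1) * ((-1)^(b-(b-i)) * C(a, b-(b-i))) = 0
  have hstep : ∑ i ∈ Finset.range (b + 1),
      (-1 : ℚ) ^ i * a.choose i * (a + b - 1 - i).choose (a - 1) = 0 := by
    rw [← hrefl]
    apply Finset.sum_congr rfl
    intro i hi
    rw [Finset.mem_range] at hi
    have hib : i ≤ b := by omega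
    have h1 : b + 1 - 1 - i = b - i := by omega
    have h2 : b - (b - i) = i := by omega
    have h3 : a - 1 + (b - i) = a + b - 1 - i := by omega
    rw [h1, h2, h3]
    ring
  rw [← hstep]
  symm
  apply Finset.sum_subset
  · intro i hi
    rw [Finset.mem_range] at hi ⊢
    omega
  · intro i hi1 hi2
    rw [Finset.mem_range] at hi1 hi2
    have : a + b - 1 - i < a - 1 := by omega
    rw [Nat.choose_eq_zero_of_lt this]
    simp

/-- For all `k₁, k₂ ≥ 1`,
`∑_{n ≥ 1} ((-1)^{n+1}/n) · c_n(k₁, k₂) = 0` (the sum is finite since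
`c_n(k₁,k₂) = 0` for `n > k₁ + k₂`). -/
theorem jaeger_sum_eq_zero (k₁ k₂ : ℕ) (h₁ : 1 ≤ k₁) (h₂ : 1 ≤ k₂) :
    ∑ n ∈ Finset.Icc 1 (k₁ + k₂),
      ((-1 : ℚ) ^ (n + 1) / n) * (cPairs n k₁ k₂ : ℚ) = 0 := by
  set N := k₁ + k₂ with hN
  -- Step 1: rewrite each term
  have hterm : ∀ n ∈ Finset.Icc 1 N,
      ((-1 : ℚ) ^ (n + 1) / n) * (cPairs n k₁ k₂ : ℚ) =
      (1 / k₁) * ((-1 : ℚ) ^ (n + 1) * (n - 1).choose (k₁ - 1) * k₁.choose (N - n)) := by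
    intro n hn
    rw [Finset.mem_Icc] at hn
    obtain ⟨hn1, hn2⟩ := hn
    rw [cPairs_eq n k₁ k₂ hn2]
    have hkey : (n : ℚ) * ((n - 1).choose (k₁ - 1) : ℚ) = (n.choose k₁ : ℚ) * k₁ := by
      have := Nat.add_one_mul_choose_eq (n - 1) (k₁ - 1)
      rw [Nat.sub_add_cancel hn1,
        Nat.sub_add_cancel h₁] at this
      exact_mod_cast congrArg (Nat.cast : ℕ → ℚ) this
    have hn0 : (n : ℚ) ≠ 0 := by positivity
    have hk0 : (k₁ : ℚ) ≠ 0 := by positivity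
    have hNn : k₁ + k₂ - n = N - n := rfl
    rw [hNn]
    push_cast
    field_simp
    linear_combination (-(k₁.choose (N - n) : ℚ)) * hkey
  rw [Finset.sum_congr rfl hterm, ← Finset.mul_sum]
  -- Step 2: the inner sum is zero
  have hIcc : Finset.Icc 1 N = Finset.Ico 1 (N + 1) := rfl
  rw [hIcc, Finset.sum_Ico_eq_sum_range]
  simp only [Nat.add_sub_cancel]
  have hrefl := Finset.sum_range_reflect
    (fun i => (-1 : ℚ) ^ (1 + i + 1) * (1 + i - 1).choose (k₁ - 1) * k₁.choose (N - (1 + i))) N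
  rw [← hrefl]
  have hNpos : 1 ≤ N := by omega
  have hstep : ∀ i ∈ Finset.range N,
      (-1 : ℚ) ^ (1 + (N - 1 - i) + 1) * ((1 + (N - 1 - i) - 1).choose (k₁ - 1) : ℚ) *
        (k₁.choose (N - (1 + (N - 1 - i))) : ℚ) =
      ((-1 : ℚ) ^ (N + 1)) *
        ((-1 : ℚ) ^ i * (k₁.choose i : ℚ) * ((N - 1 - i).choose (k₁ - 1) : ℚ)) := by
    intro i hi
    rw [Finset.mem_range] at hi
    have e1 : 1 + (N - 1 - i) + 1 = N - i + 1 := by omega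
    have e2 : 1 + (N - 1 - i) - 1 = N - 1 - i := by omega
    have e3 : N - (1 + (N - 1 - i)) = i := by omega
    rw [e1, e2, e3]
    have hsign : (-1 : ℚ) ^ (N - i + 1) = (-1 : ℚ) ^ (N + 1) * (-1 : ℚ) ^ i := by
      have h2i : (-1 : ℚ) ^ (2 * i) = 1 := by rw [pow_mul]; norm_num
      calc (-1 : ℚ) ^ (N - i + 1) = (-1 : ℚ) ^ (N - i + 1) * (-1 : ℚ) ^ (2 * i) := by
            rw [h2i, mul_one]
        _ = (-1 : ℚ) ^ (N + 1 + i) := by rw [← pow_add]; congr 1; omega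
        _ = (-1 : ℚ) ^ (N + 1) * (-1 : ℚ) ^ i := by rw [pow_add]
    rw [hsign]
    ring
  rw [Finset.sum_congr rfl hstep, ← Finset.mul_sum]
  have := key_identity k₁ k₂ h₁ h₂
  rw [hN, this]
  ring
end
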